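/- arXiv:1405.1235 — 6 statements merged into one kernel-verified Lean document; each statement's English description precedes it below -/
import Mathlib

section
/- Let x_0,…,x_{n-1}, y_0,…,y_{n-1} be n×n complex matrices and α_0,…,α_{n-1} positive real numbers. Then ∑_{0≤i<j≤n-1} |√(α_i/α_j) x_i − √(α_j/α_i) x_j|² + ∑_{0≤i<j≤n-1} |√(α_i/α_j) y_i − √(α_j/α_i) y_j|² = ∑_{i,j=0}^{n-1} |√(α_i/α_j) x_i − √(α_j/α_i) y_j|² − |∑_{i=0}^{n-1} (x_i − y_i)|². -/
open Matrix
open scoped NNReal ComplexOrder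

lemma hermSmul {n : ℕ} (r : ℝ) {A : Matrix (Fin n) (Fin n) ℂ} (h : A.IsHermitian) :
    (r • A).IsHermitian := by
  unfold Matrix.IsHermitian at *
  rw [Matrix.conjTranspose_smul, h, star_trivial]

lemma hermSum {n m : ℕ} (A : Fin m → Matrix (Fin n) (Fin n) ℂ)
    (h : ∀ j, (A j).IsHermitian) : (∑ j, A j).IsHermitian := by
  unfold Matrix.IsHermitian at *
  rw [Matrix.conjTranspose_sum]
  exact Finset.sum_congr rfl fun j _ => h j

/-- `traceRpow p a ha = trace (a ^ p)` for a Hermitian matrix `a`, computed by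
functional calculus: the sum of the `p`-th powers of the eigenvalues of `a`. -/
noncomputable def traceRpow {n : ℕ} (p : ℝ) (a : Matrix (Fin n) (Fin n) ℂ)
    (ha : a.IsHermitian) : ℝ := ∑ i, (ha.eigenvalues i) ^ p

/-- `schatten p x = trace ((xᴴ * x) ^ (p / 2)) = trace (|x| ^ p) = ‖x‖_p ^ p`,
the `p`-th power of the Schatten `p`-(quasi-)norm. -/
noncomputable def schatten {m : ℕ} (p : ℝ) (x : Matrix (Fin m) (Fin m) ℂ) : ℝ :=
  traceRpow (p / 2) (xᴴ * x) (Matrix.isHermitian_conjTranspose_mul_self x)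

/-- `traceF f a ha = trace (f a)` for a Hermitian matrix `a`, where `f : ℝ≥0 → ℝ≥0` is
applied to the eigenvalues of `a` via functional calculus. -/
noncomputable def traceF {n : ℕ} (f : ℝ≥0 → ℝ≥0) (a : Matrix (Fin n) (Fin n) ℂ)
    (ha : a.IsHermitian) : ℝ := ∑ i, (f (ha.eigenvalues i).toNNReal : ℝ)

section Aux

lemma gp_expandSq {m : ℕ} (a b : Matrix (Fin m) (Fin m) ℂ) (c d : ℂ)
    (hc : star c = c) (hd : star d = d) :
    (c • a - d • b)ᴴ * (c • a - d • b)
      = (c*c) • (aᴴ*a) + (d*d) • (bᴴ*b) - (c*d) • (aᴴ*b) - (c*d) • (bᴴ*a) := by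
  simp only [conjTranspose_sub, conjTranspose_smul, hc, hd, sub_mul, mul_sub,
    smul_mul_assoc, mul_smul_comm, smul_smul, smul_sub]
  rw [mul_comm d c]
  abel

lemma gp_half {M : Type*} [AddCommMonoid M] (n : ℕ) (f : Fin n → Fin n → M)
    (hsymm : ∀ i j, f i j = f j i) (hdiag : ∀ i, f i i = 0) :
    (∑ i, ∑ j ∈ Finset.Ioi i, f i j) + (∑ i, ∑ j ∈ Finset.Ioi i, f i j)
      = ∑ i, ∑ j, f i j := by
  have h := Finset.sum_sum_Ioi_add_eq_sum_sum_off_diag f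
  calc (∑ i, ∑ j ∈ Finset.Ioi i, f i j) + (∑ i, ∑ j ∈ Finset.Ioi i, f i j)
      = ∑ i, ∑ j ∈ Finset.Ioi i, (f j i + f i j) := by
        rw [← Finset.sum_add_distrib]
        refine Finset.sum_congr rfl fun i _ => ?_
        rw [← Finset.sum_add_distrib]
        exact Finset.sum_congr rfl fun j _ => by rw [hsymm i j]
    _ = ∑ i, ∑ j ∈ ({i}ᶜ : Finset (Fin n)), f j i := by
        refine h.trans (Finset.sum_congr rfl fun i _ => Finset.sum_congr ?_ fun _ _ => rfl)
        congr!
    _ = ∑ i, ∑ j, f j i := by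
        refine Finset.sum_congr rfl fun i _ => ?_
        rw [← Finset.sum_compl_add_sum {i} (fun j => f j i)]
        simp [hdiag]
    _ = ∑ i, ∑ j, f i j := Finset.sum_comm

end Aux

/-- The generalized parallelogram identity (4.1) for matrices, `|x|² = xᴴ x`. -/
theorem general_parallelogram_identity (n : ℕ)
    (x y : Fin n → Matrix (Fin n) (Fin n) ℂ) (α : Fin n → ℝ) (hα : ∀ j, 0 < α j) :
    (∑ i : Fin n, ∑ j ∈ Finset.Ioi i,
        ((Real.sqrt (α i / α j) : ℂ) • x i - (Real.sqrt (α j / α i) : ℂ) • x j)ᴴ *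
          ((Real.sqrt (α i / α j) : ℂ) • x i - (Real.sqrt (α j / α i) : ℂ) • x j))
      + (∑ i : Fin n, ∑ j ∈ Finset.Ioi i,
        ((Real.sqrt (α i / α j) : ℂ) • y i - (Real.sqrt (α j / α i) : ℂ) • y j)ᴴ *
          ((Real.sqrt (α i / α j) : ℂ) • y i - (Real.sqrt (α j / α i) : ℂ) • y j))
      = (∑ i : Fin n, ∑ j : Fin n,
        ((Real.sqrt (α i / α j) : ℂ) • x i - (Real.sqrt (α j / α i) : ℂ) • y j)ᴴ *
          ((Real.sqrt (α i / α j) : ℂ) • x i - (Real.sqrt (α j / α i) : ℂ) • y j))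
        - (∑ i, (x i - y i))ᴴ * (∑ i, (x i - y i)) := by
  -- scalar abbreviations and facts
  set s : Fin n → Fin n → ℂ := fun i j => ((Real.sqrt (α i / α j) : ℝ) : ℂ) with hs_def
  set p : Fin n → Fin n → ℂ := fun i j => ((α i / α j : ℝ) : ℂ) with hp_def
  have hstar : ∀ i j, star (s i j) = s i j := fun i j => by
    simp [hs_def, Complex.conj_ofReal]
  have hss : ∀ i j, s i j * s i j = p i j := fun i j => by
    simp only [hs_def, hp_def, ← Complex.ofReal_mul]
    rw [Real.mul_self_sqrt (le_of_lt (div_pos (hα i) (hα j)))]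
  have h1 : ∀ i j, s i j * s j i = 1 := fun i j => by
    simp only [hs_def, ← Complex.ofReal_mul, ← Real.sqrt_mul (le_of_lt (div_pos (hα i) (hα j)))]
    rw [div_mul_div_comm, mul_comm (α i) (α j), div_self (mul_pos (hα j) (hα i)).ne', Real.sqrt_one]
    norm_num
  have hpii : ∀ i, p i i = 1 := fun i => by
    simp only [hp_def, div_self (hα i).ne', Complex.ofReal_one]
  -- expansion of the three kinds of squares
  have hA : ∀ (z w : Fin n → Matrix (Fin n) (Fin n) ℂ) (i j : Fin n),
      (s i j • z i - s j i • w j)ᴴ * (s i j • z i - s j i • w j)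
        = p i j • ((z i)ᴴ * z i) + p j i • ((w j)ᴴ * w j)
          - (z i)ᴴ * (w j) - (w j)ᴴ * (z i) := by
    intro z w i j
    rw [gp_expandSq (z i) (w j) (s i j) (s j i) (hstar i j) (hstar j i),
      hss i j, hss j i, h1 i j, one_smul, one_smul]
  -- named double sums
  let Px := ∑ i : Fin n, ∑ j : Fin n, p i j • ((x i)ᴴ * x i)
  let Py := ∑ i : Fin n, ∑ j : Fin n, p i j • ((y i)ᴴ * y i)
  let Qxx := ∑ i : Fin n, ∑ j : Fin n, (x i)ᴴ * (x j)
  let Qyy := ∑ i : Fin n, ∑ j : Fin n, (y i)ᴴ * (y j)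
  let Qxy := ∑ i : Fin n, ∑ j : Fin n, (x i)ᴴ * (y j)
  let Qyx := ∑ i : Fin n, ∑ j : Fin n, (y i)ᴴ * (x j)
  -- full double sums of the expanded expressions, for z = x and z = y
  have hfull : ∀ z : Fin n → Matrix (Fin n) (Fin n) ℂ,
      (∑ i : Fin n, ∑ j : Fin n,
        (p i j • ((z i)ᴴ * z i) + p j i • ((z j)ᴴ * z j) - (z i)ᴴ * (z j) - (z j)ᴴ * (z i)))
      = (∑ i : Fin n, ∑ j : Fin n, p i j • ((z i)ᴴ * z i))
        + (∑ i : Fin n, ∑ j : Fin n, p i j • ((z i)ᴴ * z i))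
        - (∑ i : Fin n, ∑ j : Fin n, (z i)ᴴ * (z j))
        - (∑ i : Fin n, ∑ j : Fin n, (z i)ᴴ * (z j)) := by
    intro z
    simp only [Finset.sum_sub_distrib, Finset.sum_add_distrib]
    have hB : (∑ i : Fin n, ∑ j : Fin n, p j i • ((z j)ᴴ * z j))
        = ∑ i : Fin n, ∑ j : Fin n, p i j • ((z i)ᴴ * z i) := Finset.sum_comm
    have hD : (∑ i : Fin n, ∑ j : Fin n, (z j)ᴴ * (z i))
        = ∑ i : Fin n, ∑ j : Fin n, (z i)ᴴ * (z j) := Finset.sum_comm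
    rw [hB, hD]
  have hCfull :
      (∑ i : Fin n, ∑ j : Fin n,
        (p i j • ((x i)ᴴ * x i) + p j i • ((y j)ᴴ * y j) - (x i)ᴴ * (y j) - (y j)ᴴ * (x i)))
      = Px + Py - Qxy - Qyx := by
    simp only [Finset.sum_sub_distrib, Finset.sum_add_distrib]
    have hB : (∑ i : Fin n, ∑ j : Fin n, p j i • ((y j)ᴴ * y j)) = Py := Finset.sum_comm
    have hD : (∑ i : Fin n, ∑ j : Fin n, (y j)ᴴ * (x i)) = Qyx := Finset.sum_comm
    rw [hB, hD]
  have hDfull : (∑ i, (x i - y i))ᴴ * (∑ i, (x i - y i)) = Qxx - Qxy - Qyx + Qyy := by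
    rw [conjTranspose_sum, Finset.sum_mul_sum]
    simp only [conjTranspose_sub, sub_mul, mul_sub, Finset.sum_sub_distrib,
      Finset.sum_add_distrib]
    abel
  -- rewrite all squares via the expansion
  simp only [hs_def] at hA
  simp only [hA]
  -- symmetry and zero diagonal of the expanded summand
  have hsymmF : ∀ (z : Fin n → Matrix (Fin n) (Fin n) ℂ) (i j : Fin n),
      p i j • ((z i)ᴴ * z i) + p j i • ((z j)ᴴ * z j) - (z i)ᴴ * (z j) - (z j)ᴴ * (z i)
        = p j i • ((z j)ᴴ * z j) + p i j • ((z i)ᴴ * z i) - (z j)ᴴ * (z i) - (z i)ᴴ * (z j) := by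
    intro z i j; abel
  have hdiagF : ∀ (z : Fin n → Matrix (Fin n) (Fin n) ℂ) (i : Fin n),
      p i i • ((z i)ᴴ * z i) + p i i • ((z i)ᴴ * z i) - (z i)ᴴ * (z i) - (z i)ᴴ * (z i)
        = 0 := by
    intro z i; rw [hpii, one_smul]; abel
  have hx2 := gp_half n
    (fun i j => p i j • ((x i)ᴴ * x i) + p j i • ((x j)ᴴ * x j) - (x i)ᴴ * (x j) - (x j)ᴴ * (x i))
    (hsymmF x) (hdiagF x)
  have hy2 := gp_half n
    (fun i j => p i j • ((y i)ᴴ * y i) + p j i • ((y j)ᴴ * y j) - (y i)ᴴ * (y j) - (y j)ᴴ * (y i))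
    (hsymmF y) (hdiagF y)
  apply smul_right_injective (Matrix (Fin n) (Fin n) ℂ) (two_ne_zero (α := ℂ))
  show (2 : ℂ) • _ = (2 : ℂ) • _
  rw [two_smul, two_smul]
  calc _ = ((∑ i : Fin n, ∑ j ∈ Finset.Ioi i,
          (p i j • ((x i)ᴴ * x i) + p j i • ((x j)ᴴ * x j) - (x i)ᴴ * (x j) - (x j)ᴴ * (x i)))
        + ∑ i : Fin n, ∑ j ∈ Finset.Ioi i,
          (p i j • ((x i)ᴴ * x i) + p j i • ((x j)ᴴ * x j) - (x i)ᴴ * (x j) - (x j)ᴴ * (x i)))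
        + ((∑ i : Fin n, ∑ j ∈ Finset.Ioi i,
          (p i j • ((y i)ᴴ * y i) + p j i • ((y j)ᴴ * y j) - (y i)ᴴ * (y j) - (y j)ᴴ * (y i)))
        + ∑ i : Fin n, ∑ j ∈ Finset.Ioi i,
          (p i j • ((y i)ᴴ * y i) + p j i • ((y j)ᴴ * y j) - (y i)ᴴ * (y j) - (y j)ᴴ * (y i))) := by
        abel
    _ = (Px + Px - Qxx - Qxx) + (Py + Py - Qyy - Qyy) := by
        rw [hx2, hy2, hfull x, hfull y]
    _ = ((Px + Py - Qxy - Qyx) - (Qxx - Qxy - Qyx + Qyy))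
        + ((Px + Py - Qxy - Qyx) - (Qxx - Qxy - Qyx + Qyy)) := by abel
    _ = _ := by rw [← hCfull, ← hDfull]
end

section
/- Let x and y be positive semidefinite n×n complex matrices, let f : ℝ≥0 → ℝ≥0 be a continuous increasing convex function with f(0) = 0, and let α ∈ (0,1). Then trace(f(α x + (1−α) y)) ≤ α trace(f(x)) + (1−α) trace(f(y)), where f is applied via the functional calculus (applying f to each eigenvalue). -/
open Matrix
open scoped NNReal ComplexOrder


lemma convexF (f : ℝ≥0 → ℝ≥0) (hconv : ConvexOn ℝ≥0 Set.univ f) :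
    ConvexOn ℝ (Set.Ici (0:ℝ)) (fun t : ℝ => (f t.toNNReal : ℝ)) := by
  refine ⟨convex_Ici 0, ?_⟩
  intro s hs t ht a b ha hb hab
  simp only [smul_eq_mul]
  have key := hconv.2 (Set.mem_univ s.toNNReal) (Set.mem_univ t.toNNReal)
    (zero_le : (0:ℝ≥0) ≤ a.toNNReal) (zero_le : (0:ℝ≥0) ≤ b.toNNReal)
    (by rw [← Real.toNNReal_add ha hb, hab, Real.toNNReal_one])
  have h1 : (a * s + b * t).toNNReal = a.toNNReal • s.toNNReal + b.toNNReal • t.toNNReal := by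
    rw [Real.toNNReal_add (mul_nonneg ha hs) (mul_nonneg hb ht),
      Real.toNNReal_mul ha, Real.toNNReal_mul hb]
    rfl
  rw [h1]
  calc ((f (a.toNNReal • s.toNNReal + b.toNNReal • t.toNNReal)) : ℝ)
      ≤ ((a.toNNReal • f s.toNNReal + b.toNNReal • f t.toNNReal : ℝ≥0) : ℝ) := by
        exact_mod_cast key
    _ = a * (f s.toNNReal : ℝ) + b * (f t.toNNReal : ℝ) := by
        push_cast [smul_eq_mul]
        rw [Real.coe_toNNReal a ha, Real.coe_toNNReal b hb]

lemma peierls {n : ℕ} (f : ℝ≥0 → ℝ≥0) (hconv : ConvexOn ℝ≥0 Set.univ f)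
    {x : Matrix (Fin n) (Fin n) ℂ} (hx : x.PosSemidef)
    {U : Matrix (Fin n) (Fin n) ℂ} (hU : U ∈ Matrix.unitaryGroup (Fin n) ℂ) :
    ∑ i, (f ((star U * x * U) i i).re.toNNReal : ℝ)
      ≤ ∑ j, (f (hx.1.eigenvalues j).toNNReal : ℝ) := by
  set V : Matrix (Fin n) (Fin n) ℂ := (hx.1.eigenvectorUnitary : Matrix (Fin n) (Fin n) ℂ)
  set M : Matrix (Fin n) (Fin n) ℂ := star V * U with hMdef
  have hM : M ∈ Matrix.unitaryGroup (Fin n) ℂ :=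
    mul_mem (Unitary.star_mem hx.1.eigenvectorUnitary.2) hU
  have heq : star U * x * U = star M * diagonal (Complex.ofReal ∘ hx.1.eigenvalues) * M := by
    conv_lhs => rw [hx.1.spectral_theorem, Unitary.conjStarAlgAut_apply]
    simp only [hMdef, Matrix.star_mul, star_star, Matrix.mul_assoc]
    rfl
  have hentry : ∀ i, ((star U * x * U) i i).re
      = ∑ j, Complex.normSq (M j i) * hx.1.eigenvalues j := by
    intro i
    rw [heq, Matrix.mul_assoc, Matrix.mul_apply]
    rw [Complex.re_sum]
    refine Finset.sum_congr rfl fun j _ => ?_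
    rw [Matrix.diagonal_mul, Matrix.star_apply]
    simp only [Complex.star_def]
    simp only [Function.comp_apply]
    have h4 : (starRingEnd ℂ) (M j i) * ((hx.1.eigenvalues j : ℂ) * M j i)
        = ((Complex.normSq (M j i) * hx.1.eigenvalues j : ℝ) : ℂ) := by
      rw [Complex.ofReal_mul, Complex.normSq_eq_conj_mul_self]
      ring
    rw [h4, Complex.ofReal_re]
  have hcol : ∀ i, ∑ j, Complex.normSq (M j i) = 1 := by
    intro i
    have h := Matrix.mem_unitaryGroup_iff'.mp hM
    have h2 := congrFun (congrFun h i) i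
    rw [Matrix.mul_apply] at h2
    simp only [Matrix.star_apply, Matrix.one_apply_eq] at h2
    have h3 : ((∑ j, Complex.normSq (M j i) : ℝ) : ℂ) = 1 := by
      push_cast
      rw [← h2]
      exact Finset.sum_congr rfl fun j _ => by
        rw [Complex.star_def, ← Complex.normSq_eq_conj_mul_self]
    exact_mod_cast h3
  have hrow : ∀ j, ∑ i, Complex.normSq (M j i) = 1 := by
    intro j
    have h := Matrix.mem_unitaryGroup_iff.mp hM
    have h2 := congrFun (congrFun h j) j
    rw [Matrix.mul_apply] at h2
    simp only [Matrix.star_apply, Matrix.one_apply_eq] at h2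
    have h3 : ((∑ i, Complex.normSq (M j i) : ℝ) : ℂ) = 1 := by
      push_cast
      rw [← h2]
      exact Finset.sum_congr rfl fun i _ => by
        rw [Complex.star_def, ← Complex.mul_conj]
    exact_mod_cast h3
  calc ∑ i, (f ((star U * x * U) i i).re.toNNReal : ℝ)
      = ∑ i, (f (∑ j, Complex.normSq (M j i) • hx.1.eigenvalues j).toNNReal : ℝ) := by
        refine Finset.sum_congr rfl fun i _ => ?_
        rw [hentry i]; rfl
    _ ≤ ∑ i, ∑ j, Complex.normSq (M j i) • (f (hx.1.eigenvalues j).toNNReal : ℝ) := by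
        refine Finset.sum_le_sum fun i _ => ?_
        exact (convexF f hconv).map_sum_le (fun j _ => Complex.normSq_nonneg _)
          (hcol i) (fun j _ => hx.eigenvalues_nonneg j)
    _ = ∑ j, (∑ i, Complex.normSq (M j i)) * (f (hx.1.eigenvalues j).toNNReal : ℝ) := by
        rw [Finset.sum_comm]
        exact Finset.sum_congr rfl fun j _ => by rw [Finset.sum_mul]; rfl
    _ = ∑ j, (f (hx.1.eigenvalues j).toNNReal : ℝ) := by
        refine Finset.sum_congr rfl fun j _ => ?_
        rw [hrow j, one_mul]

lemma diagRe_nonneg {n : ℕ} {A : Matrix (Fin n) (Fin n) ℂ} (hA : A.PosSemidef) (i : Fin n) :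
    0 ≤ (A i i).re := by
  have := hA.dotProduct_mulVec_nonneg (Pi.single i 1)
  simp [dotProduct, Matrix.mulVec_single, Pi.single_apply] at this
  exact (Complex.le_def.mp this).1

/-- Trace convexity: for positive semidefinite `x, y`, a continuous increasing convex
`f : ℝ≥0 → ℝ≥0` with `f 0 = 0`, and `α ∈ (0,1)`,
`trace f(αx + (1-α)y) ≤ α trace f(x) + (1-α) trace f(y)`. -/
theorem trace_convexity {n : ℕ} (x y : Matrix (Fin n) (Fin n) ℂ)
    (hx : x.PosSemidef) (hy : y.PosSemidef) (f : ℝ≥0 → ℝ≥0)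
    (hcont : Continuous f) (hmono : Monotone f) (hconv : ConvexOn ℝ≥0 Set.univ f)
    (hf0 : f 0 = 0) (α : ℝ) (hα : α ∈ Set.Ioo (0 : ℝ) 1) :
    traceF f (α • x + (1 - α) • y) ((hermSmul α hx.1).add (hermSmul (1 - α) hy.1))
      ≤ α * traceF f x hx.1 + (1 - α) * traceF f y hy.1 := by
  set hC := (hermSmul α hx.1).add (hermSmul (1 - α) hy.1) with hCdef
  show (∑ i, (f (hC.eigenvalues i).toNNReal : ℝ))
      ≤ α * ∑ i, (f (hx.1.eigenvalues i).toNNReal : ℝ)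
        + (1 - α) * ∑ i, (f (hy.1.eigenvalues i).toNNReal : ℝ)
  obtain ⟨hα0, hα1⟩ := hα
  set U : Matrix (Fin n) (Fin n) ℂ := (hC.eigenvectorUnitary : Matrix (Fin n) (Fin n) ℂ) with hUdef
  have hU : U ∈ Matrix.unitaryGroup (Fin n) ℂ := hC.eigenvectorUnitary.2
  have hxU : (star U * x * U).PosSemidef := by
    rw [show star U = Uᴴ from rfl]
    exact hx.conjTranspose_mul_mul_same U
  have hyU : (star U * y * U).PosSemidef := by
    rw [show star U = Uᴴ from rfl]
    exact hy.conjTranspose_mul_mul_same U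
  have hsplit : ∀ i, hC.eigenvalues i
      = α * ((star U * x * U) i i).re + (1 - α) * ((star U * y * U) i i).re := by
    intro i
    have hdiag : star U * (α • x + (1 - α) • y) * U = diagonal (Complex.ofReal ∘ hC.eigenvalues) := by
      have := hC.conjStarAlgAut_star_eigenvectorUnitary
      rwa [Unitary.conjStarAlgAut_star_apply] at this
    have h2 : star U * (α • x + (1 - α) • y) * U
        = α • (star U * x * U) + (1 - α) • (star U * y * U) := by
      rw [Matrix.mul_add, Matrix.add_mul]
      rw [Matrix.mul_smul, Matrix.smul_mul, Matrix.mul_smul, Matrix.smul_mul]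
    rw [h2] at hdiag
    have h3 := congrFun (congrFun hdiag i) i
    simp only [Matrix.add_apply, Matrix.smul_apply, Matrix.diagonal_apply_eq,
      Function.comp_apply] at h3
    have h4 : ((hC.eigenvalues i : ℝ) : ℂ)
        = α • (star U * x * U) i i + (1 - α) • (star U * y * U) i i := h3.symm
    have h5 := congrArg Complex.re h4
    simp only [Complex.add_re, Complex.real_smul, Complex.re_ofReal_mul,
      Complex.ofReal_re] at h5
    exact h5
  have key : ∀ i, (f (hC.eigenvalues i).toNNReal : ℝ)
      ≤ α * (f ((star U * x * U) i i).re.toNNReal : ℝ)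
        + (1 - α) * (f ((star U * y * U) i i).re.toNNReal : ℝ) := by
    intro i
    have := (convexF f hconv).2 (Set.mem_Ici.mpr (diagRe_nonneg hxU i))
      (Set.mem_Ici.mpr (diagRe_nonneg hyU i)) hα0.le
      (show (0:ℝ) ≤ 1 - α by linarith) (show α + (1 - α) = 1 by ring)
    simp only [smul_eq_mul] at this
    rw [hsplit i]
    exact this
  calc (∑ i, (f (hC.eigenvalues i).toNNReal : ℝ))
      ≤ ∑ i, (α * (f ((star U * x * U) i i).re.toNNReal : ℝ)
          + (1 - α) * (f ((star U * y * U) i i).re.toNNReal : ℝ)) :=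
        Finset.sum_le_sum fun i _ => key i
    _ = α * (∑ i, (f ((star U * x * U) i i).re.toNNReal : ℝ))
          + (1 - α) * (∑ i, (f ((star U * y * U) i i).re.toNNReal : ℝ)) := by
        rw [Finset.sum_add_distrib, Finset.mul_sum, Finset.mul_sum]
    _ ≤ α * ∑ i, (f (hx.1.eigenvalues i).toNNReal : ℝ)
          + (1 - α) * ∑ i, (f (hy.1.eigenvalues i).toNNReal : ℝ) := by
        have hp1 := peierls f hconv hx hU
        have hp2 := peierls f hconv hy hU
        have h1' := mul_le_mul_of_nonneg_left hp1 hα0.le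
        have h2' := mul_le_mul_of_nonneg_left hp2 (by linarith : (0:ℝ) ≤ 1 - α)
        exact add_le_add h1' h2'
end

section
/- Let x and y be positive semidefinite n×n complex matrices and let f : ℝ≥0 → ℝ≥0 be a continuous increasing convex function with f(0) = 0. Then trace(f(x)) + trace(f(y)) ≤ trace(f(x + y)), where f is applied via the functional calculus. -/
open Matrix
open scoped NNReal ComplexOrder

section RotfeldAux
open Polynomial
variable {m : Type*} [Fintype m] [DecidableEq m]

lemma my_charmatrix_mul (P M Q : Matrix m m ℂ) (hPQ : P * Q = 1) :
    charmatrix (P * M * Q) = P.map C * charmatrix M * Q.map C := by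
  unfold charmatrix
  rw [Matrix.mul_sub, Matrix.sub_mul]
  congr 1
  · rw [mul_assoc, (scalar_commute (X : ℂ[X]) (Commute.all X) (Q.map C)).eq, ← mul_assoc,
      ← Matrix.map_mul, hPQ]
    simp
  · simp only [RingHom.mapMatrix_apply, Matrix.map_mul]

lemma my_charpoly_conj (P M Q : Matrix m m ℂ) (hPQ : P * Q = 1) :
    (P * M * Q).charpoly = M.charpoly := by
  unfold Matrix.charpoly
  rw [my_charmatrix_mul P M Q hPQ, det_mul, det_mul]
  have h : (P.map C).det * (Q.map C).det = 1 := by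
    rw [← det_mul, ← Matrix.map_mul, hPQ]; simp
  rw [mul_comm (P.map C).det _, mul_assoc, h, mul_one]

lemma my_charpoly_zero : (0 : Matrix m m ℂ).charpoly = X ^ Fintype.card m := by
  have h : charmatrix (0 : Matrix m m ℂ) = diagonal (fun _ => (X : ℂ[X])) := by
    ext i j
    rcases eq_or_ne i j with rfl | hij
    · simp [charmatrix_apply_eq]
    · simp [charmatrix_apply_ne _ _ _ hij, diagonal_apply_ne _ hij]
  rw [Matrix.charpoly, h, det_diagonal, Finset.prod_const, Finset.card_univ]

lemma my_charpoly_diagonal (d : m → ℂ) :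
    (diagonal d).charpoly = ∏ i, (X - C (d i)) := by
  have h : charmatrix (diagonal d) = diagonal (fun i => (X : ℂ[X]) - C (d i)) := by
    ext i j
    rcases eq_or_ne i j with rfl | hij
    · simp [charmatrix_apply_eq]
    · simp [charmatrix_apply_ne _ _ _ hij, diagonal_apply_ne _ hij]
  rw [Matrix.charpoly, h, det_diagonal]

lemma my_charpoly_mul_comm (A B : Matrix m m ℂ) :
    (A * B).charpoly = (B * A).charpoly := by
  have key : (fromBlocks 1 A 0 1 : Matrix (m ⊕ m) (m ⊕ m) ℂ) * fromBlocks 0 0 B (B * A) *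
      fromBlocks 1 (-A) 0 1 = fromBlocks (A * B) 0 B 0 := by
    rw [fromBlocks_multiply, fromBlocks_multiply, fromBlocks_inj]
    refine ⟨?_, ?_, ?_, ?_⟩ <;> noncomm_ring
  have hPQ : (fromBlocks 1 A 0 1 : Matrix (m ⊕ m) (m ⊕ m) ℂ) * fromBlocks 1 (-A) 0 1 = 1 := by
    rw [fromBlocks_multiply, ← fromBlocks_one, fromBlocks_inj]
    refine ⟨?_, ?_, ?_, ?_⟩ <;> noncomm_ring
  have h1 := my_charpoly_conj _ (fromBlocks 0 0 B (B * A)) _ hPQ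
  rw [key, charpoly_fromBlocks_zero₁₂, charpoly_fromBlocks_zero₁₂, my_charpoly_zero] at h1
  have hX : (X : ℂ[X]) ^ Fintype.card m ≠ 0 := pow_ne_zero _ X_ne_zero
  exact mul_right_cancel₀ hX (by rw [h1]; ring)
noncomputable def eigMS (M : Matrix m m ℂ) (hM : M.IsHermitian) : Multiset ℝ :=
  Finset.univ.val.map hM.eigenvalues

lemma my_charpoly_eq (M : Matrix m m ℂ) (hM : M.IsHermitian) :
    M.charpoly = (Multiset.map (fun r : ℝ => (X : ℂ[X]) - C (r : ℂ)) (eigMS M hM)).prod := by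
  have hV : (hM.eigenvectorUnitary : Matrix m m ℂ) * (star hM.eigenvectorUnitary : Matrix m m ℂ)
      = 1 := Matrix.mem_unitaryGroup_iff.mp hM.eigenvectorUnitary.2
  calc M.charpoly
      = ((hM.eigenvectorUnitary : Matrix m m ℂ) *
          diagonal (RCLike.ofReal ∘ hM.eigenvalues) *
          (star hM.eigenvectorUnitary : Matrix m m ℂ)).charpoly := by
        congr 1; exact hM.spectral_theorem
    _ = (diagonal (RCLike.ofReal ∘ hM.eigenvalues) : Matrix m m ℂ).charpoly :=
        my_charpoly_conj _ _ _ hV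
    _ = ∏ i, (X - C ((hM.eigenvalues i : ℝ) : ℂ)) := my_charpoly_diagonal _
    _ = _ := by
        rw [eigMS, Multiset.map_map, Finset.prod]
        rfl

lemma multiset_eq_of_prod_eq (s t : Multiset ℂ)
    (h : (s.map fun a => (X : ℂ[X]) - C a).prod = (t.map fun a => (X : ℂ[X]) - C a).prod) :
    s = t := by
  have := congrArg Polynomial.roots h
  rwa [roots_multiset_prod_X_sub_C, roots_multiset_prod_X_sub_C] at this

lemma em_eq_of_charpoly_eq {m' : Type*} [Fintype m'] [DecidableEq m']
    {M : Matrix m m ℂ} {N : Matrix m' m' ℂ} (hM : M.IsHermitian) (hN : N.IsHermitian)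
    (h : M.charpoly = N.charpoly) : eigMS M hM = eigMS N hN := by
  rw [my_charpoly_eq M hM, my_charpoly_eq N hN] at h
  have h2 : ((eigMS M hM).map (fun r : ℝ => (r : ℂ))) = ((eigMS N hN).map (fun r : ℝ => (r : ℂ))) := by
    apply multiset_eq_of_prod_eq
    simp only [Multiset.map_map, Function.comp_def]
    simpa using h
  exact Multiset.map_injective Complex.ofReal_injective h2

lemma sum_f_eq (g : ℝ → ℝ) (M : Matrix m m ℂ) (hM : M.IsHermitian) :
    ∑ i, g (hM.eigenvalues i) = ((eigMS M hM).map g).sum := by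
  rw [eigMS, Multiset.map_map, Finset.sum]
  rfl

lemma em_fromBlocks {n n' : Type*} [Fintype n] [DecidableEq n] [Fintype n'] [DecidableEq n']
    {A : Matrix n n ℂ} {B : Matrix n' n' ℂ} (hA : A.IsHermitian) (hB : B.IsHermitian)
    (hD : (fromBlocks A 0 0 B).IsHermitian) :
    eigMS (fromBlocks A 0 0 B) hD = eigMS A hA + eigMS B hB := by
  have h : (fromBlocks A 0 0 B).charpoly = A.charpoly * B.charpoly :=
    charpoly_fromBlocks_zero₁₂ A 0 B
  rw [my_charpoly_eq _ hD, my_charpoly_eq _ hA, my_charpoly_eq _ hB] at h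
  have h2 : ((eigMS (fromBlocks A 0 0 B) hD).map (fun r : ℝ => (r : ℂ)))
      = (((eigMS A hA) + (eigMS B hB)).map (fun r : ℝ => (r : ℂ))) := by
    apply multiset_eq_of_prod_eq
    simp only [Multiset.map_map, Multiset.map_add, Multiset.prod_add, Function.comp_def]
    simpa using h
  exact Multiset.map_injective Complex.ofReal_injective h2

lemma convexOn_g (f : ℝ≥0 → ℝ≥0) (hconv : ConvexOn ℝ≥0 Set.univ f) :
    ConvexOn ℝ (Set.Ici (0:ℝ)) (fun t => (f t.toNNReal : ℝ)) := by
  refine ⟨convex_Ici 0, ?_⟩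
  intro x hx y hy a b ha hb hab
  have hx' : (0:ℝ) ≤ x := hx
  have hy' : (0:ℝ) ≤ y := hy
  simp only [smul_eq_mul]
  have h1 : (a * x + b * y).toNNReal = a.toNNReal • x.toNNReal + b.toNNReal • y.toNNReal := by
    rw [Real.toNNReal_add (by positivity) (by positivity), Real.toNNReal_mul ha,
      Real.toNNReal_mul hb]
    rfl
  have hab' : a.toNNReal + b.toNNReal = 1 := by
    rw [← Real.toNNReal_add ha hb, hab, Real.toNNReal_one]
  have h2 := hconv.2 (Set.mem_univ x.toNNReal) (Set.mem_univ y.toNNReal)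
    (by positivity) (by positivity) hab'
  rw [h1]
  calc ((f (a.toNNReal • x.toNNReal + b.toNNReal • y.toNNReal) : ℝ≥0) : ℝ)
      ≤ ((a.toNNReal • f x.toNNReal + b.toNNReal • f y.toNNReal : ℝ≥0) : ℝ) := by
        exact_mod_cast h2
    _ = a * (f x.toNNReal : ℝ) + b * (f y.toNNReal : ℝ) := by
        push_cast [smul_eq_mul]
        rw [Real.coe_toNNReal a ha, Real.coe_toNNReal b hb]

lemma peierls_s5 (f : ℝ≥0 → ℝ≥0) (hconv : ConvexOn ℝ≥0 Set.univ f)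
    (P : Matrix m m ℂ) (hP : P.PosSemidef) (V : Matrix m m ℂ)
    (hV : V ∈ Matrix.unitaryGroup m ℂ) :
    ∑ i, (f ((star V * P * V) i i).re.toNNReal : ℝ)
      ≤ ∑ j, (f ((hP.1.eigenvalues j).toNNReal) : ℝ) := by
  set U : Matrix m m ℂ := (hP.1.eigenvectorUnitary : Matrix m m ℂ) with hUdef
  set K : Matrix m m ℂ := star U * V with hKdef
  have hUu : U ∈ Matrix.unitaryGroup m ℂ := hP.1.eigenvectorUnitary.2
  have hU1 : U * star U = 1 := (Unitary.mem_iff.mp hUu).2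
  have hU2 : star U * U = 1 := (Unitary.mem_iff.mp hUu).1
  have hV1 : V * star V = 1 := (Unitary.mem_iff.mp hV).2
  have hV2 : star V * V = 1 := (Unitary.mem_iff.mp hV).1
  have hK1 : star K * K = 1 := by
    rw [hKdef, Matrix.star_mul, star_star, mul_assoc, ← mul_assoc U, hU1, one_mul, hV2]
  have hK2 : K * star K = 1 := by
    rw [hKdef, Matrix.star_mul, star_star, mul_assoc, ← mul_assoc V, hV1, one_mul, hU2]
  have hspec : star V * P * V = star K *
      diagonal (RCLike.ofReal ∘ hP.1.eigenvalues) * K := by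
    conv_lhs => rw [hP.1.spectral_theorem]
    rw [hKdef, Matrix.star_mul, star_star, hUdef]
    simp only [Unitary.conjStarAlgAut_apply, Matrix.mul_assoc]
  set w : m → m → ℝ := fun i j => Complex.normSq (K j i) with hw
  have h_entry : ∀ i, ((star V * P * V) i i) =
      ((∑ j, hP.1.eigenvalues j * w i j : ℝ) : ℂ) := by
    intro i
    rw [hspec]
    rw [Matrix.mul_apply]
    push_cast
    refine Finset.sum_congr rfl fun j _ => ?_
    rw [Matrix.mul_apply]
    rw [Finset.sum_eq_single j ?h₀ ?h₁]
    · rw [Matrix.star_apply, diagonal_apply_eq]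
      have hz : star (K j i) * (RCLike.ofReal ∘ hP.1.eigenvalues) j * K j i
          = ((hP.1.eigenvalues j : ℝ) : ℂ) * (K j i * (starRingEnd ℂ) (K j i)) := by
        simp only [Function.comp_apply, Complex.star_def, RCLike.ofReal_alg, smul_eq_mul,
          Complex.real_smul, mul_one]
        ring
      rw [hz, Complex.mul_conj]
      try simp only [hw]
    · intro b _ hb
      simp [diagonal_apply_ne _ hb]
    · intro h; exact absurd (Finset.mem_univ j) h
  have h_re : ∀ i, ((star V * P * V) i i).re = ∑ j, hP.1.eigenvalues j * w i j := by
    intro i; rw [h_entry i, Complex.ofReal_re]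
  have h_w_nonneg : ∀ i j, 0 ≤ w i j := fun i j => Complex.normSq_nonneg _
  have h_row : ∀ i, ∑ j, w i j = 1 := by
    intro i
    have h := congrFun (congrFun hK1 i) i
    rw [Matrix.mul_apply, Matrix.one_apply_eq] at h
    have : ((∑ j, w i j : ℝ) : ℂ) = 1 := by
      push_cast
      rw [← h]
      refine Finset.sum_congr rfl fun j _ => ?_
      rw [Matrix.star_apply, mul_comm, Complex.star_def, Complex.mul_conj]
    exact_mod_cast this
  have h_col : ∀ j, ∑ i, w i j = 1 := by
    intro j
    have h := congrFun (congrFun hK2 j) j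
    rw [Matrix.mul_apply, Matrix.one_apply_eq] at h
    have : ((∑ i, w i j : ℝ) : ℂ) = 1 := by
      push_cast
      rw [← h]
      refine Finset.sum_congr rfl fun i _ => ?_
      rw [Matrix.star_apply, Complex.star_def, Complex.mul_conj]
    exact_mod_cast this
  set g : ℝ → ℝ := fun t => (f t.toNNReal : ℝ) with hg
  have hgconv : ConvexOn ℝ (Set.Ici (0:ℝ)) g := convexOn_g f hconv
  have key : ∀ i, g (((star V * P * V) i i).re) ≤ ∑ j, w i j * g (hP.1.eigenvalues j) := by
    intro i
    rw [h_re i]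
    have := hgconv.map_sum_le (t := Finset.univ) (w := w i) (p := fun j => hP.1.eigenvalues j)
      (fun j _ => h_w_nonneg i j) (h_row i) (fun j _ => hP.eigenvalues_nonneg j)
    simpa [smul_eq_mul, mul_comm] using this
  calc ∑ i, g (((star V * P * V) i i).re)
      ≤ ∑ i, ∑ j, w i j * g (hP.1.eigenvalues j) := Finset.sum_le_sum fun i _ => key i
    _ = ∑ j, (∑ i, w i j) * g (hP.1.eigenvalues j) := by
        rw [Finset.sum_comm]
        exact Finset.sum_congr rfl fun j _ => (Finset.sum_mul _ _ _).symm
    _ = ∑ j, g (hP.1.eigenvalues j) := by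
        refine Finset.sum_congr rfl fun j _ => ?_
        rw [h_col j, one_mul]

lemma psd_diag_re_nonneg {M : Matrix m m ℂ} (hM : M.PosSemidef) (i : m) :
    0 ≤ (M i i).re := by
  have h := hM.dotProduct_mulVec_nonneg (Pi.single i 1)
  have hd : dotProduct (star (Pi.single i 1)) (M *ᵥ Pi.single i 1) = M i i := by
    simp [dotProduct, Matrix.mulVec, Pi.single_apply, Finset.sum_ite_eq',
      dotProduct]
  rw [hd] at h
  exact (Complex.le_def.mp h).1

lemma avg_le (f : ℝ≥0 → ℝ≥0) (hconv : ConvexOn ℝ≥0 Set.univ f)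
    (P Q R : Matrix m m ℂ) (hP : P.PosSemidef) (hQ : Q.PosSemidef) (hR : R.PosSemidef)
    (hRdef : R = (2⁻¹ : ℝ) • P + (2⁻¹ : ℝ) • Q) :
    ∑ i, (f ((hR.1.eigenvalues i).toNNReal) : ℝ) ≤
      2⁻¹ * ∑ i, (f ((hP.1.eigenvalues i).toNNReal) : ℝ)
        + 2⁻¹ * ∑ i, (f ((hQ.1.eigenvalues i).toNNReal) : ℝ) := by
  set g : ℝ → ℝ := fun t => (f t.toNNReal : ℝ) with hg
  have hgconv : ConvexOn ℝ (Set.Ici (0:ℝ)) g := convexOn_g f hconv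
  set V : Matrix m m ℂ := (hR.1.eigenvectorUnitary : Matrix m m ℂ) with hVdef
  have hV : V ∈ Matrix.unitaryGroup m ℂ := hR.1.eigenvectorUnitary.2
  have hdiag : star V * R * V = diagonal (RCLike.ofReal ∘ hR.1.eigenvalues) :=
    by simpa [Unitary.conjStarAlgAut_apply] using hR.1.conjStarAlgAut_star_eigenvectorUnitary
  have hPV : (star V * P * V).PosSemidef := by
    rw [Matrix.star_eq_conjTranspose]
    exact hP.conjTranspose_mul_mul_same V
  have hQV : (star V * Q * V).PosSemidef := by
    rw [Matrix.star_eq_conjTranspose]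
    exact hQ.conjTranspose_mul_mul_same V
  set p : m → ℝ := fun i => ((star V * P * V) i i).re with hp
  set q : m → ℝ := fun i => ((star V * Q * V) i i).re with hq
  have hsplit : ∀ i, hR.1.eigenvalues i = 2⁻¹ * p i + 2⁻¹ * q i := by
    intro i
    have h1 : star V * R * V
        = (2⁻¹ : ℝ) • (star V * P * V) + (2⁻¹ : ℝ) • (star V * Q * V) := by
      simp only [hRdef, Matrix.mul_add, Matrix.add_mul, Matrix.mul_smul, Matrix.smul_mul]
    have h2 := congrFun (congrFun h1 i) i
    rw [hdiag] at h2
    simpa [Matrix.add_apply, Matrix.smul_apply, Complex.smul_re, hp, hq]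
      using congrArg Complex.re h2
  have hkey : ∀ i, g (hR.1.eigenvalues i) ≤ 2⁻¹ * g (p i) + 2⁻¹ * g (q i) := by
    intro i
    rw [hsplit i]
    have := hgconv.2 (Set.mem_Ici.mpr (psd_diag_re_nonneg hPV i))
      (Set.mem_Ici.mpr (psd_diag_re_nonneg hQV i)) (by norm_num : (0:ℝ) ≤ 2⁻¹)
      (by norm_num : (0:ℝ) ≤ 2⁻¹) (by norm_num)
    simpa [smul_eq_mul] using this
  calc ∑ i, g (hR.1.eigenvalues i)
      ≤ ∑ i, (2⁻¹ * g (p i) + 2⁻¹ * g (q i)) := Finset.sum_le_sum fun i _ => hkey i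
    _ = 2⁻¹ * ∑ i, g (p i) + 2⁻¹ * ∑ i, g (q i) := by
        rw [Finset.sum_add_distrib, Finset.mul_sum, Finset.mul_sum]
    _ ≤ 2⁻¹ * ∑ j, g (hP.1.eigenvalues j) + 2⁻¹ * ∑ j, g (hQ.1.eigenvalues j) := by
        refine add_le_add ?_ ?_
        · exact mul_le_mul_of_nonneg_left (peierls_s5 f hconv P hP V hV) (by norm_num)
        · exact mul_le_mul_of_nonneg_left (peierls_s5 f hconv Q hQ V hV) (by norm_num)

lemma my_sqrt {M : Matrix m m ℂ} (hM : M.PosSemidef) :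
    ∃ s : Matrix m m ℂ, s.IsHermitian ∧ s * s = M := by
  set U : Matrix m m ℂ := (hM.1.eigenvectorUnitary : Matrix m m ℂ) with hU
  have hU2 : star U * U = 1 := (Unitary.mem_iff.mp hM.1.eigenvectorUnitary.2).1
  set D : Matrix m m ℂ := diagonal (fun i => ((Real.sqrt (hM.1.eigenvalues i) : ℝ) : ℂ)) with hD
  refine ⟨U * D * Uᴴ, ?_, ?_⟩
  · apply isHermitian_mul_mul_conjTranspose
    apply isHermitian_diagonal_of_self_adjoint
    ext i
    simp
  · have hDD : D * D = diagonal (RCLike.ofReal ∘ hM.1.eigenvalues) := by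
      rw [hD, diagonal_mul_diagonal]
      congr 1
      ext i
      simp only [Function.comp_apply]
      rw [← Complex.ofReal_mul, Real.mul_self_sqrt (hM.eigenvalues_nonneg i)]
      rfl
    conv_rhs => rw [hM.1.spectral_theorem, Unitary.conjStarAlgAut_apply]
    rw [← hU, ← hDD, ← Matrix.star_eq_conjTranspose]
    calc U * D * star U * (U * D * star U) = U * D * (star U * U) * D * star U := by
          simp only [Matrix.mul_assoc]
      _ = U * (D * D) * star U := by rw [hU2, Matrix.mul_one]; simp only [Matrix.mul_assoc]

end RotfeldAux

/-- Superadditivity of the trace of a convex function: for positive semidefinite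
`x, y` and continuous increasing convex `f : ℝ≥0 → ℝ≥0` with `f 0 = 0`,
`trace f(x) + trace f(y) ≤ trace f(x + y)`. -/
theorem trace_superadditive {n : ℕ} (x y : Matrix (Fin n) (Fin n) ℂ)
    (hx : x.PosSemidef) (hy : y.PosSemidef) (f : ℝ≥0 → ℝ≥0)
    (hcont : Continuous f) (hmono : Monotone f) (hconv : ConvexOn ℝ≥0 Set.univ f)
    (hf0 : f 0 = 0) :
    traceF f x hx.1 + traceF f y hy.1 ≤ traceF f (x + y) (hx.1.add hy.1) := by
  classical
  set g : ℝ → ℝ := fun t => (f t.toNNReal : ℝ) with hg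
  obtain ⟨sx, hsxh, hsxx⟩ := my_sqrt hx
  obtain ⟨sy, hsyh, hsyy⟩ := my_sqrt hy
  set T : Matrix (Fin n ⊕ Fin n) (Fin n ⊕ Fin n) ℂ := fromBlocks sx 0 sy 0 with hT
  have hTH : Tᴴ = fromBlocks sx sy 0 0 := by
    rw [hT, fromBlocks_conjTranspose, hsxh.eq, hsyh.eq]
    simp
  set M := T * Tᴴ with hMdef
  set N := Tᴴ * T with hNdef
  have hMpsd : M.PosSemidef := posSemidef_self_mul_conjTranspose T
  have hNpsd : N.PosSemidef := posSemidef_conjTranspose_mul_self T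
  have hN : N = fromBlocks (x + y) 0 0 0 := by
    rw [hNdef, hTH, hT, fromBlocks_multiply]
    simp [hsxx, hsyy]
  have hM : M = fromBlocks x (sx * sy) (sy * sx) y := by
    rw [hMdef, hTH, hT, fromBlocks_multiply]
    simp [hsxx, hsyy]
  set S : Matrix (Fin n ⊕ Fin n) (Fin n ⊕ Fin n) ℂ := fromBlocks 1 0 0 (-1) with hS
  have hSS : S * S = 1 := by
    rw [hS, fromBlocks_multiply, ← fromBlocks_one]
    congr 1 <;> simp
  have hSh : Sᴴ = S := by
    rw [hS, fromBlocks_conjTranspose]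
    simp
  have hSMS : S * M * S = fromBlocks x (-(sx * sy)) (-(sy * sx)) y := by
    rw [hM, hS, fromBlocks_multiply, fromBlocks_multiply]
    congr 1 <;> simp
  have hSMSpsd : (S * M * S).PosSemidef := by
    have := hMpsd.mul_mul_conjTranspose_same S
    rwa [hSh] at this
  set D : Matrix (Fin n ⊕ Fin n) (Fin n ⊕ Fin n) ℂ := fromBlocks x 0 0 y with hD
  have hDavg : D = (2⁻¹ : ℝ) • M + (2⁻¹ : ℝ) • (S * M * S) := by
    rw [hSMS, hM, hD, fromBlocks_smul, fromBlocks_smul, fromBlocks_add, fromBlocks_inj]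
    refine ⟨?_, ?_, ?_, ?_⟩
    · rw [← add_smul]; norm_num
    · rw [smul_neg, add_neg_cancel]
    · rw [smul_neg, add_neg_cancel]
    · rw [← add_smul]; norm_num
  have hDpsd : D.PosSemidef := by
    have hG : (fromBlocks sx 0 0 sy)ᴴ * (fromBlocks sx 0 0 sy : Matrix (Fin n ⊕ Fin n) _ ℂ)
        = D := by
      rw [fromBlocks_conjTranspose, hsxh.eq, hsyh.eq, fromBlocks_multiply, hD]
      congr 1 <;> simp [hsxx, hsyy]
    rw [← hG]
    exact posSemidef_conjTranspose_mul_self _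
  -- zero matrix eigenvalues
  have h0h : (0 : Matrix (Fin n) (Fin n) ℂ).IsHermitian := isHermitian_zero
  have h0eig : ∀ i, h0h.eigenvalues i = 0 := by
    intro i
    rw [h0h.eigenvalues_eq]
    simp
  -- sums
  have sumD : ∑ i, g (hDpsd.1.eigenvalues i)
      = ∑ i, g (hx.1.eigenvalues i) + ∑ i, g (hy.1.eigenvalues i) := by
    rw [sum_f_eq, sum_f_eq, sum_f_eq, em_fromBlocks hx.1 hy.1 hDpsd.1, Multiset.map_add,
      Multiset.sum_add]
  have sumSMS : ∑ i, g (hSMSpsd.1.eigenvalues i) = ∑ i, g (hMpsd.1.eigenvalues i) := by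
    rw [sum_f_eq, sum_f_eq, em_eq_of_charpoly_eq hSMSpsd.1 hMpsd.1 (my_charpoly_conj S M S hSS)]
  have sumMN : ∑ i, g (hMpsd.1.eigenvalues i) = ∑ i, g (hNpsd.1.eigenvalues i) := by
    rw [sum_f_eq, sum_f_eq, em_eq_of_charpoly_eq hMpsd.1 hNpsd.1 (my_charpoly_mul_comm T Tᴴ)]
  have hNh' : (fromBlocks (x + y) 0 0 (0 : Matrix (Fin n) (Fin n) ℂ)).IsHermitian := by
    rw [← hN]; exact hNpsd.1
  have sumN : ∑ i, g (hNpsd.1.eigenvalues i) = ∑ i, g ((hx.1.add hy.1).eigenvalues i) := by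
    have e1 : eigMS N hNpsd.1 = eigMS _ hNh' := em_eq_of_charpoly_eq _ _ (by rw [hN])
    rw [sum_f_eq, sum_f_eq, e1, em_fromBlocks (hx.1.add hy.1) h0h hNh', Multiset.map_add,
      Multiset.sum_add, ← sum_f_eq g _ h0h]
    have hz : ∑ i, g (h0h.eigenvalues i) = 0 := by
      refine Finset.sum_eq_zero fun i _ => ?_
      rw [h0eig i, hg]
      simp [hf0]
    rw [hz, add_zero]
  have main := avg_le f hconv M (S * M * S) D hMpsd hSMSpsd hDpsd hDavg
  calc traceF f x hx.1 + traceF f y hy.1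
      = ∑ i, g (hDpsd.1.eigenvalues i) := by rw [sumD]; rfl
    _ ≤ 2⁻¹ * ∑ i, g (hMpsd.1.eigenvalues i) + 2⁻¹ * ∑ i, g (hSMSpsd.1.eigenvalues i) := main
    _ = ∑ i, g (hMpsd.1.eigenvalues i) := by rw [sumSMS]; ring
    _ = traceF f (x + y) (hx.1.add hy.1) := by rw [sumMN, sumN]; rfl
end

section
/- Let x and y be positive semidefinite n×n complex matrices and let f : ℝ≥0 → ℝ≥0 be a continuous increasing concave function with f(0) = 0. Then trace(f(x + y)) ≤ trace(f(x)) + trace(f(y)), where f is applied via the functional calculus. -/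
open Matrix
open scoped NNReal ComplexOrder

section
variable {n : ℕ}

lemma psd_diag_nonneg {M : Matrix (Fin n) (Fin n) ℂ} (hM : M.PosSemidef) (i : Fin n) :
    0 ≤ M i i := by
  have := hM.dotProduct_mulVec_nonneg (Pi.single i 1)
  simpa [dotProduct, Pi.single_apply, mulVec, Finset.sum_ite_eq] using this

lemma psd_trace_nonneg {M : Matrix (Fin n) (Fin n) ℂ} (hM : M.PosSemidef) :
    0 ≤ M.trace :=
  Finset.sum_nonneg fun i _ => psd_diag_nonneg hM i

open scoped MatrixOrder in
lemma psd_trace_mul_nonneg {A B : Matrix (Fin n) (Fin n) ℂ}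
    (hA : A.PosSemidef) (hB : B.PosSemidef) : 0 ≤ (A * B).trace := by
  have hs := Matrix.nonneg_iff_posSemidef.mp (CFC.sqrt_nonneg A)
  have h1 : A = CFC.sqrt A * CFC.sqrt A := (CFC.sqrt_mul_sqrt_self A (Matrix.nonneg_iff_posSemidef.mpr hA)).symm
  have hpsd : (CFC.sqrt A * B * CFC.sqrt A).PosSemidef := by
    have := hB.mul_mul_conjTranspose_same (CFC.sqrt A)
    rwa [hs.1.eq] at this
  have h2 : (CFC.sqrt A * B * CFC.sqrt A).trace = (A * B).trace := by
    rw [trace_mul_comm, ← mul_assoc, ← h1]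
  rw [← h2]
  exact psd_trace_nonneg hpsd

lemma mulVec_all_zero {A : Matrix (Fin n) (Fin n) ℂ} (h : ∀ x, A *ᵥ x = 0) : A = 0 := by
  ext i j
  have := congrFun (h (Pi.single j 1)) i
  simpa [mulVec, dotProduct, Pi.single_apply] using this

lemma psd_add_eq_zero {A B : Matrix (Fin n) (Fin n) ℂ}
    (hA : A.PosSemidef) (hB : B.PosSemidef) (h : A + B = 0) : A = 0 := by
  apply mulVec_all_zero
  intro x
  rw [← hA.dotProduct_mulVec_zero_iff]
  have h1 := hA.dotProduct_mulVec_nonneg x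
  have h2 := hB.dotProduct_mulVec_nonneg x
  have h3 : star x ⬝ᵥ (A *ᵥ x) + star x ⬝ᵥ (B *ᵥ x) = 0 := by
    rw [← dotProduct_add, ← add_mulVec, h, zero_mulVec, dotProduct_zero]
  have : star x ⬝ᵥ (A *ᵥ x) ≤ 0 := by
    rw [← h3]; simpa using h2
  exact le_antisymm this h1
end
lemma matrix_rank_add_le {n : ℕ} (A B : Matrix (Fin n) (Fin n) ℂ) :
    (A + B).rank ≤ A.rank + B.rank := by
  have hr : LinearMap.range (A + B).mulVecLin ≤
      LinearMap.range A.mulVecLin ⊔ LinearMap.range B.mulVecLin := by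
    rw [Matrix.mulVecLin_add]
    intro v hv
    obtain ⟨w, rfl⟩ := hv
    exact Submodule.add_mem_sup (LinearMap.mem_range_self _ w) (LinearMap.mem_range_self _ w)
  calc (A + B).rank ≤ Module.finrank ℂ ↥(LinearMap.range A.mulVecLin ⊔ LinearMap.range B.mulVecLin) :=
        Submodule.finrank_mono hr
    _ ≤ A.rank + B.rank := Submodule.finrank_add_le_finrank_add_finrank _ _

section FApp
variable {n : ℕ} {A : Matrix (Fin n) (Fin n) ℂ}

/-- Apply a real function to a Hermitian matrix via functional calculus. -/
noncomputable def fapp (hA : A.IsHermitian) (g : ℝ → ℝ) : Matrix (Fin n) (Fin n) ℂ :=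
  (hA.eigenvectorUnitary : Matrix (Fin n) (Fin n) ℂ) *
    diagonal (fun i => ((g (hA.eigenvalues i) : ℝ) : ℂ)) *
    star (hA.eigenvectorUnitary : Matrix (Fin n) (Fin n) ℂ)

variable (hA : A.IsHermitian) (g g' : ℝ → ℝ)

lemma conj_mul' {U : Matrix (Fin n) (Fin n) ℂ} (h1 : star U * U = 1) (d d' : Fin n → ℂ) :
    (U * diagonal d * star U) * (U * diagonal d' * star U)
      = U * diagonal (fun i => d i * d' i) * star U := by
  rw [← diagonal_mul_diagonal]
  calc (U * diagonal d * star U) * (U * diagonal d' * star U)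
      = U * diagonal d * (star U * U) * diagonal d' * star U := by
        simp only [mul_assoc]
    _ = U * (diagonal d * diagonal d') * star U := by rw [h1, mul_one]; simp only [mul_assoc]

lemma conj_trace' {U : Matrix (Fin n) (Fin n) ℂ} (h1 : star U * U = 1) (d : Fin n → ℂ) :
    trace (U * diagonal d * star U) = ∑ i, d i := by
  rw [trace_mul_cycle, h1, one_mul, trace_diagonal]

lemma fapp_mul : fapp hA g * fapp hA g' = fapp hA (fun t => g t * g' t) := by
  unfold fapp
  rw [conj_mul' (Unitary.coe_star_mul_self hA.eigenvectorUnitary)]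
  push_cast
  rfl

lemma fapp_trace : trace (fapp hA g) = ((∑ i, g (hA.eigenvalues i) : ℝ) : ℂ) := by
  unfold fapp
  rw [conj_trace' (Unitary.coe_star_mul_self hA.eigenvectorUnitary)]
  push_cast
  rfl

lemma fapp_herm : (fapp hA g).IsHermitian := by
  unfold fapp
  have h : star (fun i => ((g (hA.eigenvalues i) : ℝ) : ℂ)) = fun i => ((g (hA.eigenvalues i) : ℝ) : ℂ) := by
    funext i; simp [Pi.star_apply, Complex.conj_ofReal]
  unfold Matrix.IsHermitian
  simp only [star_eq_conjTranspose, conjTranspose_mul, conjTranspose_conjTranspose,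
    diagonal_conjTranspose, h, mul_assoc]

lemma fapp_psd (hg : ∀ i, 0 ≤ g (hA.eigenvalues i)) : (fapp hA g).PosSemidef := by
  have h : PosSemidef (diagonal (fun i => ((g (hA.eigenvalues i) : ℝ) : ℂ))) :=
    PosSemidef.diagonal (fun i => Complex.zero_le_real.mpr (hg i))
  simpa [fapp, star_eq_conjTranspose] using
    h.mul_mul_conjTranspose_same (hA.eigenvectorUnitary : Matrix (Fin n) (Fin n) ℂ)

lemma fapp_id : fapp hA (fun t => t) = A := by
  unfold fapp
  exact hA.spectral_theorem.symm

lemma fapp_add : fapp hA g + fapp hA g' = fapp hA (fun t => g t + g' t) := by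
  unfold fapp
  rw [← add_mul, ← mul_add]
  congr 2
  rw [diagonal_add]
  funext i
  push_cast
  rfl

lemma fapp_one : fapp hA (fun _ => 1) = 1 := by
  unfold fapp
  norm_num [diagonal_one, Unitary.coe_mul_star_self]

lemma mul_fapp : A * fapp hA g = fapp hA (fun t => t * g t) := by
  have h := fapp_mul hA (fun t => t) g
  rw [fapp_id hA] at h
  exact h

lemma trace_mul_fapp : trace (A * fapp hA g)
    = ((∑ i, hA.eigenvalues i * g (hA.eigenvalues i) : ℝ) : ℂ) := by
  rw [mul_fapp, fapp_trace]

lemma one_sub_fapp : 1 - fapp hA g = fapp hA (fun t => 1 - g t) := by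
  have h := fapp_add hA (fun t => 1 - g t) g
  simp only [sub_add_cancel] at h
  rw [fapp_one] at h
  rw [← h]
  abel

lemma fapp_rank : (fapp hA g).rank
    = (Finset.univ.filter (fun i => g (hA.eigenvalues i) ≠ 0)).card := by
  set U := (hA.eigenvectorUnitary : Matrix (Fin n) (Fin n) ℂ)
  have h1 : star U * U = 1 := Unitary.coe_star_mul_self hA.eigenvectorUnitary
  have h2 : U * star U = 1 := Unitary.coe_mul_star_self hA.eigenvectorUnitary
  have hU : IsUnit U.det :=
    isUnit_iff_exists.mpr ⟨(star U).det, by rw [← det_mul, h2, det_one], by rw [← det_mul, h1, det_one]⟩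
  have hU' : IsUnit (star U).det :=
    isUnit_iff_exists.mpr ⟨U.det, by rw [← det_mul, h1, det_one], by rw [← det_mul, h2, det_one]⟩
  unfold fapp
  rw [mul_assoc, rank_mul_eq_right_of_isUnit_det U _ hU,
    rank_mul_eq_left_of_isUnit_det (star U) _ hU', rank_diagonal, Fintype.card_subtype]
  congr 1
  apply Finset.filter_congr
  intro i _
  simp [Complex.ofReal_eq_zero]
end FApp

lemma trace_conj_mul_diag {n : ℕ} {U : Matrix (Fin n) (Fin n) ℂ} (d : Fin n → ℂ)
    (B : Matrix (Fin n) (Fin n) ℂ) :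
    trace ((U * diagonal d * star U) * B) = ∑ i, d i * (star U * B * U) i i := by
  rw [trace_mul_cycle, trace_mul_cycle]
  have h : star U * B * (U * diagonal d) = (star U * B * U) * diagonal d := by
    simp only [mul_assoc]
  rw [h]
  simp [Matrix.trace, Matrix.diag, Matrix.mul_diagonal, mul_comm]

section Key
variable {n : ℕ}

lemma fapp_congr_eigen {A : Matrix (Fin n) (Fin n) ℂ} (hA : A.IsHermitian) {g g' : ℝ → ℝ}
    (h : ∀ i, g (hA.eigenvalues i) = g' (hA.eigenvalues i)) : fapp hA g = fapp hA g' := by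
  unfold fapp
  have h2 : (fun i => ((g (hA.eigenvalues i) : ℝ) : ℂ)) = (fun i => ((g' (hA.eigenvalues i) : ℝ) : ℂ)) :=
    funext fun i => by rw [h i]
  rw [h2]

lemma key_ineq {x y : Matrix (Fin n) (Fin n) ℂ} (hx : x.PosSemidef) (hy : y.PosSemidef)
    {s : ℝ} (hs : 0 ≤ s) :
    (∑ j, max (hx.1.eigenvalues j - s) 0) + (∑ j, max (hy.1.eigenvalues j - s) 0)
      ≤ ∑ i, max ((hx.1.add hy.1).eigenvalues i - s) 0 := by
  classical
  set a := hx.1.eigenvalues with ha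
  set b := hy.1.eigenvalues with hb
  set c := (hx.1.add hy.1).eigenvalues with hc
  set inds : ℝ → ℝ := fun t => if s < t then 1 else 0 with hinds
  set ind0 : ℝ → ℝ := fun t => if 0 < t then 1 else 0 with hind0
  have inds_nonneg : ∀ t, 0 ≤ inds t := fun t => by simp only [hinds]; split <;> norm_num
  have ind0_nonneg : ∀ t, 0 ≤ ind0 t := fun t => by simp only [hind0]; split <;> norm_num
  set P := fapp hx.1 inds with hPdef
  set Q := fapp hy.1 inds with hQdef
  have hPpsd : P.PosSemidef := fapp_psd hx.1 inds (fun i => inds_nonneg _)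
  have hQpsd : Q.PosSemidef := fapp_psd hy.1 inds (fun i => inds_nonneg _)
  set S := P + Q with hSdef
  have hSpsd : S.PosSemidef := hPpsd.add hQpsd
  have hS : S.IsHermitian := hSpsd.1
  set μ := hS.eigenvalues with hμ
  have hμ0 : ∀ k, 0 ≤ μ k := fun k => hSpsd.eigenvalues_nonneg k
  set R := fapp hS ind0 with hRdef
  have hRpsd : R.PosSemidef := fapp_psd hS ind0 (fun i => ind0_nonneg _)
  have hRherm : R.IsHermitian := hRpsd.1
  -- idempotents
  have PP : P * P = P := by
    rw [hPdef, fapp_mul]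
    exact fapp_congr_eigen _ (fun i => by simp only [hinds]; split <;> norm_num)
  have QQ : Q * Q = Q := by
    rw [hQdef, fapp_mul]
    exact fapp_congr_eigen _ (fun i => by simp only [hinds]; split <;> norm_num)
  have RR : R * R = R := by
    rw [hRdef, fapp_mul]
    exact fapp_congr_eigen _ (fun i => by simp only [hind0]; split <;> norm_num)
  -- S * R = S
  have SR : S * R = S := by
    conv_lhs => rw [← fapp_id hS, hRdef, fapp_mul]
    conv_rhs => rw [← fapp_id hS]
    refine fapp_congr_eigen _ (fun k => ?_)
    show μ k * ind0 (μ k) = μ k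
    simp only [hind0]
    rcases (hμ0 k).lt_or_eq with hlt | heq
    · rw [if_pos hlt, mul_one]
    · rw [← heq, zero_mul]
  -- P * (1 - R) = 0
  have hTherm : (1 - R).IsHermitian := by
    rw [one_sub_fapp]
    exact fapp_herm hS _
  have ST : S * (1 - R) = 0 := by rw [mul_sub, mul_one, SR, sub_self]
  have e1 : (P * (1 - R))ᴴ * (P * (1 - R)) = (1 - R) * (P * (1 - R)) := by
    rw [conjTranspose_mul, hTherm.eq, hPpsd.1.eq, mul_assoc, ← mul_assoc P P, PP]
  have e2 : (Q * (1 - R))ᴴ * (Q * (1 - R)) = (1 - R) * (Q * (1 - R)) := by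
    rw [conjTranspose_mul, hTherm.eq, hQpsd.1.eq, mul_assoc, ← mul_assoc Q Q, QQ]
  have hsum : (1 - R) * (P * (1 - R)) + (1 - R) * (Q * (1 - R)) = 0 := by
    rw [← mul_add, ← add_mul, ← hSdef, ST, mul_zero]
  have PT : P * (1 - R) = 0 := by
    have h0 : (P * (1 - R))ᴴ * (P * (1 - R)) = 0 := by
      apply psd_add_eq_zero (B := (Q * (1 - R))ᴴ * (Q * (1 - R)))
        (posSemidef_conjTranspose_mul_self _) (posSemidef_conjTranspose_mul_self _)
      rw [e1, e2, hsum]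
    exact conjTranspose_mul_self_eq_zero.mp h0
  have QT : Q * (1 - R) = 0 := by
    have h0 : (Q * (1 - R))ᴴ * (Q * (1 - R)) = 0 := by
      apply psd_add_eq_zero (B := (P * (1 - R))ᴴ * (P * (1 - R)))
        (posSemidef_conjTranspose_mul_self _) (posSemidef_conjTranspose_mul_self _)
      rw [e1, e2]
      rw [add_comm] at hsum
      exact hsum
    exact conjTranspose_mul_self_eq_zero.mp h0
  have PR : P * R = P := by
    have := PT
    rw [mul_sub, mul_one, sub_eq_zero] at this
    exact this.symm
  have QR : Q * R = Q := by
    have := QT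
    rw [mul_sub, mul_one, sub_eq_zero] at this
    exact this.symm
  have RP : R * P = P := by
    have : (P * R)ᴴ = R * P := by
      rw [conjTranspose_mul, hRherm.eq, hPpsd.1.eq]
    rw [PR, hPpsd.1.eq] at this
    exact this.symm
  have RQ : R * Q = Q := by
    have : (Q * R)ᴴ = R * Q := by
      rw [conjTranspose_mul, hRherm.eq, hQpsd.1.eq]
    rw [QR, hQpsd.1.eq] at this
    exact this.symm
  -- R - P and R - Q are PSD
  have hRPpsd : (R - P).PosSemidef := by
    have hherm : (R - P).IsHermitian := hRherm.sub hPpsd.1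
    have : (R - P)ᴴ * (R - P) = R - P := by
      rw [hherm.eq, sub_mul, mul_sub, mul_sub, RR, RP, PR, PP, sub_self, sub_zero]
    rw [← this]
    exact posSemidef_conjTranspose_mul_self _
  have hRQpsd : (R - Q).PosSemidef := by
    have hherm : (R - Q).IsHermitian := hRherm.sub hQpsd.1
    have : (R - Q)ᴴ * (R - Q) = R - Q := by
      rw [hherm.eq, sub_mul, mul_sub, mul_sub, RR, RQ, QR, QQ, sub_self, sub_zero]
    rw [← this]
    exact posSemidef_conjTranspose_mul_self _

  -- trace facts
  have txP : trace (x * P) = ((∑ j, a j * inds (a j) : ℝ) : ℂ) := trace_mul_fapp hx.1 inds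
  have tyQ : trace (y * Q) = ((∑ j, b j * inds (b j) : ℝ) : ℂ) := trace_mul_fapp hy.1 inds
  have hxR : ((∑ j, a j * inds (a j) : ℝ) : ℂ) ≤ trace (x * R) := by
    have h := psd_trace_mul_nonneg hx hRPpsd
    rw [mul_sub, trace_sub, sub_nonneg] at h
    rw [← txP]; exact h
  have hyR : ((∑ j, b j * inds (b j) : ℝ) : ℂ) ≤ trace (y * R) := by
    have h := psd_trace_mul_nonneg hy hRQpsd
    rw [mul_sub, trace_sub, sub_nonneg] at h
    rw [← tyQ]; exact h
  set W := ((hx.1.add hy.1).eigenvectorUnitary : Matrix (Fin n) (Fin n) ℂ) with hWdef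
  have hW1 : star W * W = 1 := Unitary.coe_star_mul_self _
  have hW2 : W * star W = 1 := Unitary.coe_mul_star_self _
  set ρ : Fin n → ℂ := fun i => (star W * R * W) i i with hρdef
  have hMpsd : (star W * R * W).PosSemidef := by
    have := hRpsd.conjTranspose_mul_mul_same W
    rwa [← star_eq_conjTranspose] at this
  have h1Rpsd : (1 - R).PosSemidef := by
    rw [one_sub_fapp]
    exact fapp_psd hS _ (fun i => by simp only [hind0]; split <;> norm_num)
  have hM1psd : (star W * (1 - R) * W).PosSemidef := by
    have := h1Rpsd.conjTranspose_mul_mul_same W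
    rwa [← star_eq_conjTranspose] at this
  have hρ0 : ∀ i, 0 ≤ ρ i := fun i => psd_diag_nonneg hMpsd i
  have hρ0' : ∀ i, 0 ≤ (ρ i).re := fun i => (Complex.nonneg_iff.mp (hρ0 i)).1
  have hρre : ∀ i, ρ i = ((ρ i).re : ℂ) := fun i =>
    Complex.eq_re_of_ofReal_le (r := 0) (by simpa using hρ0 i)
  have hsub : star W * (1 - R) * W = 1 - star W * R * W := by
    rw [mul_sub, sub_mul, mul_one, hW1]
  have hρ1 : ∀ i, (ρ i).re ≤ 1 := by
    intro i
    have h := psd_diag_nonneg hM1psd i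
    rw [hsub] at h
    have h2 := (Complex.nonneg_iff.mp h).1
    simp only [Matrix.sub_apply, Matrix.one_apply_eq, Complex.sub_re, Complex.one_re] at h2
    have : (ρ i).re = ((star W * R * W) i i).re := rfl
    linarith [h2]
  have hzspec := (hx.1.add hy.1).spectral_theorem
  have tzR : trace ((x + y) * R) = ∑ i, (c i : ℂ) * ρ i := by
    conv_lhs => rw [hzspec]
    exact trace_conj_mul_diag _ R
  have tRμ : trace R = ((∑ k, ind0 (μ k) : ℝ) : ℂ) := fapp_trace hS ind0
  have tRρ : trace R = ∑ i, ρ i := by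
    have h : trace (star W * R * W) = trace R := by
      rw [trace_mul_cycle, hW2, one_mul]
    rw [← h]
    rfl
  have sumr : ∑ k, ind0 (μ k) = ∑ i, (ρ i).re := by
    have h : ((∑ k, ind0 (μ k) : ℝ) : ℂ) = ((∑ i, (ρ i).re : ℝ) : ℂ) := by
      rw [← tRμ, tRρ]
      push_cast
      exact Finset.sum_congr rfl fun i _ => hρre i
    exact_mod_cast h
  have mainC : (∑ j, a j * inds (a j)) + (∑ j, b j * inds (b j)) ≤ ∑ i, c i * (ρ i).re := by
    have h1 : trace ((x + y) * R) = trace (x * R) + trace (y * R) := by rw [add_mul, trace_add]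
    have h2 := add_le_add hxR hyR
    rw [← h1, tzR] at h2
    have h3 : (∑ i, (c i : ℂ) * ρ i) = ((∑ i, c i * (ρ i).re : ℝ) : ℂ) := by
      push_cast
      exact Finset.sum_congr rfl fun i _ => by conv_lhs => rw [hρre i]
    rw [h3, ← Complex.ofReal_add] at h2
    exact Complex.real_le_real.mp h2
  -- rank and cardinality
  have hrankS : S.rank = (Finset.univ.filter (fun k => 0 < μ k)).card := by
    rw [hS.rank_eq_card_non_zero_eigs, Fintype.card_subtype]
    congr 1
    apply Finset.filter_congr
    intro k _
    constructor
    · intro h; exact lt_of_le_of_ne (hμ0 k) (Ne.symm h)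
    · intro h; exact ne_of_gt h
  have hrankP : P.rank = (Finset.univ.filter (fun j => s < a j)).card := by
    rw [hPdef, fapp_rank]
    congr 1
    apply Finset.filter_congr
    intro j _
    simp only [hinds]
    by_cases h : s < a j <;> simp [h] <;> simpa using h
  have hrankQ : Q.rank = (Finset.univ.filter (fun j => s < b j)).card := by
    rw [hQdef, fapp_rank]
    congr 1
    apply Finset.filter_congr
    intro j _
    simp only [hinds]
    by_cases h : s < b j <;> simp [h] <;> simpa using h
  have hcardn : (Finset.univ.filter (fun k => 0 < μ k)).card
      ≤ (Finset.univ.filter (fun j => s < a j)).card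
        + (Finset.univ.filter (fun j => s < b j)).card := by
    rw [← hrankS, ← hrankP, ← hrankQ, hSdef]
    exact matrix_rank_add_le P Q
  have hcard : (∑ k, ind0 (μ k)) ≤ (∑ j, inds (a j)) + (∑ j, inds (b j)) := by
    have e1 : (∑ k, ind0 (μ k)) = ((Finset.univ.filter (fun k => 0 < μ k)).card : ℝ) := by
      simp [hind0, Finset.sum_boole]
    have e2 : (∑ j, inds (a j)) = ((Finset.univ.filter (fun j => s < a j)).card : ℝ) := by
      simp [hinds, Finset.sum_boole]
    have e3 : (∑ j, inds (b j)) = ((Finset.univ.filter (fun j => s < b j)).card : ℝ) := by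
      simp [hinds, Finset.sum_boole]
    rw [e1, e2, e3]
    exact_mod_cast hcardn
  -- convert the maxima
  have A1 : ∑ j, max (a j - s) 0 = (∑ j, a j * inds (a j)) - s * (∑ j, inds (a j)) := by
    rw [Finset.mul_sum, ← Finset.sum_sub_distrib]
    refine Finset.sum_congr rfl fun j _ => ?_
    simp only [hinds]
    by_cases h : s < a j
    · rw [if_pos h, max_eq_left (by linarith), mul_one, mul_one]
    · rw [if_neg h, max_eq_right (by push_neg at h; linarith), mul_zero, mul_zero, sub_zero]
  have A2 : ∑ j, max (b j - s) 0 = (∑ j, b j * inds (b j)) - s * (∑ j, inds (b j)) := by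
    rw [Finset.mul_sum, ← Finset.sum_sub_distrib]
    refine Finset.sum_congr rfl fun j _ => ?_
    simp only [hinds]
    by_cases h : s < b j
    · rw [if_pos h, max_eq_left (by linarith), mul_one, mul_one]
    · rw [if_neg h, max_eq_right (by push_neg at h; linarith), mul_zero, mul_zero, sub_zero]
  have B : (∑ i, c i * (ρ i).re) - s * (∑ i, (ρ i).re) ≤ ∑ i, max (c i - s) 0 := by
    rw [Finset.mul_sum, ← Finset.sum_sub_distrib]
    refine Finset.sum_le_sum fun i _ => ?_
    rcases le_total (c i) s with h | h
    · have hle : c i * (ρ i).re - s * (ρ i).re ≤ 0 := by nlinarith [hρ0' i, hρ1 i]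
      exact hle.trans (le_max_right _ _)
    · have hle : c i * (ρ i).re - s * (ρ i).re ≤ c i - s := by nlinarith [hρ0' i, hρ1 i]
      exact hle.trans (le_max_left _ _)
  have C' := mul_le_mul_of_nonneg_left hcard hs
  have C'' : s * ((∑ j, inds (a j)) + (∑ j, inds (b j)))
      = s * (∑ j, inds (a j)) + s * (∑ j, inds (b j)) := mul_add _ _ _
  rw [A1, A2]
  rw [sumr] at C'
  linarith [mainC, B, C', C'']
end Key

lemma min_eq_sub_max (x s : ℝ) : min x s = x - max (x - s) 0 := by
  rcases le_total x s with h | h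
  · rw [min_eq_left h, max_eq_right (by linarith)]; ring
  · rw [min_eq_right h, max_eq_left (by linarith)]; ring

lemma concave_sum_le {n : ℕ} (a b c : Fin n → ℝ)
    (ha : ∀ j, 0 ≤ a j) (hb : ∀ j, 0 ≤ b j) (hc : ∀ i, 0 ≤ c i)
    (hsum : ∑ i, c i = ∑ j, a j + ∑ j, b j)
    (hkey : ∀ s : ℝ, 0 ≤ s →
      (∑ j, max (a j - s) 0) + (∑ j, max (b j - s) 0) ≤ ∑ i, max (c i - s) 0)
    (F : ℝ → ℝ) (hF0 : F 0 = 0) (hFconc : ConcaveOn ℝ (Set.Ici 0) F) :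
    ∑ i, F (c i) ≤ ∑ j, F (a j) + ∑ j, F (b j) := by
  classical
  set nodes : Finset ℝ :=
    insert 0 ((Finset.image a Finset.univ ∪ Finset.image b Finset.univ)
      ∪ Finset.image c Finset.univ) with hnodes
  have h0mem : (0:ℝ) ∈ nodes := Finset.mem_insert_self _ _
  have hamem : ∀ j, a j ∈ nodes := fun j =>
    Finset.mem_insert_of_mem (Finset.mem_union_left _
      (Finset.mem_union_left _ (Finset.mem_image_of_mem a (Finset.mem_univ j))))
  have hbmem : ∀ j, b j ∈ nodes := fun j =>
    Finset.mem_insert_of_mem (Finset.mem_union_left _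
      (Finset.mem_union_right _ (Finset.mem_image_of_mem b (Finset.mem_univ j))))
  have hcmem : ∀ i, c i ∈ nodes := fun i =>
    Finset.mem_insert_of_mem (Finset.mem_union_right _
      (Finset.mem_image_of_mem c (Finset.mem_univ i)))
  have hnn : ∀ v ∈ nodes, 0 ≤ v := by
    intro v hv
    rw [hnodes] at hv
    simp only [Finset.mem_insert, Finset.mem_union, Finset.mem_image,
      Finset.mem_univ, true_and] at hv
    rcases hv with rfl | ((⟨j, rfl⟩ | ⟨j, rfl⟩) | ⟨i, rfl⟩)
    · exact le_refl 0
    · exact ha j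
    · exact hb j
    · exact hc i
  set m := nodes.card with hm'
  have hm : 0 < m := Finset.card_pos.mpr ⟨0, h0mem⟩
  set N := m - 1 with hN
  have e := nodes.orderEmbOfFin hm'.symm
  set u : ℕ → ℝ := fun k => nodes.orderEmbOfFin hm'.symm ⟨min k N, by omega⟩ with hu
  have umem : ∀ k, u k ∈ nodes := fun k => Finset.orderEmbOfFin_mem _ _ _
  have unn : ∀ k, 0 ≤ u k := fun k => hnn _ (umem k)
  have umono : ∀ {k l : ℕ}, k ≤ l → u k ≤ u l := by
    intro k l h
    exact (nodes.orderEmbOfFin hm'.symm).monotone (by simp [Fin.le_def]; omega)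
  have ustrict : ∀ k, k + 1 ≤ N → u k < u (k + 1) := by
    intro k h
    exact (nodes.orderEmbOfFin hm'.symm).strictMono (by simp [Fin.lt_def]; omega)
  have u0 : u 0 = 0 := by
    have h1 : u 0 = nodes.min' ⟨0, h0mem⟩ := by
      rw [hu]
      simp only [Nat.min_eq_left (Nat.zero_le N)]
      exact Finset.orderEmbOfFin_zero hm'.symm hm
    rw [h1]
    exact le_antisymm (Finset.min'_le _ _ h0mem) (Finset.le_min' _ _ _ hnn)
  have utop : ∀ v ∈ nodes, v ≤ u N := by
    intro v hv
    have h1 : u N = nodes.max' ⟨0, h0mem⟩ := by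
      rw [hu]
      simp only [Nat.min_self]
      have := Finset.orderEmbOfFin_last hm'.symm hm
      convert this using 2
    rw [h1]
    exact Finset.le_max' _ _ hv
  have uexists : ∀ v ∈ nodes, ∃ K, K ≤ N ∧ u K = v := by
    intro v hv
    have : v ∈ Set.range (nodes.orderEmbOfFin hm'.symm) := by
      rw [Finset.range_orderEmbOfFin]
      exact hv
    obtain ⟨i, hi⟩ := this
    refine ⟨i.1, by omega, ?_⟩
    have hfin : (⟨min i.1 N, by omega⟩ : Fin m) = i := Fin.ext (by simp; omega)
    have h2 : u i.1 = nodes.orderEmbOfFin hm'.symm i := by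
      rw [hu]; exact congrArg _ hfin
    rw [h2]; exact hi
  set d : ℕ → ℝ := fun k => (F (u (k+1)) - F (u k)) / (u (k+1) - u k) with hd
  have dadj : ∀ k, k + 2 ≤ N → d (k+1) ≤ d k := by
    intro k hk
    have h1 : u k < u (k+1) := ustrict k (by omega)
    have h2 : u (k+1) < u (k+2) := ustrict (k+1) (by omega)
    have := hFconc.slope_anti_adjacent (Set.mem_Ici.mpr (unn k))
      (Set.mem_Ici.mpr (unn (k+2))) h1 h2
    exact this
  have dmono : ∀ j k, j ≤ k → k + 1 ≤ N → d k ≤ d j := by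
    intro j k hjk hkN
    induction k with
    | zero => cases Nat.le_zero.mp hjk; exact le_refl _
    | succ t ih =>
      rcases Nat.lt_or_ge j (t+1) with h | h
      · exact le_trans (dadj t (by omega)) (ih (by omega) (by omega))
      · have : j = t + 1 := by omega
        subst this; exact le_refl _
  have ident : ∀ v ∈ nodes, F v = ∑ k ∈ Finset.range N, d k * (min v (u (k+1)) - min v (u k)) := by
    intro v hv
    obtain ⟨K, hKN, rfl⟩ := uexists v hv
    have tele : ∀ k, d k * (min (u K) (u (k+1)) - min (u K) (u k))
        = F (u (min (k+1) K)) - F (u (min k K)) := by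
      intro k
      rcases le_or_gt (k+1) K with h | h
      · have hu1 : u (k+1) ≤ u K := umono h
        have huk : u k ≤ u K := umono (by omega)
        have hlt : u k < u (k+1) := ustrict k (by omega)
        rw [min_eq_right hu1, min_eq_right huk,
          show min (k+1) K = k + 1 by omega, show min k K = k by omega, hd]
        exact div_mul_cancel₀ _ (sub_ne_zero.mpr hlt.ne')
      · have hK : K ≤ k := by omega
        rw [min_eq_left (umono hK), min_eq_left (umono (by omega : K ≤ k + 1)),
          show min (k+1) K = K by omega, show min k K = K by omega]
        simp
    rw [Finset.sum_congr rfl fun k _ => tele k, Finset.sum_range_sub (fun k => F (u (min k K)))]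
    rw [show min N K = K by omega, show min 0 K = 0 by omega, u0, hF0, sub_zero]
  set G : ℝ → ℝ := fun t => (∑ i, min (c i) t) - (∑ j, min (a j) t) - (∑ j, min (b j) t)
    with hG
  have hG0 : G 0 = 0 := by
    rw [hG]
    simp only
    rw [Finset.sum_congr rfl fun i _ => min_eq_right (hc i),
      Finset.sum_congr rfl fun j _ => min_eq_right (ha j),
      Finset.sum_congr rfl fun j _ => min_eq_right (hb j)]
    simp
  have hGtop : G (u N) = 0 := by
    rw [hG]
    simp only
    rw [Finset.sum_congr rfl fun i _ => min_eq_left (utop _ (hcmem i)),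
      Finset.sum_congr rfl fun j _ => min_eq_left (utop _ (hamem j)),
      Finset.sum_congr rfl fun j _ => min_eq_left (utop _ (hbmem j))]
    rw [hsum]; ring
  have hGle : ∀ s : ℝ, 0 ≤ s → G s ≤ 0 := by
    intro s hs
    have h := hkey s hs
    rw [hG]
    simp only
    rw [Finset.sum_congr rfl fun i _ => min_eq_sub_max (c i) s,
      Finset.sum_congr rfl fun j _ => min_eq_sub_max (a j) s,
      Finset.sum_congr rfl fun j _ => min_eq_sub_max (b j) s]
    rw [Finset.sum_sub_distrib, Finset.sum_sub_distrib, Finset.sum_sub_distrib, hsum]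
    linarith
  have key2 : (∑ i, F (c i)) - (∑ j, F (a j)) - (∑ j, F (b j))
      = ∑ k ∈ Finset.range N, d k * (G (u (k+1)) - G (u k)) := by
    have e1 : ∑ i, F (c i) = ∑ k ∈ Finset.range N,
        d k * ((∑ i, min (c i) (u (k+1))) - (∑ i, min (c i) (u k))) := by
      rw [Finset.sum_congr rfl fun i _ => ident (c i) (hcmem i), Finset.sum_comm]
      exact Finset.sum_congr rfl fun k _ => by
        rw [← Finset.mul_sum, Finset.sum_sub_distrib]
    have e2 : ∑ j, F (a j) = ∑ k ∈ Finset.range N,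
        d k * ((∑ j, min (a j) (u (k+1))) - (∑ j, min (a j) (u k))) := by
      rw [Finset.sum_congr rfl fun j _ => ident (a j) (hamem j), Finset.sum_comm]
      exact Finset.sum_congr rfl fun k _ => by
        rw [← Finset.mul_sum, Finset.sum_sub_distrib]
    have e3 : ∑ j, F (b j) = ∑ k ∈ Finset.range N,
        d k * ((∑ j, min (b j) (u (k+1))) - (∑ j, min (b j) (u k))) := by
      rw [Finset.sum_congr rfl fun j _ => ident (b j) (hbmem j), Finset.sum_comm]
      exact Finset.sum_congr rfl fun k _ => by
        rw [← Finset.mul_sum, Finset.sum_sub_distrib]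
    rw [e1, e2, e3, ← Finset.sum_sub_distrib, ← Finset.sum_sub_distrib]
    refine Finset.sum_congr rfl fun k _ => ?_
    rw [hG]
    simp only
    ring
  have hstep : ∀ k ∈ Finset.range N, d k * (G (u (k+1)) - G (u k))
      ≤ (fun k => d (min k (N-1)) * G (u k)) (k+1) - (fun k => d (min k (N-1)) * G (u k)) k := by
    intro k hk
    have hkN : k < N := Finset.mem_range.mp hk
    simp only
    rw [show min k (N-1) = k by omega]
    have hdd : d (min (k+1) (N-1)) ≤ d k := dmono k (min (k+1) (N-1)) (by omega) (by omega)
    have hG1 : G (u (k+1)) ≤ 0 := hGle _ (unn _)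
    nlinarith [hdd, hG1]
  have total : ∑ k ∈ Finset.range N, d k * (G (u (k+1)) - G (u k)) ≤ 0 := by
    calc ∑ k ∈ Finset.range N, d k * (G (u (k+1)) - G (u k))
        ≤ ∑ k ∈ Finset.range N,
          ((fun k => d (min k (N-1)) * G (u k)) (k+1) - (fun k => d (min k (N-1)) * G (u k)) k) :=
          Finset.sum_le_sum hstep
      _ = (fun k => d (min k (N-1)) * G (u k)) N - (fun k => d (min k (N-1)) * G (u k)) 0 :=
          Finset.sum_range_sub (fun k => d (min k (N-1)) * G (u k)) N
      _ = 0 := by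
          simp only
          rw [hGtop, u0, hG0]
          ring
  linarith [key2, total]

lemma herm_trace_eq {n : ℕ} {A : Matrix (Fin n) (Fin n) ℂ} (hA : A.IsHermitian) :
    trace A = ((∑ i, hA.eigenvalues i : ℝ) : ℂ) := by
  have h := fapp_trace hA (fun t => t)
  rw [fapp_id hA] at h
  exact h

/-- Rotfel'd subadditivity: for positive semidefinite `x, y` and continuous increasing
concave `f : ℝ≥0 → ℝ≥0` with `f 0 = 0`, `trace f(x + y) ≤ trace f(x) + trace f(y)`. -/
theorem trace_subadditive {n : ℕ} (x y : Matrix (Fin n) (Fin n) ℂ)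
    (hx : x.PosSemidef) (hy : y.PosSemidef) (f : ℝ≥0 → ℝ≥0)
    (hcont : Continuous f) (hmono : Monotone f) (hconc : ConcaveOn ℝ≥0 Set.univ f)
    (hf0 : f 0 = 0) :
    traceF f (x + y) (hx.1.add hy.1) ≤ traceF f x hx.1 + traceF f y hy.1 := by
  have ha : ∀ j, 0 ≤ hx.1.eigenvalues j := hx.eigenvalues_nonneg
  have hb : ∀ j, 0 ≤ hy.1.eigenvalues j := hy.eigenvalues_nonneg
  have hc : ∀ i, 0 ≤ (hx.1.add hy.1).eigenvalues i := (hx.add hy).eigenvalues_nonneg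
  have hsum : ∑ i, (hx.1.add hy.1).eigenvalues i
      = ∑ j, hx.1.eigenvalues j + ∑ j, hy.1.eigenvalues j := by
    have h1 := herm_trace_eq (hx.1.add hy.1)
    have h2 := herm_trace_eq hx.1
    have h3 := herm_trace_eq hy.1
    have h4 : trace (x + y) = trace x + trace y := trace_add x y
    rw [h1, h2, h3, ← Complex.ofReal_add] at h4
    exact_mod_cast h4
  set F : ℝ → ℝ := fun t => (f t.toNNReal : ℝ) with hF
  have hF0 : F 0 = 0 := by
    rw [hF]
    simp [Real.toNNReal_zero, hf0]
  have hFconc : ConcaveOn ℝ (Set.Ici 0) F := by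
    refine ⟨convex_Ici 0, ?_⟩
    intro p hp q hq α β hα hβ hαβ
    have hp0 : (0:ℝ) ≤ p := hp
    have hq0 : (0:ℝ) ≤ q := hq
    have e1 : (α • p + β • q).toNNReal = α.toNNReal * p.toNNReal + β.toNNReal * q.toNNReal := by
      rw [smul_eq_mul, smul_eq_mul, Real.toNNReal_add (mul_nonneg hα hp0) (mul_nonneg hβ hq0),
        Real.toNNReal_mul hα, Real.toNNReal_mul hβ]
    have e2 : α.toNNReal + β.toNNReal = 1 := by
      rw [← Real.toNNReal_add hα hβ, hαβ, Real.toNNReal_one]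
    have h := hconc.2 (Set.mem_univ p.toNNReal) (Set.mem_univ q.toNNReal)
      (zero_le (a := α.toNNReal)) (zero_le (a := β.toNNReal)) e2
    have h' : (α.toNNReal * f p.toNNReal + β.toNNReal * f q.toNNReal : ℝ≥0)
        ≤ f (α.toNNReal * p.toNNReal + β.toNNReal * q.toNNReal) := by
      simpa [smul_eq_mul] using h
    have hcoe := NNReal.coe_le_coe.mpr h'
    rw [hF]
    simp only [smul_eq_mul]
    rw [show α * p + β * q = α • p + β • q by simp [smul_eq_mul], e1]
    push_cast at hcoe
    rw [Real.coe_toNNReal α hα, Real.coe_toNNReal β hβ] at hcoe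
    convert hcoe using 2 <;> simp [smul_eq_mul]
  have hkey : ∀ s : ℝ, 0 ≤ s →
      (∑ j, max (hx.1.eigenvalues j - s) 0) + (∑ j, max (hy.1.eigenvalues j - s) 0)
        ≤ ∑ i, max ((hx.1.add hy.1).eigenvalues i - s) 0 :=
    fun s hs => key_ineq hx hy hs
  exact concave_sum_le _ _ _ ha hb hc hsum hkey F hF0 hFconc
end

section
/- Let x and y be n×n complex matrices and let p ≥ 2 be a real number. Then 2(‖x‖_p^p + ‖y‖_p^p) ≤ ‖x+y‖_p^p + ‖x−y‖_p^p ≤ 2^{p−1}(‖x‖_p^p + ‖y‖_p^p), where ‖x‖_p^p = trace(|x|^p) is the p-th power of the Schatten p-norm. -/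
open Matrix
open scoped NNReal ComplexOrder

namespace ClarksonAux

open Finset

variable {n : ℕ}


variable {n : ℕ}

/-- quadratic form of a conjugated diagonal matrix -/
lemma quad_conj (W : Matrix (Fin n) (Fin n) ℂ) (e : Fin n → ℝ) (y : Fin n → ℂ) :
    star y ⬝ᵥ ((W * diagonal (Complex.ofReal ∘ e) * Wᴴ) *ᵥ y)
      = ((∑ i, e i * Complex.normSq ((Wᴴ *ᵥ y) i) : ℝ) : ℂ) := by
  rw [← mulVec_mulVec, ← mulVec_mulVec, dotProduct_mulVec,
    show star y ᵥ* W = star (Wᴴ *ᵥ y) by rw [star_mulVec, conjTranspose_conjTranspose]]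
  simp only [dotProduct, mulVec_diagonal, Pi.star_apply, Function.comp_apply]
  push_cast
  refine Finset.sum_congr rfl fun i _ => ?_
  rw [Complex.star_def, mul_comm, mul_assoc, Complex.mul_conj]

lemma quad_diag (e : Fin n → ℝ) (y : Fin n → ℂ) :
    star y ⬝ᵥ ((diagonal (Complex.ofReal ∘ e) : Matrix (Fin n) (Fin n) ℂ) *ᵥ y)
      = ((∑ j, e j * Complex.normSq (y j) : ℝ) : ℂ) := by
  have h := quad_conj (1 : Matrix (Fin n) (Fin n) ℂ) e y
  simpa using h

lemma diag_conj (W : Matrix (Fin n) (Fin n) ℂ) (e : Fin n → ℝ) (j : Fin n) :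
    (W * diagonal (Complex.ofReal ∘ e) * Wᴴ) j j
      = ((∑ i, e i * Complex.normSq (W j i) : ℝ) : ℂ) := by
  have h := quad_conj W e (Pi.single j 1)
  have hy : ∀ M : Matrix (Fin n) (Fin n) ℂ,
      star (Pi.single j 1 : Fin n → ℂ) ⬝ᵥ (M *ᵥ Pi.single j 1) = M j j := by
    intro M
    simp [mulVec_single, dotProduct, Pi.single_apply, apply_ite]
  rw [hy] at h
  rw [h]
  norm_cast
  refine Finset.sum_congr rfl fun i _ => ?_
  congr 1
  simp [mulVec_single, conjTranspose_apply, Complex.normSq_conj]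

lemma col_sum {W : Matrix (Fin n) (Fin n) ℂ} (hW : W ∈ Matrix.unitaryGroup (Fin n) ℂ)
    (i : Fin n) : ∑ j, Complex.normSq (W j i) = 1 := by
  have h := Matrix.mem_unitaryGroup_iff'.mp hW
  have h2 := congrFun (congrFun h i) i
  simp only [Matrix.mul_apply, Matrix.one_apply_eq] at h2
  have key : ((∑ j, Complex.normSq (W j i) : ℝ) : ℂ) = 1 := by
    rw [← h2]
    push_cast
    refine Finset.sum_congr rfl fun j _ => ?_
    rw [Matrix.star_apply, Complex.star_def, mul_comm, Complex.mul_conj]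
  exact_mod_cast key

lemma row_sum {W : Matrix (Fin n) (Fin n) ℂ} (hW : W ∈ Matrix.unitaryGroup (Fin n) ℂ)
    (j : Fin n) : ∑ i, Complex.normSq (W j i) = 1 := by
  have h := Matrix.mem_unitaryGroup_iff.mp hW
  have h2 := congrFun (congrFun h j) j
  simp only [Matrix.mul_apply, Matrix.one_apply_eq] at h2
  have key : ((∑ i, Complex.normSq (W j i) : ℝ) : ℂ) = 1 := by
    rw [← h2]
    push_cast
    refine Finset.sum_congr rfl fun i _ => ?_
    rw [Matrix.star_apply, Complex.star_def, Complex.mul_conj]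
  exact_mod_cast key



variable {n : ℕ}

lemma star_mul_self_mul_eq_diagonal' {S : Matrix (Fin n) (Fin n) ℂ} (hS : S.IsHermitian) :
    star (hS.eigenvectorUnitary : Matrix (Fin n) (Fin n) ℂ) * S
        * (hS.eigenvectorUnitary : Matrix (Fin n) (Fin n) ℂ)
      = diagonal (Complex.ofReal ∘ hS.eigenvalues) := by
  have h := hS.conjStarAlgAut_star_eigenvectorUnitary
  rw [Unitary.conjStarAlgAut_star_apply] at h
  exact h

lemma jensen_rpow (w z : Fin n → ℝ) (hw : ∀ i, 0 ≤ w i) (hw1 : ∑ i, w i = 1)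
    (hz : ∀ i, 0 ≤ z i) {r : ℝ} (hr : 1 ≤ r) :
    (∑ i, w i * z i) ^ r ≤ ∑ i, w i * z i ^ r :=
  Real.rpow_arith_mean_le_arith_mean_rpow univ w z (fun i _ => hw i) hw1 (fun i _ => hz i) hr

lemma sum_rpow_le (T : Fin n → Fin n → ℝ) (π : Fin n → ℝ) (hT : ∀ j i, 0 ≤ T j i)
    (hrow : ∀ j, ∑ i, T j i = 1) (hcol : ∀ i, ∑ j, T j i = 1)
    (hπ : ∀ i, 0 ≤ π i) {r : ℝ} (hr : 1 ≤ r) :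
    ∑ j, (∑ i, T j i * π i) ^ r ≤ ∑ i, π i ^ r := by
  calc ∑ j, (∑ i, T j i * π i) ^ r
      ≤ ∑ j, ∑ i, T j i * π i ^ r :=
        Finset.sum_le_sum fun j _ => jensen_rpow _ _ (hT j) (hrow j) hπ hr
    _ = ∑ i, (∑ j, T j i) * π i ^ r := by
        rw [Finset.sum_comm]
        exact Finset.sum_congr rfl fun i _ => (Finset.sum_mul ..).symm
    _ = ∑ i, π i ^ r := by
        refine Finset.sum_congr rfl fun i _ => ?_
        rw [hcol i, one_mul]

lemma rpow_split {a : ℝ} (ha : 0 ≤ a) {r : ℝ} (hr : 1 ≤ r) :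
    a ^ r = a ^ (r - 1) * a := by
  rcases eq_or_lt_of_le ha with h0 | h0
  · rw [← h0, Real.zero_rpow (by linarith), mul_zero]
  · have h := Real.rpow_add h0 (r - 1) 1
    rw [sub_add_cancel, Real.rpow_one] at h
    exact h

lemma add_rpow_le {a b : ℝ} (ha : 0 ≤ a) (hb : 0 ≤ b) {r : ℝ} (hr : 1 ≤ r) :
    (a + b) ^ r ≤ 2 ^ (r - 1) * (a ^ r + b ^ r) := by
  have hconv := (convexOn_rpow hr).2 (Set.mem_Ici.mpr ha) (Set.mem_Ici.mpr hb)
    (by norm_num : (0:ℝ) ≤ 1/2) (by norm_num : (0:ℝ) ≤ 1/2) (by norm_num)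
  simp only [smul_eq_mul] at hconv
  have h2 : (2:ℝ) ^ r = 2 * 2 ^ (r - 1) := by
    have h := Real.rpow_add (by norm_num : (0:ℝ) < 2) 1 (r - 1)
    rw [add_sub_cancel, Real.rpow_one] at h
    exact h
  have key : (a + b) ^ r = 2 ^ r * (1/2 * a + 1/2 * b) ^ r := by
    rw [← Real.mul_rpow (by norm_num) (by linarith)]
    ring_nf
  rw [key, h2]
  calc 2 * 2 ^ (r-1) * (1/2 * a + 1/2 * b) ^ r
      ≤ 2 * 2 ^ (r-1) * (1/2 * a ^ r + 1/2 * b ^ r) := by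
        have h2p : (0:ℝ) < 2 ^ (r-1) := Real.rpow_pos_of_pos (by norm_num) _
        nlinarith [hconv]
    _ = 2 ^ (r-1) * (a ^ r + b ^ r) := by ring



variable {n : ℕ}

lemma jensen_rpow' (w z : Fin n → ℝ) (hw : ∀ i, 0 ≤ w i) (hw1 : ∑ i, w i = 1)
    (hz : ∀ i, 0 ≤ z i) {r : ℝ} (hr : 1 ≤ r) :
    (∑ i, w i * z i) ^ r ≤ ∑ i, w i * z i ^ r :=
  Real.rpow_arith_mean_le_arith_mean_rpow univ w z (fun i _ => hw i) hw1 (fun i _ => hz i) hr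

lemma scalar_core (σ w : Fin n → ℝ) (hσ : ∀ j, 0 ≤ σ j) (hw : ∀ j, 0 ≤ w j)
    (hw1 : ∑ j, w j = 1) {π s : ℝ} (hπ : 0 ≤ π) (hs : 0 ≤ s)
    (C1 : ∀ j, π * w j ≤ σ j)
    (C2 : π * (∑ j, if 0 < σ j then w j / σ j else 0) ^ 2
            ≤ ∑ j, if 0 < σ j then w j / σ j else 0)
    (C3 : π ≤ ∑ j, w j * σ j) :
    π ^ s ≤ ∑ j, w j * σ j ^ s := by
  rcases eq_or_lt_of_le hs with hs0 | hspos
  · simp only [← hs0, Real.rpow_zero, mul_one]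
    rw [hw1]
  rcases eq_or_lt_of_le hπ with hπ0 | hπ0
  · rw [← hπ0, Real.zero_rpow hspos.ne']
    exact Finset.sum_nonneg fun j _ => mul_nonneg (hw j) (Real.rpow_nonneg (hσ j) s)
  rcases le_or_gt 1 s with hs1 | hs1
  · calc π ^ s ≤ (∑ j, w j * σ j) ^ s := Real.rpow_le_rpow hπ C3 hs
      _ ≤ ∑ j, w j * σ j ^ s := jensen_rpow' w σ hw hw1 hσ hs1
  -- concave case : 0 < s < 1, 0 < π
  have hsne : s ≠ 0 := ne_of_gt hspos
  set h : ℝ := ∑ j, if 0 < σ j then w j / σ j else 0 with hh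
  have hwz : ∀ j, ¬ 0 < σ j → w j = 0 := by
    intro j hj
    have hσ0 : σ j = 0 := le_antisymm (not_lt.mp hj) (hσ j)
    have := C1 j
    rw [hσ0] at this
    nlinarith [hw j]
  have hw1' : ∑ j, (if 0 < σ j then w j else 0) = 1 := by
    rw [← hw1]
    refine Finset.sum_congr rfl fun j _ => ?_
    split
    · rfl
    · rw [hwz j ‹_›]
  have hhnn : 0 ≤ h := Finset.sum_nonneg fun j _ => by
    split
    · exact div_nonneg (hw j) (hσ j)
    · exact le_rfl
  have hhpos : 0 < h := by
    rcases hhnn.lt_or_eq with hlt | heq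
    · exact hlt
    · exfalso
      have hz' : ∀ j ∈ univ, (if 0 < σ j then w j / σ j else 0) = 0 :=
        (Finset.sum_eq_zero_iff_of_nonneg (fun j _ => by
          split
          · exact div_nonneg (hw j) (hσ j)
          · exact le_rfl)).mp heq.symm
      have hall : ∑ j, w j = 0 := Finset.sum_eq_zero fun j _ => by
        by_cases hc : 0 < σ j
        · have := hz' j (mem_univ j)
          rw [if_pos hc] at this
          exact (div_eq_zero_iff.mp this).resolve_right (ne_of_gt hc)
        · exact hwz j hc
      rw [hw1] at hall
      exact one_ne_zero hall
  have hπh : π * h ≤ 1 := by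
    have h2 : (π * h) * h ≤ 1 * h := by nlinarith [C2]
    exact le_of_mul_le_mul_right h2 hhpos
  set A : ℝ := ∑ j, if 0 < σ j then w j * σ j ^ (-s) else 0 with hA
  set B : ℝ := ∑ j, if 0 < σ j then w j * σ j ^ s else 0 with hB
  have hAnn : 0 ≤ A := Finset.sum_nonneg fun j _ => by
    split
    · exact mul_nonneg (hw j) (Real.rpow_nonneg (hσ j) _)
    · exact le_rfl
  have hBnn : 0 ≤ B := Finset.sum_nonneg fun j _ => by
    split
    · exact mul_nonneg (hw j) (Real.rpow_nonneg (hσ j) _)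
    · exact le_rfl
  have hCS : 1 ≤ A * B := by
    have cs := Finset.sum_mul_sq_le_sq_mul_sq univ
      (fun j => if 0 < σ j then Real.sqrt (w j) * σ j ^ (-s/2) else 0)
      (fun j => if 0 < σ j then Real.sqrt (w j) * σ j ^ (s/2) else 0)
    have e1 : ∑ j, ((if 0 < σ j then Real.sqrt (w j) * σ j ^ (-s/2) else 0) *
        (if 0 < σ j then Real.sqrt (w j) * σ j ^ (s/2) else 0)) = 1 := by
      rw [← hw1']
      refine Finset.sum_congr rfl fun j _ => ?_
      by_cases hc : 0 < σ j
      · rw [if_pos hc, if_pos hc, if_pos hc, mul_mul_mul_comm,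
          Real.mul_self_sqrt (hw j), ← Real.rpow_add hc, neg_div, neg_add_cancel,
          Real.rpow_zero, mul_one]
      · rw [if_neg hc, if_neg hc, if_neg hc, zero_mul]
    have e2 : ∑ j, (if 0 < σ j then Real.sqrt (w j) * σ j ^ (-s/2) else 0) ^ 2 = A := by
      refine Finset.sum_congr rfl fun j _ => ?_
      by_cases hc : 0 < σ j
      · rw [if_pos hc, if_pos hc, mul_pow, Real.sq_sqrt (hw j), sq, ← Real.rpow_add hc,
          show -s/2 + -s/2 = -s by ring]
      · rw [if_neg hc, if_neg hc]
        norm_num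
    have e3 : ∑ j, (if 0 < σ j then Real.sqrt (w j) * σ j ^ (s/2) else 0) ^ 2 = B := by
      refine Finset.sum_congr rfl fun j _ => ?_
      by_cases hc : 0 < σ j
      · rw [if_pos hc, if_pos hc, mul_pow, Real.sq_sqrt (hw j), sq, ← Real.rpow_add hc,
          show s/2 + s/2 = s by ring]
      · rw [if_neg hc, if_neg hc]
        norm_num
    rw [e1, e2, e3, one_pow] at cs
    exact cs
  have hjen : A ^ (1/s) ≤ h := by
    have hj := jensen_rpow' (fun j => if 0 < σ j then w j else 0)
        (fun j => if 0 < σ j then σ j ^ (-s) else 0)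
        (fun j => by split; exacts [hw j, le_rfl]) hw1'
        (fun j => by split; exacts [Real.rpow_nonneg (hσ j) _, le_rfl])
        (r := 1/s) ((le_div_iff₀ hspos).mpr (by linarith))
    have eL : ∑ j, (if 0 < σ j then w j else 0) * (if 0 < σ j then σ j ^ (-s) else 0) = A := by
      refine Finset.sum_congr rfl fun j _ => ?_
      by_cases hc : 0 < σ j
      · rw [if_pos hc, if_pos hc, if_pos hc]
      · rw [if_neg hc, if_neg hc, if_neg hc, zero_mul]
    have eR : ∑ j, (if 0 < σ j then w j else 0) * (if 0 < σ j then σ j ^ (-s) else 0) ^ (1/s)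
        = h := by
      refine Finset.sum_congr rfl fun j _ => ?_
      by_cases hc : 0 < σ j
      · rw [if_pos hc, if_pos hc, if_pos hc, ← Real.rpow_mul (hσ j),
          show -s * (1/s) = -1 by field_simp, Real.rpow_neg (hσ j), Real.rpow_one,
          div_eq_mul_inv]
      · rw [if_neg hc, if_neg hc, if_neg hc, zero_mul]
    rw [eL, eR] at hj
    exact hj
  have hAh : A ≤ h ^ s := by
    have hr2 := Real.rpow_le_rpow (Real.rpow_nonneg hAnn _) hjen hs
    rwa [← Real.rpow_mul hAnn, one_div_mul_cancel hsne, Real.rpow_one] at hr2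
  have hhπ : h ≤ π⁻¹ := by
    rw [← one_div]
    exact (le_div_iff₀ hπ0).mpr (by linarith [hπh])
  have hinv : h ^ s ≤ (π ^ s)⁻¹ := by
    rw [← Real.inv_rpow hπ]
    exact Real.rpow_le_rpow hhnn hhπ hs
  have hπs : 0 < π ^ s := Real.rpow_pos_of_pos hπ0 s
  have hfin : π ^ s ≤ B := by
    have : 1 ≤ (π ^ s)⁻¹ * B :=
      le_trans hCS (mul_le_mul_of_nonneg_right (le_trans hAh hinv) hBnn)
    calc π ^ s = π ^ s * 1 := (mul_one _).symm
      _ ≤ π ^ s * ((π ^ s)⁻¹ * B) := by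
          exact mul_le_mul_of_nonneg_left this (le_of_lt hπs)
      _ = B := by field_simp
  refine hfin.trans (Finset.sum_le_sum fun j _ => ?_)
  split
  · exact le_rfl
  · exact mul_nonneg (hw j) (Real.rpow_nonneg (hσ j) _)

lemma conj_decomp (U V D : Matrix (Fin n) (Fin n) ℂ) :
    star U * (V * D * Vᴴ) * U = (star U * V) * D * ((star U * V)ᴴ) := by
  simp only [Matrix.star_eq_conjTranspose, conjTranspose_mul, conjTranspose_conjTranspose]
  noncomm_ring

lemma key_gen {S X : Matrix (Fin n) (Fin n) ℂ} (hX : X.PosSemidef) (hS : S.IsHermitian)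
    (hD : (S - X).PosSemidef) {s : ℝ} (hs : 0 ≤ s) (i : Fin n) :
    hX.1.eigenvalues i ^ s
      ≤ ∑ j, Complex.normSq ((star (hS.eigenvectorUnitary : Matrix (Fin n) (Fin n) ℂ)
          * (hX.1.eigenvectorUnitary : Matrix (Fin n) (Fin n) ℂ)) j i) * hS.eigenvalues j ^ s := by
  classical
  set σ := hS.eigenvalues with hσdef
  set π := hX.1.eigenvalues with hπdef
  set δ := hD.1.eigenvalues with hδdef
  set U : Matrix (Fin n) (Fin n) ℂ := (hS.eigenvectorUnitary : Matrix (Fin n) (Fin n) ℂ) with hUdef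
  set V : Matrix (Fin n) (Fin n) ℂ := (hX.1.eigenvectorUnitary : Matrix (Fin n) (Fin n) ℂ) with hVdef
  set V₂ : Matrix (Fin n) (Fin n) ℂ := (hD.1.eigenvectorUnitary : Matrix (Fin n) (Fin n) ℂ) with hV2def
  set W := star U * V with hWdef
  set W₂ := star U * V₂ with hW2def
  have hWmem : W ∈ Matrix.unitaryGroup (Fin n) ℂ :=
    mul_mem (Unitary.star_mem hS.eigenvectorUnitary.2) hX.1.eigenvectorUnitary.2
  have hSpsd : S.PosSemidef := by
    have h := hX.add hD
    rwa [add_sub_cancel] at h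
  have σnn : ∀ j, 0 ≤ σ j := fun j => hSpsd.eigenvalues_nonneg j
  have specX : X = V * diagonal (Complex.ofReal ∘ π) * Vᴴ := by
    rw [← Matrix.star_eq_conjTranspose]
    exact hX.1.spectral_theorem
  have specD : S - X = V₂ * diagonal (Complex.ofReal ∘ δ) * V₂ᴴ := by
    rw [← Matrix.star_eq_conjTranspose]
    exact hD.1.spectral_theorem
  have hdiagS : star U * S * U = diagonal (Complex.ofReal ∘ σ) :=
    star_mul_self_mul_eq_diagonal' hS
  have hXdec : star U * X * U = W * diagonal (Complex.ofReal ∘ π) * Wᴴ := by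
    conv_lhs => rw [specX]
    exact conj_decomp U V _
  have hDdec : star U * (S - X) * U = W₂ * diagonal (Complex.ofReal ∘ δ) * W₂ᴴ := by
    conv_lhs => rw [specD]
    exact conj_decomp U V₂ _
  have star_ineq : ∀ y : Fin n → ℂ,
      π i * Complex.normSq ((Wᴴ *ᵥ y) i) ≤ ∑ j, σ j * Complex.normSq (y j) := by
    intro y
    have c1 := quad_diag σ y
    rw [← hdiagS, show star U * S * U = star U * X * U + star U * (S - X) * U by
        rw [← add_mul, ← mul_add, add_sub_cancel], hXdec, hDdec,
      add_mulVec, dotProduct_add, quad_conj, quad_conj] at c1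
    have e' : (∑ j, σ j * Complex.normSq (y j))
        = (∑ i', π i' * Complex.normSq ((Wᴴ *ᵥ y) i'))
          + (∑ k, δ k * Complex.normSq ((W₂ᴴ *ᵥ y) k)) := by exact_mod_cast c1.symm
    rw [e']
    have h1 : π i * Complex.normSq ((Wᴴ *ᵥ y) i)
        ≤ ∑ i', π i' * Complex.normSq ((Wᴴ *ᵥ y) i') :=
      Finset.single_le_sum
        (fun i' _ => mul_nonneg (hX.eigenvalues_nonneg i') (Complex.normSq_nonneg _))
        (Finset.mem_univ i)
    have h2 : 0 ≤ ∑ k, δ k * Complex.normSq ((W₂ᴴ *ᵥ y) k) :=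
      Finset.sum_nonneg fun k _ =>
        mul_nonneg (hD.eigenvalues_nonneg k) (Complex.normSq_nonneg _)
    linarith
  refine scalar_core σ (fun j => Complex.normSq (W j i)) σnn
    (fun j => Complex.normSq_nonneg _) (col_sum hWmem i) (hX.eigenvalues_nonneg i) hs ?_ ?_ ?_
  · -- C1
    intro j
    have ht := star_ineq (Pi.single j 1)
    have hL : (Wᴴ *ᵥ Pi.single j 1) i = star (W j i) := by
      simp [mulVec_single, conjTranspose_apply]
    have hR : ∑ j', σ j' * Complex.normSq ((Pi.single j 1 : Fin n → ℂ) j') = σ j := by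
      rw [Finset.sum_eq_single j]
      · simp
      · intro b _ hb
        simp [Pi.single_eq_of_ne hb]
      · intro hj
        exact absurd (Finset.mem_univ j) hj
    rw [hL, hR] at ht
    rwa [Complex.star_def, Complex.normSq_conj] at ht
  · -- C2
    have ht := star_ineq (fun j => if 0 < σ j then W j i * (↑(σ j))⁻¹ else 0)
    have hL : (Wᴴ *ᵥ fun j => if 0 < σ j then W j i * (↑(σ j))⁻¹ else 0) i
        = ((∑ j, if 0 < σ j then Complex.normSq (W j i) / σ j else 0 : ℝ) : ℂ) := by
      simp only [mulVec, dotProduct, conjTranspose_apply]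
      rw [Complex.ofReal_sum]
      refine Finset.sum_congr rfl fun j _ => ?_
      by_cases hc : 0 < σ j
      · rw [if_pos hc, if_pos hc, Complex.star_def, ← mul_assoc,
          mul_comm ((starRingEnd ℂ) (W j i)), Complex.mul_conj,
          div_eq_mul_inv, Complex.ofReal_mul, Complex.ofReal_inv]
      · rw [if_neg hc, if_neg hc, mul_zero, Complex.ofReal_zero]
    have hR : ∑ j, σ j * Complex.normSq (if 0 < σ j then W j i * (↑(σ j) : ℂ)⁻¹ else 0)
        = ∑ j, if 0 < σ j then Complex.normSq (W j i) / σ j else 0 := by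
      refine Finset.sum_congr rfl fun j _ => ?_
      by_cases hc : 0 < σ j
      · rw [if_pos hc, if_pos hc, Complex.normSq_mul, Complex.normSq_inv,
          Complex.normSq_ofReal]
        field_simp
      · rw [if_neg hc, if_neg hc, Complex.normSq_zero, mul_zero]
    rw [hL, hR, Complex.normSq_ofReal] at ht
    calc π i * (∑ j, if 0 < σ j then Complex.normSq (W j i) / σ j else 0) ^ 2
        = π i * ((∑ j, if 0 < σ j then Complex.normSq (W j i) / σ j else 0) *
            (∑ j, if 0 < σ j then Complex.normSq (W j i) / σ j else 0)) := by ring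
      _ ≤ ∑ j, if 0 < σ j then Complex.normSq (W j i) / σ j else 0 := ht
  · -- C3
    have ht := star_ineq (fun j => W j i)
    have hL : (Wᴴ *ᵥ fun j => W j i) i = ((∑ j, Complex.normSq (W j i) : ℝ) : ℂ) := by
      simp only [mulVec, dotProduct, conjTranspose_apply]
      rw [Complex.ofReal_sum]
      refine Finset.sum_congr rfl fun j _ => ?_
      rw [Complex.star_def, mul_comm, Complex.mul_conj]
    rw [hL, col_sum hWmem i] at ht
    simp only [Complex.ofReal_one, Complex.normSq_one, mul_one] at ht
    calc π i ≤ ∑ j, σ j * Complex.normSq (W j i) := ht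
      _ = ∑ j, Complex.normSq (W j i) * σ j := by
        exact Finset.sum_congr rfl fun j _ => mul_comm _ _

lemma main_config {P Q : Matrix (Fin n) (Fin n) ℂ} (hP : P.PosSemidef) (hQ : Q.PosSemidef)
    {r : ℝ} (hr : 1 ≤ r) (hS : (P + Q).IsHermitian) :
    ((∑ i, hP.1.eigenvalues i ^ r) + (∑ i, hQ.1.eigenvalues i ^ r)
        ≤ ∑ j, hS.eigenvalues j ^ r)
    ∧ (∑ j, hS.eigenvalues j ^ r
        ≤ 2 ^ (r - 1) * ((∑ i, hP.1.eigenvalues i ^ r) + (∑ i, hQ.1.eigenvalues i ^ r))) := by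
  classical
  set σ := hS.eigenvalues with hσdef
  set π := hP.1.eigenvalues with hπdef
  set ρ := hQ.1.eigenvalues with hρdef
  set U : Matrix (Fin n) (Fin n) ℂ := (hS.eigenvectorUnitary : Matrix (Fin n) (Fin n) ℂ)
    with hUdef
  set V : Matrix (Fin n) (Fin n) ℂ := (hP.1.eigenvectorUnitary : Matrix (Fin n) (Fin n) ℂ)
    with hVdef
  set V' : Matrix (Fin n) (Fin n) ℂ := (hQ.1.eigenvectorUnitary : Matrix (Fin n) (Fin n) ℂ)
    with hV'def
  set W := star U * V with hWdef
  set W' := star U * V' with hW'def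
  have hWmem : W ∈ Matrix.unitaryGroup (Fin n) ℂ :=
    mul_mem (Unitary.star_mem hS.eigenvectorUnitary.2) hP.1.eigenvectorUnitary.2
  have hW'mem : W' ∈ Matrix.unitaryGroup (Fin n) ℂ :=
    mul_mem (Unitary.star_mem hS.eigenvectorUnitary.2) hQ.1.eigenvectorUnitary.2
  have hSpsd : (P + Q).PosSemidef := hP.add hQ
  have σnn : ∀ j, 0 ≤ σ j := fun j => hSpsd.eigenvalues_nonneg j
  have πnn : ∀ i, 0 ≤ π i := fun i => hP.eigenvalues_nonneg i
  have ρnn : ∀ k, 0 ≤ ρ k := fun k => hQ.eigenvalues_nonneg k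
  have specP : P = V * diagonal (Complex.ofReal ∘ π) * Vᴴ := by
    rw [← Matrix.star_eq_conjTranspose]
    exact hP.1.spectral_theorem
  have specQ : Q = V' * diagonal (Complex.ofReal ∘ ρ) * V'ᴴ := by
    rw [← Matrix.star_eq_conjTranspose]
    exact hQ.1.spectral_theorem
  have hdiagS : star U * (P + Q) * U = diagonal (Complex.ofReal ∘ σ) :=
    star_mul_self_mul_eq_diagonal' hS
  have hPdec : star U * P * U = W * diagonal (Complex.ofReal ∘ π) * Wᴴ := by
    conv_lhs => rw [specP]
    exact conj_decomp U V _
  have hQdec : star U * Q * U = W' * diagonal (Complex.ofReal ∘ ρ) * W'ᴴ := by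
    conv_lhs => rw [specQ]
    exact conj_decomp U V' _
  have F1 : ∀ j, σ j = (∑ i, π i * Complex.normSq (W j i))
      + (∑ k, ρ k * Complex.normSq (W' j k)) := by
    intro j
    have e : (diagonal (Complex.ofReal ∘ σ) : Matrix (Fin n) (Fin n) ℂ) j j
        = (W * diagonal (Complex.ofReal ∘ π) * Wᴴ) j j
          + (W' * diagonal (Complex.ofReal ∘ ρ) * W'ᴴ) j j := by
      rw [← hPdec, ← hQdec, ← hdiagS,
        show star U * (P + Q) * U = star U * P * U + star U * Q * U by
          rw [← add_mul, ← mul_add, mul_add, add_mul]]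
      simp [Matrix.add_apply]
    rw [diag_conj, diag_conj, Matrix.diagonal_apply_eq] at e
    simp only [Function.comp_apply] at e
    exact_mod_cast e
  have keyP : ∀ i, π i ^ (r - 1) ≤ ∑ j, Complex.normSq (W j i) * σ j ^ (r - 1) := by
    intro i
    exact key_gen hP hS (by rw [add_sub_cancel_left]; exact hQ) (by linarith) i
  have keyQ : ∀ k, ρ k ^ (r - 1) ≤ ∑ j, Complex.normSq (W' j k) * σ j ^ (r - 1) := by
    intro k
    exact key_gen hQ hS (by rw [add_sub_cancel_right]; exact hP) (by linarith) k
  constructor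
  · -- G1 : superadditivity
    have calc1 : ∑ j, σ j ^ r
        = (∑ i, π i * ∑ j, Complex.normSq (W j i) * σ j ^ (r - 1))
          + (∑ k, ρ k * ∑ j, Complex.normSq (W' j k) * σ j ^ (r - 1)) := by
      have e1 : ∀ j, σ j ^ r
          = (∑ i, π i * Complex.normSq (W j i) * σ j ^ (r - 1))
            + (∑ k, ρ k * Complex.normSq (W' j k) * σ j ^ (r - 1)) := by
        intro j
        calc σ j ^ r = σ j ^ (r - 1) * σ j := rpow_split (σnn j) hr
          _ = σ j ^ (r - 1) * ((∑ i, π i * Complex.normSq (W j i))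
              + (∑ k, ρ k * Complex.normSq (W' j k))) := by rw [← F1 j]
          _ = (∑ i, π i * Complex.normSq (W j i) * σ j ^ (r - 1))
              + (∑ k, ρ k * Complex.normSq (W' j k) * σ j ^ (r - 1)) := by
            rw [mul_add, Finset.mul_sum, Finset.mul_sum]
            congr 1 <;> exact Finset.sum_congr rfl fun _ _ => by ring
      rw [Finset.sum_congr rfl fun j _ => e1 j, Finset.sum_add_distrib]
      congr 1
      · rw [Finset.sum_comm]
        refine Finset.sum_congr rfl fun i _ => ?_
        rw [Finset.mul_sum]
        refine Finset.sum_congr rfl fun j _ => ?_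
        ring
      · rw [Finset.sum_comm]
        refine Finset.sum_congr rfl fun k _ => ?_
        rw [Finset.mul_sum]
        refine Finset.sum_congr rfl fun j _ => ?_
        ring
    have hπterm : ∀ i, π i ^ r ≤ π i * ∑ j, Complex.normSq (W j i) * σ j ^ (r - 1) := by
      intro i
      calc π i ^ r = π i * π i ^ (r - 1) := by
            rw [rpow_split (πnn i) hr]; ring
        _ ≤ π i * ∑ j, Complex.normSq (W j i) * σ j ^ (r - 1) :=
            mul_le_mul_of_nonneg_left (keyP i) (πnn i)
    have hρterm : ∀ k, ρ k ^ r ≤ ρ k * ∑ j, Complex.normSq (W' j k) * σ j ^ (r - 1) := by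
      intro k
      calc ρ k ^ r = ρ k * ρ k ^ (r - 1) := by
            rw [rpow_split (ρnn k) hr]; ring
        _ ≤ ρ k * ∑ j, Complex.normSq (W' j k) * σ j ^ (r - 1) :=
            mul_le_mul_of_nonneg_left (keyQ k) (ρnn k)
    rw [calc1]
    exact add_le_add (Finset.sum_le_sum fun i _ => hπterm i)
      (Finset.sum_le_sum fun k _ => hρterm k)
  · -- G2 : convexity bound
    have hpnn : ∀ j, 0 ≤ ∑ i, π i * Complex.normSq (W j i) :=
      fun j => Finset.sum_nonneg fun i _ => mul_nonneg (πnn i) (Complex.normSq_nonneg _)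
    have hqnn : ∀ j, 0 ≤ ∑ k, ρ k * Complex.normSq (W' j k) :=
      fun j => Finset.sum_nonneg fun k _ => mul_nonneg (ρnn k) (Complex.normSq_nonneg _)
    have step1 : ∑ j, σ j ^ r
        ≤ 2 ^ (r - 1) * ((∑ j, (∑ i, π i * Complex.normSq (W j i)) ^ r)
            + (∑ j, (∑ k, ρ k * Complex.normSq (W' j k)) ^ r)) := by
      rw [mul_add, Finset.mul_sum, Finset.mul_sum, ← Finset.sum_add_distrib]
      refine Finset.sum_le_sum fun j _ => ?_
      rw [F1 j, ← mul_add]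
      exact add_rpow_le (hpnn j) (hqnn j) hr
    have step2 : ∑ j, (∑ i, π i * Complex.normSq (W j i)) ^ r ≤ ∑ i, π i ^ r := by
      have := sum_rpow_le (fun j i => Complex.normSq (W j i)) π
        (fun j i => Complex.normSq_nonneg _) (row_sum hWmem) (col_sum hWmem) πnn hr
      calc ∑ j, (∑ i, π i * Complex.normSq (W j i)) ^ r
          = ∑ j, (∑ i, Complex.normSq (W j i) * π i) ^ r := by
            refine Finset.sum_congr rfl fun j _ => ?_
            congr 1
            exact Finset.sum_congr rfl fun i _ => mul_comm _ _
        _ ≤ ∑ i, π i ^ r := this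
    have step3 : ∑ j, (∑ k, ρ k * Complex.normSq (W' j k)) ^ r ≤ ∑ k, ρ k ^ r := by
      have := sum_rpow_le (fun j k => Complex.normSq (W' j k)) ρ
        (fun j k => Complex.normSq_nonneg _) (row_sum hW'mem) (col_sum hW'mem) ρnn hr
      calc ∑ j, (∑ k, ρ k * Complex.normSq (W' j k)) ^ r
          = ∑ j, (∑ k, Complex.normSq (W' j k) * ρ k) ^ r := by
            refine Finset.sum_congr rfl fun j _ => ?_
            congr 1
            exact Finset.sum_congr rfl fun k _ => mul_comm _ _
        _ ≤ ∑ k, ρ k ^ r := this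
    refine step1.trans ?_
    have h2nn : (0:ℝ) ≤ 2 ^ (r - 1) := (Real.rpow_pos_of_pos (by norm_num) _).le
    exact mul_le_mul_of_nonneg_left (add_le_add step2 step3) h2nn

lemma sum_rpow_eigen_eq {S : Matrix (Fin n) (Fin n) ℂ} (hS : S.IsHermitian)
    {U : Matrix (Fin n) (Fin n) ℂ} (hU : U ∈ Matrix.unitaryGroup (Fin n) ℂ)
    (d : Fin n → ℝ) (hd : ∀ i, 0 ≤ d i)
    (hSd : S = U * diagonal (Complex.ofReal ∘ d) * Uᴴ) {r : ℝ} (hr : 1 ≤ r) :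
    ∑ j, hS.eigenvalues j ^ r = ∑ i, d i ^ r := by
  classical
  set σ := hS.eigenvalues with hσdef
  set U' : Matrix (Fin n) (Fin n) ℂ := (hS.eigenvectorUnitary : Matrix (Fin n) (Fin n) ℂ)
    with hU'def
  set W := star U' * U with hWdef
  set W₂ := star U * U' with hW2def
  have hWmem : W ∈ Matrix.unitaryGroup (Fin n) ℂ :=
    mul_mem (Unitary.star_mem hS.eigenvectorUnitary.2) hU
  have hW2mem : W₂ ∈ Matrix.unitaryGroup (Fin n) ℂ :=
    mul_mem (Unitary.star_mem hU) hS.eigenvectorUnitary.2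
  have hSpsd : S.PosSemidef := by
    refine Matrix.posSemidef_iff_dotProduct_mulVec.mpr ⟨hS, fun x => ?_⟩
    rw [hSd, quad_conj U d x]
    exact Complex.zero_le_real.2 (Finset.sum_nonneg fun i _ =>
      mul_nonneg (hd i) (Complex.normSq_nonneg _))
  have σnn : ∀ j, 0 ≤ σ j := fun j => hSpsd.eigenvalues_nonneg j
  have hdec : star U' * S * U' = W * diagonal (Complex.ofReal ∘ d) * Wᴴ := by
    conv_lhs => rw [hSd]
    exact conj_decomp U' U _
  have F1 : ∀ j, σ j = ∑ i, Complex.normSq (W j i) * d i := by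
    intro j
    have e := diag_conj W d j
    rw [← hdec, star_mul_self_mul_eq_diagonal' hS, Matrix.diagonal_apply_eq] at e
    simp only [Function.comp_apply] at e
    have e' : hS.eigenvalues j = ∑ i, d i * Complex.normSq (W j i) := Complex.ofReal_injective e
    rw [hσdef, e']
    exact Finset.sum_congr rfl fun i _ => mul_comm _ _
  have hdec2 : star U * S * U = diagonal (Complex.ofReal ∘ d) := by
    rw [hSd, ← Matrix.star_eq_conjTranspose,
      show star U * (U * diagonal (Complex.ofReal ∘ d) * star U) * U
          = (star U * U) * diagonal (Complex.ofReal ∘ d) * (star U * U) by noncomm_ring,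
      Matrix.mem_unitaryGroup_iff'.mp hU, one_mul, mul_one]
  have spec2 : S = U' * diagonal (Complex.ofReal ∘ σ) * U'ᴴ := by
    rw [← Matrix.star_eq_conjTranspose]
    exact hS.spectral_theorem
  have hdec3 : star U * S * U = W₂ * diagonal (Complex.ofReal ∘ σ) * W₂ᴴ := by
    conv_lhs => rw [spec2]
    exact conj_decomp U U' _
  have F2 : ∀ i, d i = ∑ j, Complex.normSq (W₂ i j) * σ j := by
    intro i
    have e := diag_conj W₂ σ i
    rw [← hdec3, hdec2, Matrix.diagonal_apply_eq] at e
    simp only [Function.comp_apply] at e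
    have e' : d i = ∑ j, hS.eigenvalues j * Complex.normSq (W₂ i j) := Complex.ofReal_injective e
    rw [e', hσdef]
    exact Finset.sum_congr rfl fun j _ => mul_comm _ _
  apply le_antisymm
  · have e : ∑ j, σ j ^ r = ∑ j, (∑ i, Complex.normSq (W j i) * d i) ^ r :=
      Finset.sum_congr rfl fun j _ => by rw [← F1 j]
    rw [e]
    exact sum_rpow_le (fun j i => Complex.normSq (W j i)) d
      (fun j i => Complex.normSq_nonneg _) (row_sum hWmem) (col_sum hWmem) hd hr
  · have e : ∑ i, d i ^ r = ∑ i, (∑ j, Complex.normSq (W₂ i j) * σ j) ^ r :=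
      Finset.sum_congr rfl fun i _ => by rw [← F2 i]
    rw [e]
    exact sum_rpow_le (fun i j => Complex.normSq (W₂ i j)) σ
      (fun i j => Complex.normSq_nonneg _) (row_sum hW2mem) (col_sum hW2mem) σnn hr


end ClarksonAux

/-- Clarkson inequalities for `p ≥ 2`:
`2(‖x‖ₚᵖ + ‖y‖ₚᵖ) ≤ ‖x+y‖ₚᵖ + ‖x-y‖ₚᵖ ≤ 2^{p-1}(‖x‖ₚᵖ + ‖y‖ₚᵖ)`. -/
theorem clarkson_ge_two {n : ℕ} (x y : Matrix (Fin n) (Fin n) ℂ) (p : ℝ) (hp : 2 ≤ p) :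
    2 * (schatten p x + schatten p y) ≤ schatten p (x + y) + schatten p (x - y) ∧
    schatten p (x + y) + schatten p (x - y)
      ≤ (2 : ℝ) ^ (p - 1) * (schatten p x + schatten p y) := by
  classical
  have hr : (1:ℝ) ≤ p / 2 := by linarith
  set r : ℝ := p / 2 with hrdef
  have hMx : (xᴴ * x).PosSemidef := Matrix.posSemidef_conjTranspose_mul_self x
  have hMy : (yᴴ * y).PosSemidef := Matrix.posSemidef_conjTranspose_mul_self y
  have hA : ((x + y)ᴴ * (x + y)).PosSemidef := Matrix.posSemidef_conjTranspose_mul_self _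
  have hB : ((x - y)ᴴ * (x - y)).PosSemidef := Matrix.posSemidef_conjTranspose_mul_self _
  have hK : (xᴴ * x + yᴴ * y).PosSemidef := hMx.add hMy
  have hKH : (xᴴ * x + yᴴ * y).IsHermitian := hK.1
  have hSAB : ((x + y)ᴴ * (x + y) + (x - y)ᴴ * (x - y)).IsHermitian := (hA.add hB).1
  have hsx : schatten p x = ∑ i, hMx.1.eigenvalues i ^ r := rfl
  have hsy : schatten p y = ∑ i, hMy.1.eigenvalues i ^ r := rfl
  have hsa : schatten p (x + y) = ∑ i, hA.1.eigenvalues i ^ r := rfl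
  have hsb : schatten p (x - y) = ∑ i, hB.1.eigenvalues i ^ r := rfl
  obtain ⟨G1AB, G2AB⟩ := ClarksonAux.main_config hA hB hr hSAB
  obtain ⟨G1MN, G2MN⟩ := ClarksonAux.main_config hMx hMy hr hKH
  have idAB : (x + y)ᴴ * (x + y) + (x - y)ᴴ * (x - y)
      = (xᴴ * x + yᴴ * y) + (xᴴ * x + yᴴ * y) := by
    rw [conjTranspose_add, conjTranspose_sub]
    noncomm_ring
  set U : Matrix (Fin n) (Fin n) ℂ := (hKH.eigenvectorUnitary : Matrix (Fin n) (Fin n) ℂ)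
    with hUdef
  have specK : xᴴ * x + yᴴ * y
      = U * diagonal (Complex.ofReal ∘ hKH.eigenvalues) * Uᴴ := hKH.spectral_theorem
  have hdd : diagonal (Complex.ofReal ∘ hKH.eigenvalues)
        + diagonal (Complex.ofReal ∘ hKH.eigenvalues)
      = (diagonal (Complex.ofReal ∘ fun i => 2 * hKH.eigenvalues i)
          : Matrix (Fin n) (Fin n) ℂ) := by
    have hfun : (Complex.ofReal ∘ hKH.eigenvalues) + (Complex.ofReal ∘ hKH.eigenvalues)
        = Complex.ofReal ∘ (fun i => 2 * hKH.eigenvalues i) := by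
      funext i
      simp only [Pi.add_apply, Function.comp_apply]
      push_cast
      ring
    rw [Matrix.diagonal_add]
    refine congrArg Matrix.diagonal ?_
    funext i
    simp only [Function.comp_apply]
    push_cast
    ring
  have hSd : (x + y)ᴴ * (x + y) + (x - y)ᴴ * (x - y)
      = U * diagonal (Complex.ofReal ∘ fun i => 2 * hKH.eigenvalues i) * Uᴴ := by
    rw [idAB]
    calc (xᴴ * x + yᴴ * y) + (xᴴ * x + yᴴ * y)
        = U * diagonal (Complex.ofReal ∘ hKH.eigenvalues) * Uᴴ
          + U * diagonal (Complex.ofReal ∘ hKH.eigenvalues) * Uᴴ := by rw [← specK]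
      _ = U * (diagonal (Complex.ofReal ∘ hKH.eigenvalues)
          + diagonal (Complex.ofReal ∘ hKH.eigenvalues)) * Uᴴ := by noncomm_ring
      _ = U * diagonal (Complex.ofReal ∘ fun i => 2 * hKH.eigenvalues i) * Uᴴ := by rw [hdd]
  have scale : ∑ j, hSAB.eigenvalues j ^ r = ∑ i, (2 * hKH.eigenvalues i) ^ r :=
    ClarksonAux.sum_rpow_eigen_eq hSAB hKH.eigenvectorUnitary.2 _
      (fun i => mul_nonneg (by norm_num) (hK.eigenvalues_nonneg i)) hSd hr
  have scale2 : ∑ i, (2 * hKH.eigenvalues i) ^ r = 2 ^ r * ∑ i, hKH.eigenvalues i ^ r := by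
    rw [Finset.mul_sum]
    refine Finset.sum_congr rfl fun i _ => ?_
    rw [Real.mul_rpow (by norm_num) (hK.eigenvalues_nonneg i)]
  have h2 : (0:ℝ) < 2 ^ (r - 1) := Real.rpow_pos_of_pos (by norm_num) _
  have h2r : (2:ℝ) ^ r = 2 * 2 ^ (r - 1) := by
    have h := Real.rpow_add (by norm_num : (0:ℝ) < 2) 1 (r - 1)
    rw [add_sub_cancel, Real.rpow_one] at h
    exact h
  have h2p : (2:ℝ) ^ r * 2 ^ (r - 1) = 2 ^ (p - 1) := by
    rw [← Real.rpow_add (by norm_num : (0:ℝ) < 2)]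
    congr 1
    rw [hrdef]
    ring
  constructor
  · show 2 * ((∑ i, hMx.1.eigenvalues i ^ r) + (∑ i, hMy.1.eigenvalues i ^ r))
        ≤ (∑ i, hA.1.eigenvalues i ^ r) + (∑ i, hB.1.eigenvalues i ^ r)
    have l2 : 2 ^ r * (∑ i, hKH.eigenvalues i ^ r)
        ≤ 2 ^ (r - 1) * ((∑ i, hA.1.eigenvalues i ^ r) + (∑ i, hB.1.eigenvalues i ^ r)) := by
      rw [← scale2, ← scale]
      exact G2AB
    rw [h2r] at l2
    have l3 : 2 * (∑ i, hKH.eigenvalues i ^ r)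
        ≤ (∑ i, hA.1.eigenvalues i ^ r) + (∑ i, hB.1.eigenvalues i ^ r) := by
      have l2' : 2 ^ (r - 1) * (2 * ∑ i, hKH.eigenvalues i ^ r)
          ≤ 2 ^ (r - 1) * ((∑ i, hA.1.eigenvalues i ^ r) + (∑ i, hB.1.eigenvalues i ^ r)) := by
        linarith [l2]
      exact (mul_le_mul_iff_right₀ h2).mp l2'
    linarith [G1MN]
  · show (∑ i, hA.1.eigenvalues i ^ r) + (∑ i, hB.1.eigenvalues i ^ r)
        ≤ 2 ^ (p - 1) * ((∑ i, hMx.1.eigenvalues i ^ r) + (∑ i, hMy.1.eigenvalues i ^ r))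
    calc (∑ i, hA.1.eigenvalues i ^ r) + (∑ i, hB.1.eigenvalues i ^ r)
        ≤ ∑ j, hSAB.eigenvalues j ^ r := G1AB
      _ = 2 ^ r * ∑ i, hKH.eigenvalues i ^ r := by rw [scale, scale2]
      _ ≤ 2 ^ r * (2 ^ (r - 1)
            * ((∑ i, hMx.1.eigenvalues i ^ r) + (∑ i, hMy.1.eigenvalues i ^ r))) :=
          mul_le_mul_of_nonneg_left G2MN (Real.rpow_pos_of_pos (by norm_num) _).le
      _ = 2 ^ (p - 1) * ((∑ i, hMx.1.eigenvalues i ^ r) + (∑ i, hMy.1.eigenvalues i ^ r)) := by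
          rw [← mul_assoc, h2p]
end

section
/- Let x and y be n×n complex matrices and let 0 < p ≤ 2. Then 2^{p−1}(‖x‖_p^p + ‖y‖_p^p) ≤ ‖x+y‖_p^p + ‖x−y‖_p^p ≤ 2(‖x‖_p^p + ‖y‖_p^p), where ‖x‖_p^p = trace(|x|^p) = ∑_i s_i(x)^p is the sum of p-th powers of the singular values of x. -/
open Matrix
open scoped NNReal ComplexOrder

section ClarksonDev
variable {n : ℕ}

namespace Clarkson

section cfcToolkit

variable {M : Matrix (Fin n) (Fin n) ℂ} (hM : M.IsHermitian)

lemma unit_mul_star : (hM.eigenvectorUnitary : Matrix (Fin n) (Fin n) ℂ) *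
    star (hM.eigenvectorUnitary : Matrix (Fin n) (Fin n) ℂ) = 1 :=
  (Matrix.mem_unitaryGroup_iff).mp (hM.eigenvectorUnitary).2

lemma star_mul_unit : star (hM.eigenvectorUnitary : Matrix (Fin n) (Fin n) ℂ) *
    (hM.eigenvectorUnitary : Matrix (Fin n) (Fin n) ℂ) = 1 :=
  (Matrix.mem_unitaryGroup_iff').mp (hM.eigenvectorUnitary).2

lemma cfc_mul (f g : ℝ → ℝ) : hM.cfc f * hM.cfc g = hM.cfc (fun t => f t * g t) := by
  unfold Matrix.IsHermitian.cfc
  simp only [Unitary.conjStarAlgAut_apply, Unitary.coe_star]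
  simp only [mul_assoc]
  rw [show star (hM.eigenvectorUnitary : Matrix (Fin n) (Fin n) ℂ) *
      ((hM.eigenvectorUnitary : Matrix (Fin n) (Fin n) ℂ) *
        (diagonal (RCLike.ofReal ∘ g ∘ hM.eigenvalues) *
          star (hM.eigenvectorUnitary : Matrix (Fin n) (Fin n) ℂ)))
      = diagonal (RCLike.ofReal ∘ g ∘ hM.eigenvalues) *
          star (hM.eigenvectorUnitary : Matrix (Fin n) (Fin n) ℂ) by
    rw [← mul_assoc, star_mul_unit hM, one_mul]]
  rw [← mul_assoc (diagonal (RCLike.ofReal ∘ f ∘ hM.eigenvalues)), diagonal_mul_diagonal]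
  congr 2
  ext i
  simp [Function.comp_def]

lemma cfc_congr {f g : ℝ → ℝ} (h : ∀ i, f (hM.eigenvalues i) = g (hM.eigenvalues i)) :
    hM.cfc f = hM.cfc g := by
  unfold Matrix.IsHermitian.cfc
  congr 2
  ext i j
  simp [Function.comp_def, h]

lemma cfc_id : hM.cfc id = M := by
  unfold Matrix.IsHermitian.cfc
  exact hM.spectral_theorem.symm

lemma cfc_id' : hM.cfc (fun t => t) = M := cfc_id hM

lemma cfc_smul_one (s : ℝ) : hM.cfc (fun _ => s) = (s : ℂ) • (1 : Matrix (Fin n) (Fin n) ℂ) := by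
  unfold Matrix.IsHermitian.cfc
  simp only [Unitary.conjStarAlgAut_apply, Unitary.coe_star]
  have : Matrix.diagonal (RCLike.ofReal ∘ (fun _ => s) ∘ hM.eigenvalues)
      = (s : ℂ) • (1 : Matrix (Fin n) (Fin n) ℂ) := by
    rw [Matrix.smul_one_eq_diagonal]
    rfl
  rw [this, Matrix.mul_smul, Matrix.smul_mul, mul_one, unit_mul_star hM]

lemma cfc_const_one : hM.cfc (fun _ => (1:ℝ)) = 1 := by
  rw [cfc_smul_one hM 1]; simp

lemma cfc_one_of (f : ℝ → ℝ) (h : ∀ i, f (hM.eigenvalues i) = 1) : hM.cfc f = 1 := by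
  rw [cfc_congr hM (g := fun _ => (1:ℝ)) h, cfc_const_one]

lemma cfc_add (f g : ℝ → ℝ) : hM.cfc f + hM.cfc g = hM.cfc (fun t => f t + g t) := by
  unfold Matrix.IsHermitian.cfc
  simp only [Unitary.conjStarAlgAut_apply, Unitary.coe_star]
  rw [← Matrix.add_mul, ← Matrix.mul_add, Matrix.diagonal_add]
  congr 2
  ext i
  simp [Function.comp_def]

lemma cfc_sub (f g : ℝ → ℝ) : hM.cfc f - hM.cfc g = hM.cfc (fun t => f t - g t) := by
  unfold Matrix.IsHermitian.cfc
  simp only [Unitary.conjStarAlgAut_apply, Unitary.coe_star]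
  rw [← Matrix.sub_mul, ← Matrix.mul_sub, Matrix.diagonal_sub]
  congr 2
  ext i
  simp [Function.comp_def]

lemma cfc_isHermitian (f : ℝ → ℝ) : (hM.cfc f).IsHermitian := by
  unfold Matrix.IsHermitian.cfc
  simp only [Unitary.conjStarAlgAut_apply, Unitary.coe_star]
  unfold Matrix.IsHermitian
  simp only [Matrix.star_eq_conjTranspose, Matrix.conjTranspose_mul,
    Matrix.conjTranspose_conjTranspose, Matrix.diagonal_conjTranspose]
  rw [mul_assoc]
  congr 2
  ext i
  simp [Function.comp_def, Pi.star_def, RCLike.star_def, RCLike.conj_ofReal]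

lemma cfc_posSemidef (f : ℝ → ℝ) (h : ∀ i, 0 ≤ f (hM.eigenvalues i)) :
    (hM.cfc f).PosSemidef := by
  unfold Matrix.IsHermitian.cfc
  have hd : (Matrix.diagonal (RCLike.ofReal ∘ f ∘ hM.eigenvalues :
      Fin n → ℂ)).PosSemidef := by
    refine Matrix.PosSemidef.diagonal fun i => ?_
    simpa using Complex.zero_le_real.mpr (h i)
  simpa [Matrix.star_eq_conjTranspose] using
    hd.mul_mul_conjTranspose_same (hM.eigenvectorUnitary : Matrix (Fin n) (Fin n) ℂ)

lemma cfc_trace (f : ℝ → ℝ) :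
    (hM.cfc f).trace = ((∑ i, f (hM.eigenvalues i) : ℝ) : ℂ) := by
  unfold Matrix.IsHermitian.cfc
  simp only [Unitary.conjStarAlgAut_apply, Unitary.coe_star]
  rw [Matrix.trace_mul_cycle, star_mul_unit hM, one_mul, Matrix.trace_diagonal]
  push_cast
  rfl

lemma cfc_trace_re (f : ℝ → ℝ) :
    ((hM.cfc f).trace).re = ∑ i, f (hM.eigenvalues i) := by
  rw [cfc_trace hM f, Complex.ofReal_re]

end cfcToolkit

section Jensen

variable {M : Matrix (Fin n) (Fin n) ℂ} (hM : M.IsHermitian)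

lemma diag_re_nonneg {X : Matrix (Fin n) (Fin n) ℂ} (hX : X.PosSemidef) (i : Fin n) :
    0 ≤ (X i i).re := by
  have h := hX.re_dotProduct_nonneg (Pi.single i 1)
  have e : dotProduct (star (Pi.single i 1)) (X *ᵥ Pi.single i 1) = X i i := by
    simp [Matrix.mulVec_single, dotProduct, Pi.single_apply, apply_ite,
      Finset.sum_ite_eq']
  rwa [e] at h

lemma trace_re_le {X Y : Matrix (Fin n) (Fin n) ℂ} (h : (Y - X).PosSemidef) :
    (X.trace).re ≤ (Y.trace).re := by
  have h0 : 0 ≤ ((Y - X).trace).re := by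
    rw [show (Y - X).trace = ∑ i, (Y - X) i i by simp [Matrix.trace, Matrix.diag],
      Complex.re_sum]
    exact Finset.sum_nonneg fun i _ => diag_re_nonneg h i
  rw [Matrix.trace_sub, Complex.sub_re] at h0
  linarith

/-- conjugating by the eigenvector unitary diagonalises. -/
lemma conj_spectral : star (hM.eigenvectorUnitary : Matrix (Fin n) (Fin n) ℂ) * M *
    (hM.eigenvectorUnitary : Matrix (Fin n) (Fin n) ℂ)
    = Matrix.diagonal (RCLike.ofReal ∘ hM.eigenvalues) := by
  have h2 : star (hM.eigenvectorUnitary : Matrix (Fin n) (Fin n) ℂ) * M *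
      (hM.eigenvectorUnitary : Matrix (Fin n) (Fin n) ℂ)
      = star (hM.eigenvectorUnitary : Matrix (Fin n) (Fin n) ℂ) *
        ((hM.eigenvectorUnitary : Matrix (Fin n) (Fin n) ℂ) *
          Matrix.diagonal (RCLike.ofReal ∘ hM.eigenvalues) *
          star (hM.eigenvectorUnitary : Matrix (Fin n) (Fin n) ℂ)) *
        (hM.eigenvectorUnitary : Matrix (Fin n) (Fin n) ℂ) := by
    have hs := hM.spectral_theorem
    simp only [Unitary.conjStarAlgAut_apply, Unitary.coe_star] at hs
    rw [← hs]
  rw [h2, show ∀ (a b : Matrix (Fin n) (Fin n) ℂ),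
      star a * (a * b * star a) * a = (star a * a) * b * (star a * a) by
    intros; simp only [mul_assoc], star_mul_unit hM, one_mul, mul_one]

lemma diag_conj_core (d : Fin n → ℝ) (V : Matrix (Fin n) (Fin n) ℂ) (i : Fin n) :
    ((star V * Matrix.diagonal ((RCLike.ofReal : ℝ → ℂ) ∘ d) * V) i i) =
      ((∑ j, Complex.normSq (V j i) * d j : ℝ) : ℂ) := by
  have e : ∀ j, (star V * Matrix.diagonal ((RCLike.ofReal : ℝ → ℂ) ∘ d)) i j * V j i
      = ((Complex.normSq (V j i) * d j : ℝ) : ℂ) := by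
    intro j
    rw [Matrix.mul_diagonal, Matrix.star_apply]
    have : star (V j i) * ((RCLike.ofReal : ℝ → ℂ) ∘ d) j * V j i
        = ((d j : ℝ) : ℂ) * (V j i * star (V j i)) := by
      show star (V j i) * ((d j : ℝ) : ℂ) * V j i = _
      ring
    rw [this, Complex.star_def, Complex.mul_conj]
    push_cast
    ring
  rw [Matrix.mul_apply, Finset.sum_congr rfl fun j _ => e j]
  norm_cast

/-- The trace of a matrix is invariant under unitary conjugation. -/
lemma trace_conj (X : Matrix (Fin n) (Fin n) ℂ) (W : Matrix.unitaryGroup (Fin n) ℂ) :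
    (star (W : Matrix (Fin n) (Fin n) ℂ) * X * (W : Matrix (Fin n) (Fin n) ℂ)).trace
      = X.trace := by
  rw [Matrix.trace_mul_cycle, Matrix.mem_unitaryGroup_iff.mp W.2, one_mul]

lemma weights_sum_one {V : Matrix (Fin n) (Fin n) ℂ} (hV : star V * V = 1) (i : Fin n) :
    ∑ j, Complex.normSq (V j i) = 1 := by
  have e : ∀ j, star V i j * V j i = ((Complex.normSq (V j i) : ℝ) : ℂ) := fun j => by
    rw [Matrix.star_apply, Complex.star_def, mul_comm, Complex.mul_conj]
  have h : ((1 : Matrix (Fin n) (Fin n) ℂ) i i) = ((∑ j, Complex.normSq (V j i) : ℝ) : ℂ) := by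
    rw [← hV, Matrix.mul_apply, Finset.sum_congr rfl fun j _ => e j]
    norm_cast
  simp only [Matrix.one_apply_eq] at h
  exact_mod_cast h.symm

/-- scalar weighted Jensen for rpow, `0 < r ≤ 1` -/
lemma wsum_rpow_le {m : ℕ} (w z : Fin m → ℝ) (hw : ∀ j, 0 ≤ w j)
    (hw1 : ∑ j, w j = 1) (hz : ∀ j, 0 ≤ z j) {r : ℝ} (hr0 : 0 < r) (hr1 : r ≤ 1) :
    ∑ j, w j * z j ^ r ≤ (∑ j, w j * z j) ^ r := by
  have hp : 1 ≤ 1 / r := by rw [le_div_iff₀ hr0, one_mul]; exact hr1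
  have h := Real.arith_mean_le_rpow_mean Finset.univ w (fun j => z j ^ r)
    (fun j _ => hw j) hw1 (fun j _ => Real.rpow_nonneg (hz j) r) hp
  have hzz : ∀ j, (z j ^ r) ^ ((1:ℝ)/r) = z j := fun j => by
    rw [← Real.rpow_mul (hz j), mul_one_div_cancel hr0.ne', Real.rpow_one]
  simp only [hzz] at h
  rwa [one_div_one_div] at h

lemma trace_eq_sum_diag (X : Matrix (Fin n) (Fin n) ℂ) : X.trace = ∑ i, X i i := by
  simp [Matrix.trace, Matrix.diag]

lemma starV_mul_V {M : Matrix (Fin n) (Fin n) ℂ} (hM : M.IsHermitian)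
    (W : Matrix.unitaryGroup (Fin n) ℂ) :
    star (star (hM.eigenvectorUnitary : Matrix (Fin n) (Fin n) ℂ) * (W : Matrix (Fin n) (Fin n) ℂ))
      * (star (hM.eigenvectorUnitary : Matrix (Fin n) (Fin n) ℂ) * (W : Matrix (Fin n) (Fin n) ℂ))
      = 1 := by
  rw [Matrix.star_mul, star_star]
  rw [show ∀ (a b : Matrix (Fin n) (Fin n) ℂ),
      star a * b * (star b * a) = star a * (b * star b) * a by intros; simp only [mul_assoc],
    unit_mul_star hM, mul_one, Matrix.mem_unitaryGroup_iff'.mp W.2]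

lemma conj_cfc_entry {M : Matrix (Fin n) (Fin n) ℂ} (hM : M.IsHermitian) (f : ℝ → ℝ)
    (W : Matrix.unitaryGroup (Fin n) ℂ) (i : Fin n) :
    ((star (W : Matrix (Fin n) (Fin n) ℂ) * hM.cfc f * (W : Matrix (Fin n) (Fin n) ℂ)) i i)
      = ((∑ j, Complex.normSq ((star (hM.eigenvectorUnitary : Matrix (Fin n) (Fin n) ℂ) *
          (W : Matrix (Fin n) (Fin n) ℂ)) j i) * f (hM.eigenvalues j) : ℝ) : ℂ) := by
  unfold Matrix.IsHermitian.cfc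
  simp only [Unitary.conjStarAlgAut_apply, Unitary.coe_star]
  rw [show star (W : Matrix (Fin n) (Fin n) ℂ) *
      ((hM.eigenvectorUnitary : Matrix (Fin n) (Fin n) ℂ) *
        Matrix.diagonal (RCLike.ofReal ∘ f ∘ hM.eigenvalues) *
        star (hM.eigenvectorUnitary : Matrix (Fin n) (Fin n) ℂ)) * (W : Matrix (Fin n) (Fin n) ℂ)
      = star (star (hM.eigenvectorUnitary : Matrix (Fin n) (Fin n) ℂ) *
          (W : Matrix (Fin n) (Fin n) ℂ)) *
        Matrix.diagonal ((RCLike.ofReal : ℝ → ℂ) ∘ (f ∘ hM.eigenvalues)) *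
        (star (hM.eigenvectorUnitary : Matrix (Fin n) (Fin n) ℂ) *
          (W : Matrix (Fin n) (Fin n) ℂ)) by
    rw [Matrix.star_mul, star_star]; simp only [mul_assoc]]
  rw [diag_conj_core]
  norm_cast

lemma sum_f_eq {M : Matrix (Fin n) (Fin n) ℂ} (hM : M.IsHermitian) (f : ℝ → ℝ)
    (W : Matrix.unitaryGroup (Fin n) ℂ) :
    ∑ i, f (hM.eigenvalues i) =
      ∑ i, ∑ j, Complex.normSq ((star (hM.eigenvectorUnitary : Matrix (Fin n) (Fin n) ℂ) *
        (W : Matrix (Fin n) (Fin n) ℂ)) j i) * f (hM.eigenvalues j) := by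
  rw [← cfc_trace_re hM f, ← trace_conj (hM.cfc f) W, trace_eq_sum_diag, Complex.re_sum]
  exact Finset.sum_congr rfl fun i _ => by rw [conj_cfc_entry hM f W i, Complex.ofReal_re]

lemma conj_entry_re {M : Matrix (Fin n) (Fin n) ℂ} (hM : M.IsHermitian)
    (W : Matrix.unitaryGroup (Fin n) ℂ) (i : Fin n) :
    ((star (W : Matrix (Fin n) (Fin n) ℂ) * M * (W : Matrix (Fin n) (Fin n) ℂ)) i i).re
      = ∑ j, Complex.normSq ((star (hM.eigenvectorUnitary : Matrix (Fin n) (Fin n) ℂ) *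
          (W : Matrix (Fin n) (Fin n) ℂ)) j i) * hM.eigenvalues j := by
  conv_lhs => rw [show M = hM.cfc id from (cfc_id hM).symm]
  rw [conj_cfc_entry hM id W i, Complex.ofReal_re]
  rfl

/-- Key Jensen-type trace inequality: for `M` PSD, any unitary `W`, and `0 < r ≤ 1`,
`tr M^r ≤ ∑ i (Wᴴ M W)_{ii}^r`. -/
lemma jensen_trace {M : Matrix (Fin n) (Fin n) ℂ} (hM' : M.PosSemidef)
    (W : Matrix.unitaryGroup (Fin n) ℂ) {r : ℝ} (hr0 : 0 < r) (hr1 : r ≤ 1) :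
    ∑ i, (hM'.1.eigenvalues i) ^ r ≤
      ∑ i, (((star (W : Matrix (Fin n) (Fin n) ℂ) * M * (W : Matrix (Fin n) (Fin n) ℂ)) i i).re) ^ r := by
  rw [sum_f_eq hM'.1 (fun t => t ^ r) W]
  refine Finset.sum_le_sum fun i _ => ?_
  rw [conj_entry_re hM'.1 W i]
  exact wsum_rpow_le _ _ (fun j => Complex.normSq_nonneg _)
    (weights_sum_one (starV_mul_V hM'.1 W) i) (fun j => hM'.eigenvalues_nonneg j) hr0 hr1

end Jensen

section Scaling

lemma smul_conj (c : ℂ) (X W : Matrix (Fin n) (Fin n) ℂ) :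
    star W * (c • X) * W = c • (star W * X * W) := by
  rw [Matrix.mul_smul, Matrix.smul_mul]

lemma re_ofsmul (c : ℝ) (z : ℂ) : ((c:ℂ) * z).re = c * z.re := by
  simp [Complex.mul_re]

/-- homogeneity of `tr M^r` under positive scalar multiplication -/
lemma sum_rpow_smul {M N : Matrix (Fin n) (Fin n) ℂ} (hM' : M.PosSemidef) (hN' : N.PosSemidef)
    {c : ℝ} (hc : 0 < c) (hNM : N = (c : ℂ) • M) {r : ℝ} (hr0 : 0 < r) (hr1 : r ≤ 1) :
    ∑ i, (hN'.1.eigenvalues i) ^ r = c ^ r * ∑ i, (hM'.1.eigenvalues i) ^ r := by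
  have hcr : (0:ℝ) < c ^ r := Real.rpow_pos_of_pos hc r
  -- direction 1
  have e1 : ∀ i, ((star (hN'.1.eigenvectorUnitary : Matrix (Fin n) (Fin n) ℂ) * M *
      (hN'.1.eigenvectorUnitary : Matrix (Fin n) (Fin n) ℂ)) i i).re
      = hN'.1.eigenvalues i / c := by
    intro i
    have e : (c : ℂ) • (star (hN'.1.eigenvectorUnitary : Matrix (Fin n) (Fin n) ℂ) * M *
        (hN'.1.eigenvectorUnitary : Matrix (Fin n) (Fin n) ℂ))
        = Matrix.diagonal (RCLike.ofReal ∘ hN'.1.eigenvalues) := by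
      rw [← smul_conj, ← hNM, conj_spectral]
    have e2 := congrArg (fun X : Matrix (Fin n) (Fin n) ℂ => (X i i).re) e
    simp only [Matrix.smul_apply, smul_eq_mul] at e2
    rw [re_ofsmul] at e2
    have : (Matrix.diagonal ((RCLike.ofReal : ℝ → ℂ) ∘ hN'.1.eigenvalues) i i).re
        = hN'.1.eigenvalues i := by simp
    rw [this] at e2
    field_simp
    linarith [e2]
  have h1 := jensen_trace hM' (hN'.1.eigenvectorUnitary) hr0 hr1
  simp only [e1] at h1
  have h1' : ∑ i, (hM'.1.eigenvalues i) ^ r ≤ (∑ i, (hN'.1.eigenvalues i) ^ r) / c ^ r := by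
    rw [Finset.sum_div]
    refine h1.trans_eq (Finset.sum_congr rfl fun i _ => ?_)
    rw [Real.div_rpow (hN'.eigenvalues_nonneg i) hc.le]
  -- direction 2
  have e3 : ∀ i, ((star (hM'.1.eigenvectorUnitary : Matrix (Fin n) (Fin n) ℂ) * N *
      (hM'.1.eigenvectorUnitary : Matrix (Fin n) (Fin n) ℂ)) i i).re
      = c * hM'.1.eigenvalues i := by
    intro i
    rw [hNM, smul_conj, conj_spectral]
    have : ((c:ℂ) • Matrix.diagonal ((RCLike.ofReal : ℝ → ℂ) ∘ hM'.1.eigenvalues)) i i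
        = (c:ℂ) * Matrix.diagonal ((RCLike.ofReal : ℝ → ℂ) ∘ hM'.1.eigenvalues) i i := rfl
    rw [this, re_ofsmul]
    simp
  have h2 := jensen_trace hN' (hM'.1.eigenvectorUnitary) hr0 hr1
  simp only [e3] at h2
  have h2' : ∑ i, (hN'.1.eigenvalues i) ^ r ≤ c ^ r * ∑ i, (hM'.1.eigenvalues i) ^ r := by
    rw [Finset.mul_sum]
    refine h2.trans_eq (Finset.sum_congr rfl fun i _ => ?_)
    rw [Real.mul_rpow hc.le (hM'.eigenvalues_nonneg i)]
  refine le_antisymm h2' ?_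
  rw [← le_div_iff₀' hcr]
  exact h1'

end Scaling

section Concavity

/-- two-point concavity bound for rpow -/
lemma two_point {a b : ℝ} (ha : 0 ≤ a) (hb : 0 ≤ b) {r : ℝ} (hr0 : 0 < r) (hr1 : r ≤ 1) :
    a ^ r + b ^ r ≤ 2 ^ (1 - r) * (a + b) ^ r := by
  have h := wsum_rpow_le (m := 2) ![1/2, 1/2] ![a, b]
    (fun j => by fin_cases j <;> norm_num)
    (by simp [Fin.sum_univ_two]; norm_num)
    (fun j => by fin_cases j <;> assumption) hr0 hr1
  simp only [Fin.sum_univ_two, Matrix.cons_val_zero, Matrix.cons_val_one, Matrix.head_cons] at h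
  have e1 : (1/2 : ℝ) * a + 1/2 * b = (a + b)/2 := by ring
  rw [e1, Real.div_rpow (by linarith) (by norm_num)] at h
  have e2 : (0:ℝ) < (2:ℝ) ^ r := Real.rpow_pos_of_pos (by norm_num) r
  have e3 : (2:ℝ) ^ (1 - r) = 2 / 2 ^ r := by
    rw [Real.rpow_sub (by norm_num), Real.rpow_one]
  rw [e3]
  rw [div_mul_eq_mul_div, le_div_iff₀ e2]
  calc (a ^ r + b ^ r) * 2 ^ r = 2 * ((1/2) * a ^ r + (1/2) * b ^ r) * 2 ^ r := by ring
  _ ≤ 2 * ((a+b) ^ r / 2 ^ r) * 2 ^ r := by nlinarith [h, e2]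
  _ = 2 * (a+b) ^ r := by field_simp
  _ = 2 * (a + b) ^ r := by ring

/-- concavity step: if `C + D = 2T` with all PSD then `tr C^r + tr D^r ≤ 2 tr T^r`. -/
lemma concavity_step {C D T : Matrix (Fin n) (Fin n) ℂ} (hC' : C.PosSemidef)
    (hD' : D.PosSemidef) (hT' : T.PosSemidef) (hadd : C + D = (2 : ℂ) • T)
    {r : ℝ} (hr0 : 0 < r) (hr1 : r ≤ 1) :
    (∑ i, (hC'.1.eigenvalues i) ^ r) + (∑ i, (hD'.1.eigenvalues i) ^ r)
      ≤ 2 * ∑ i, (hT'.1.eigenvalues i) ^ r := by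
  set W := hT'.1.eigenvectorUnitary with hW
  set Wm := (W : Matrix (Fin n) (Fin n) ℂ) with hWm
  have hCc : (star Wm * C * Wm).PosSemidef := by
    have := hC'.conjTranspose_mul_mul_same Wm
    rwa [← Matrix.star_eq_conjTranspose] at this
  have hDc : (star Wm * D * Wm).PosSemidef := by
    have := hD'.conjTranspose_mul_mul_same Wm
    rwa [← Matrix.star_eq_conjTranspose] at this
  have hcd : ∀ i, ((star Wm * C * Wm) i i).re + ((star Wm * D * Wm) i i).re
      = 2 * hT'.1.eigenvalues i := by
    intro i
    have e : star Wm * C * Wm + star Wm * D * Wm = (2:ℂ) • Matrix.diagonal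
        ((RCLike.ofReal : ℝ → ℂ) ∘ hT'.1.eigenvalues) := by
      rw [← conj_spectral hT'.1, ← smul_conj, ← hadd]
      rw [Matrix.mul_add, Matrix.add_mul]
    have e2 := congrArg (fun X : Matrix (Fin n) (Fin n) ℂ => (X i i).re) e
    simp only [Matrix.add_apply, Complex.add_re] at e2
    rw [show (((2:ℂ) • Matrix.diagonal ((RCLike.ofReal : ℝ → ℂ) ∘ hT'.1.eigenvalues)) i i)
        = (2:ℂ) * Matrix.diagonal ((RCLike.ofReal : ℝ → ℂ) ∘ hT'.1.eigenvalues) i i from rfl]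
        at e2
    rw [show ((2:ℂ) : ℂ) = ((2:ℝ) : ℂ) by norm_num, re_ofsmul] at e2
    simpa using e2
  have h1 := jensen_trace hC' W hr0 hr1
  have h2 := jensen_trace hD' W hr0 hr1
  have h3 : ∑ i, (((star Wm * C * Wm) i i).re) ^ r + ∑ i, (((star Wm * D * Wm) i i).re) ^ r
      ≤ 2 * ∑ i, (hT'.1.eigenvalues i) ^ r := by
    rw [← Finset.sum_add_distrib, Finset.mul_sum]
    refine Finset.sum_le_sum fun i _ => ?_
    have htp := two_point (diag_re_nonneg hCc i) (diag_re_nonneg hDc i) hr0 hr1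
    rw [hcd i] at htp
    refine htp.trans_eq ?_
    rw [Real.mul_rpow (by norm_num) (hT'.eigenvalues_nonneg i), ← mul_assoc,
      ← Real.rpow_add (by norm_num : (0:ℝ) < 2)]
    norm_num
  calc (∑ i, (hC'.1.eigenvalues i) ^ r) + (∑ i, (hD'.1.eigenvalues i) ^ r)
      ≤ ∑ i, (((star Wm * C * Wm) i i).re) ^ r + ∑ i, (((star Wm * D * Wm) i i).re) ^ r :=
        add_le_add h1 h2
  _ ≤ 2 * ∑ i, (hT'.1.eigenvalues i) ^ r := h3

end Concavity

section Subadd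

lemma eig_le_one {S : Matrix (Fin n) (Fin n) ℂ} (hS : S.IsHermitian)
    (h1 : ((1 : Matrix (Fin n) (Fin n) ℂ) - S).PosSemidef) (i : Fin n) :
    hS.eigenvalues i ≤ 1 := by
  have hv := hS.eigenvalues_eq i
  set v : Fin n → ℂ := (hS.eigenvectorBasis i).ofLp with hvdef
  have hx : dotProduct (star v) v = (1:ℂ) := by
    have h := EuclideanSpace.inner_eq_star_dotProduct (𝕜 := ℂ)
      (hS.eigenvectorBasis i) (hS.eigenvectorBasis i)
    rw [inner_self_eq_norm_sq_to_K, hS.eigenvectorBasis.orthonormal.1 i] at h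
    rw [← hvdef] at h
    norm_num at h
    rw [dotProduct_comm]
    exact h.symm
  have hpos := h1.re_dotProduct_nonneg v
  rw [Matrix.sub_mulVec, Matrix.one_mulVec, dotProduct_sub, map_sub, hx] at hpos
  rw [hv]
  have h1re : RCLike.re (1:ℂ) = 1 := by norm_num
  rw [h1re] at hpos
  linarith

lemma eig_pos_of_unit {S X : Matrix (Fin n) (Fin n) ℂ} (hS' : S.PosSemidef)
    (hX : S * X = 1) (i : Fin n) : 0 < hS'.1.eigenvalues i := by
  rcases (hS'.eigenvalues_nonneg i).lt_or_eq with h | h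
  · exact h
  exfalso
  have hdet : S.det ≠ 0 := by
    intro h0
    have := congrArg Matrix.det hX
    rw [Matrix.det_mul, h0, zero_mul, Matrix.det_one] at this
    exact zero_ne_one this
  have : S.det = 0 := by
    rw [hS'.1.det_eq_prod_eigenvalues]
    refine Finset.prod_eq_zero (Finset.mem_univ i) ?_
    rw [← h]
    norm_num
  exact hdet this

/-- a cfc reciprocal is a left inverse -/
lemma cfc_inv_mul {S : Matrix (Fin n) (Fin n) ℂ} (hS : S.IsHermitian)
    (hnz : ∀ i, hS.eigenvalues i ≠ 0) : hS.cfc (fun t => t⁻¹) * S = 1 := by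
  have h := cfc_mul hS (fun t => t⁻¹) (fun t => t)
  rw [cfc_id'] at h
  rw [h]
  exact cfc_one_of hS _ fun i => inv_mul_cancel₀ (hnz i)

lemma cfc_add_const {M : Matrix (Fin n) (Fin n) ℂ} (hM : M.IsHermitian) (s : ℝ) :
    hM.cfc (fun t => t + s) = M + (s:ℂ) • 1 := by
  have h := cfc_add hM (fun t => t) (fun _ => s)
  rw [cfc_id' hM, cfc_smul_one hM s] at h
  exact ((cfc_congr hM fun _ => rfl).trans h.symm)

lemma conj_psd {X R : Matrix (Fin n) (Fin n) ℂ} (hX : X.PosSemidef) (hR : R.IsHermitian) :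
    (R * X * R).PosSemidef := by
  have h := hX.conjTranspose_mul_mul_same R
  rwa [hR.eq] at h

/-- **Inverse antitonicity**: if `A ≤ T` (both PSD) and `s > 0` then
`(T + s)⁻¹ ≤ (A + s)⁻¹` in the Loewner order, expressed via `cfc`. -/
lemma inv_antitone {A T : Matrix (Fin n) (Fin n) ℂ} (hA' : A.PosSemidef)
    (hT' : T.PosSemidef) (hsub : (T - A).PosSemidef) {s : ℝ} (hs : 0 < s) :
    (hA'.1.cfc (fun t => (t + s)⁻¹) - hT'.1.cfc (fun t => (t + s)⁻¹)).PosSemidef := by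
  have hA := hA'.1
  have hT := hT'.1
  have hApos : ∀ i, 0 < hA.eigenvalues i + s :=
    fun i => add_pos_of_nonneg_of_pos (hA'.eigenvalues_nonneg i) hs
  have hTpos : ∀ i, 0 < hT.eigenvalues i + s :=
    fun i => add_pos_of_nonneg_of_pos (hT'.eigenvalues_nonneg i) hs
  have hgoal : (hA.cfc (fun t => (t + s)⁻¹) - hT.cfc (fun t => (t + s)⁻¹)).PosSemidef := by
    obtain ⟨P, hPdef⟩ : ∃ P, P = hA.cfc (fun t => t + s) := ⟨_, rfl⟩
    obtain ⟨Pinv, hPinvdef⟩ : ∃ P, P = hA.cfc (fun t => (t + s)⁻¹) := ⟨_, rfl⟩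
    obtain ⟨Q, hQdef⟩ : ∃ P, P = hT.cfc (fun t => t + s) := ⟨_, rfl⟩
    obtain ⟨R, hRdef⟩ : ∃ P, P = hT.cfc (fun t => (Real.sqrt (t + s))⁻¹) := ⟨_, rfl⟩
    obtain ⟨R', hR'def⟩ : ∃ P, P = hT.cfc (fun t => Real.sqrt (t + s)) := ⟨_, rfl⟩
    have hPPinv : P * Pinv = 1 := by
      rw [hPdef, hPinvdef, cfc_mul]
      exact cfc_one_of hA _ fun i => mul_inv_cancel₀ (hApos i).ne'
    have hRR' : R * R' = 1 := by
      rw [hRdef, hR'def, cfc_mul]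
      exact cfc_one_of hT _ fun i => inv_mul_cancel₀ (Real.sqrt_pos.mpr (hTpos i)).ne'
    have hR'R : R' * R = 1 := by
      rw [hRdef, hR'def, cfc_mul]
      exact cfc_one_of hT _ fun i => mul_inv_cancel₀ (Real.sqrt_pos.mpr (hTpos i)).ne'
    have hRR : R * R = hT.cfc (fun t => (t + s)⁻¹) := by
      rw [hRdef, cfc_mul]
      refine cfc_congr hT fun i => ?_
      rw [← mul_inv, Real.mul_self_sqrt (hTpos i).le]
    have hRherm : R.IsHermitian := hRdef ▸ cfc_isHermitian hT _
    have hPherm : P.IsHermitian := hPdef ▸ cfc_isHermitian hA _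
    have hPpsd : P.PosSemidef := hPdef ▸ cfc_posSemidef hA _ fun i => (hApos i).le
    have hQP : Q - P = T - A := by
      rw [hQdef, hPdef, cfc_add_const hT s, cfc_add_const hA s]
      abel
    have hRQR : R * Q * R = 1 := by
      rw [hRdef, hQdef, cfc_mul, cfc_mul]
      refine cfc_one_of hT _ fun i => ?_
      have h1 : (0:ℝ) < Real.sqrt (hT.eigenvalues i + s) := Real.sqrt_pos.mpr (hTpos i)
      have h2 : Real.sqrt (hT.eigenvalues i + s) * Real.sqrt (hT.eigenvalues i + s)
          = hT.eigenvalues i + s := Real.mul_self_sqrt (hTpos i).le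
      rw [show (Real.sqrt (hT.eigenvalues i + s))⁻¹ * (hT.eigenvalues i + s) *
          (Real.sqrt (hT.eigenvalues i + s))⁻¹
          = (hT.eigenvalues i + s) *
            (Real.sqrt (hT.eigenvalues i + s) * Real.sqrt (hT.eigenvalues i + s))⁻¹ from
          by rw [mul_inv]; ring, h2, mul_inv_cancel₀ (hTpos i).ne']
    have hSherm : (R * P * R).IsHermitian := by
      show (R * P * R)ᴴ = R * P * R
      rw [Matrix.conjTranspose_mul, Matrix.conjTranspose_mul, hRherm.eq, hPherm.eq, mul_assoc]
    have hSpsd : (R * P * R).PosSemidef := conj_psd hPpsd hRherm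
    have hone_sub_S : ((1 : Matrix (Fin n) (Fin n) ℂ) - R * P * R).PosSemidef := by
      have he : (1 : Matrix (Fin n) (Fin n) ℂ) - R * P * R = R * (T - A) * R := by
        rw [← hRQR, ← hQP, Matrix.mul_sub, Matrix.sub_mul]
      rw [he]
      exact conj_psd hsub hRherm
    have hSX : (R * P * R) * (R' * Pinv * R') = 1 := by
      simp only [mul_assoc]
      rw [show R * (R' * (Pinv * R')) = Pinv * R' by rw [← mul_assoc, hRR', one_mul],
        show P * (Pinv * R') = R' by rw [← mul_assoc, hPPinv, one_mul], hRR']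
    have hSpos : ∀ i, 0 < hSherm.eigenvalues i :=
      fun i => eig_pos_of_unit ⟨hSherm, hSpsd.2⟩ hSX i
    have hSle : ∀ i, hSherm.eigenvalues i ≤ 1 := fun i => eig_le_one hSherm hone_sub_S i
    have hWS : hSherm.cfc (fun t => t⁻¹) * (R * P * R) = 1 :=
      cfc_inv_mul hSherm fun i => (hSpos i).ne'
    have hWX : hSherm.cfc (fun t => t⁻¹) = R' * Pinv * R' := by
      calc hSherm.cfc (fun t => t⁻¹)
          = hSherm.cfc (fun t => t⁻¹) * ((R * P * R) * (R' * Pinv * R')) := by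
            rw [hSX, mul_one]
      _ = (hSherm.cfc (fun t => t⁻¹) * (R * P * R)) * (R' * Pinv * R') :=
            (mul_assoc _ _ _).symm
      _ = R' * Pinv * R' := by rw [hWS, one_mul]
    have hW1 : (hSherm.cfc (fun t => t⁻¹) - (1 : Matrix (Fin n) (Fin n) ℂ)).PosSemidef := by
      rw [show (1 : Matrix (Fin n) (Fin n) ℂ) = hSherm.cfc (fun _ => (1:ℝ)) from
        (cfc_const_one hSherm).symm, cfc_sub]
      refine cfc_posSemidef hSherm _ fun i => ?_
      have : 1 ≤ (hSherm.eigenvalues i)⁻¹ := (one_le_inv₀ (hSpos i)).mpr (hSle i)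
      simpa using this
    have hfinal : Pinv - hT.cfc (fun t => (t + s)⁻¹)
        = R * (hSherm.cfc (fun t => t⁻¹) - 1) * R := by
      rw [Matrix.mul_sub, Matrix.sub_mul, mul_one, hWX]
      rw [show R * (R' * Pinv * R') * R = (R * R') * Pinv * (R' * R) by
        simp only [mul_assoc], hRR', hR'R, one_mul, mul_one, hRR]
    rw [hPinvdef] at hfinal
    rw [hfinal]
    exact conj_psd hW1 hRherm
  exact hgoal

/-- per-`s` trace subadditivity: `tr (T(T+s)⁻¹) ≤ tr (A(A+s)⁻¹) + tr (B(B+s)⁻¹)` -/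
lemma trace_g_subadd {A B : Matrix (Fin n) (Fin n) ℂ} (hA' : A.PosSemidef)
    (hB' : B.PosSemidef) (hT' : (A + B).PosSemidef) {s : ℝ} (hs : 0 < s) :
    ∑ i, hT'.1.eigenvalues i * (hT'.1.eigenvalues i + s)⁻¹ ≤
      (∑ i, hA'.1.eigenvalues i * (hA'.1.eigenvalues i + s)⁻¹) +
      ∑ i, hB'.1.eigenvalues i * (hB'.1.eigenvalues i + s)⁻¹ := by
  have hA := hA'.1
  have hB := hB'.1
  have hT := hT'.1
  have hcfcT : (A + B) * hT.cfc (fun t => (t + s)⁻¹) = hT.cfc (fun t => t * (t + s)⁻¹) := by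
    have h := cfc_mul hT (fun t => t) (fun t => (t + s)⁻¹)
    rw [cfc_id'] at h
    exact h
  have key : ∀ (C : Matrix (Fin n) (Fin n) ℂ) (hC' : C.PosSemidef),
      ((A + B) - C).PosSemidef →
      ((C * hT.cfc (fun t => (t + s)⁻¹)).trace).re
        ≤ ∑ i, hC'.1.eigenvalues i * (hC'.1.eigenvalues i + s)⁻¹ := by
    intro C hC' hsub
    have hC := hC'.1
    obtain ⟨Sq, hSqdef⟩ : ∃ P, P = hC.cfc Real.sqrt := ⟨_, rfl⟩
    have hsCh : Sq.IsHermitian := hSqdef ▸ cfc_isHermitian hC _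
    have hsC : Sq * Sq = C := by
      rw [hSqdef, cfc_mul]
      refine (cfc_congr hC (g := fun t => t) fun i => ?_).trans (cfc_id' hC)
      exact Real.mul_self_sqrt (hC'.eigenvalues_nonneg i)
    have e1 : (C * hT.cfc (fun t => (t + s)⁻¹)).trace
        = (Sq * hT.cfc (fun t => (t + s)⁻¹) * Sq).trace := by
      rw [Matrix.trace_mul_cycle Sq (hT.cfc (fun t => (t + s)⁻¹)) Sq, hsC]
    have hdiff := inv_antitone hC' hT' hsub hs
    have hconj : ((Sq * (hC.cfc (fun t => (t + s)⁻¹)) * Sq)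
        - Sq * hT.cfc (fun t => (t + s)⁻¹) * Sq).PosSemidef := by
      have h := conj_psd hdiff hsCh
      rw [Matrix.mul_sub, Matrix.sub_mul] at h
      exact h
    have e2 := trace_re_le hconj
    have e3 : (Sq * (hC.cfc (fun t => (t + s)⁻¹)) * Sq).trace
        = (hC.cfc (fun t => t * (t + s)⁻¹)).trace := by
      rw [Matrix.trace_mul_cycle Sq (hC.cfc (fun t => (t + s)⁻¹)) Sq, hsC]
      have h := cfc_mul hC (fun t => t) (fun t => (t + s)⁻¹)
      rw [cfc_id'] at h
      rw [h]
    rw [e1]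
    refine e2.trans_eq ?_
    rw [e3, cfc_trace_re]
  have hsubA : ((A + B) - A).PosSemidef := by
    rw [show (A + B) - A = B by abel]; exact hB'
  have hsubB : ((A + B) - B).PosSemidef := by
    rw [show (A + B) - B = A by abel]; exact hA'
  have e0 : ∑ i, hT.eigenvalues i * (hT.eigenvalues i + s)⁻¹
      = ((A * hT.cfc (fun t => (t + s)⁻¹)).trace).re
        + ((B * hT.cfc (fun t => (t + s)⁻¹)).trace).re := by
    rw [← cfc_trace_re hT (fun t => t * (t + s)⁻¹), ← hcfcT, Matrix.add_mul,
      Matrix.trace_add, Complex.add_re]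
  calc ∑ i, hT.eigenvalues i * (hT.eigenvalues i + s)⁻¹
      = _ + _ := e0
  _ ≤ _ := add_le_add (key A hA' hsubA) (key B hB' hsubB)

end Subadd

section Integral

open MeasureTheory Set

lemma integrable_phi {r : ℝ} (hr0 : 0 < r) (hr1 : r < 1) {t : ℝ} (ht : 0 ≤ t) :
    IntegrableOn (fun s : ℝ => t * (t + s)⁻¹ * s ^ (r - 1)) (Ioi 0) := by
  have hIoi : Ioc (0:ℝ) 1 ∪ Ioi 1 = Ioi 0 := Ioc_union_Ioi_eq_Ioi one_pos.le
  have hmeas1 : ∀ (S : Set ℝ), MeasurableSet S → S ⊆ Ioi 0 →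
      AEStronglyMeasurable (fun s : ℝ => t * (t + s)⁻¹ * s ^ (r - 1)) (volume.restrict S) := by
    intro S hS hsub
    refine ContinuousOn.aestronglyMeasurable ?_ hS
    intro x hx
    have hx0 : (0:ℝ) < x := hsub hx
    have htx : (0:ℝ) < t + x := by linarith
    refine ContinuousWithinAt.mul (ContinuousWithinAt.mul ?_ ?_) ?_
    · exact continuousWithinAt_const
    · exact ((continuous_const.add continuous_id).continuousAt.inv₀ htx.ne').continuousWithinAt
    · exact (Real.continuousAt_rpow_const x (r-1) (Or.inl hx0.ne')).continuousWithinAt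
  rw [← hIoi]
  apply IntegrableOn.union
  · -- dominate by s ^ (r-1) on (0, 1]
    have hbase : IntegrableOn (fun s : ℝ => s ^ (r-1)) (Ioc 0 1) := by
      have h := intervalIntegral.intervalIntegrable_rpow' (a := 0) (b := 1) (r := r-1)
        (by linarith)
      rw [intervalIntegrable_iff] at h
      simpa [Set.uIoc_of_le (zero_le_one (α := ℝ))] using h
    refine hbase.mono' (hmeas1 _ measurableSet_Ioc Ioc_subset_Ioi_self) ?_
    rw [ae_restrict_iff' measurableSet_Ioc]
    refine Filter.Eventually.of_forall fun s hs => ?_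
    have hs0 : 0 < s := hs.1
    have hts : 0 < t + s := by linarith
    have h1 : 0 ≤ t * (t + s)⁻¹ := mul_nonneg ht (inv_nonneg.mpr hts.le)
    have h2 : (0:ℝ) ≤ s ^ (r-1) := Real.rpow_nonneg hs0.le _
    rw [Real.norm_eq_abs, abs_of_nonneg (mul_nonneg h1 h2)]
    have h3 : t * (t + s)⁻¹ ≤ 1 := by
      rw [← div_eq_mul_inv]
      exact div_le_one_of_le₀ (by linarith) hts.le
    exact mul_le_of_le_one_left h2 h3
  · -- dominate by t * s ^ (r-2) on (1, ∞)
    have hbase : IntegrableOn (fun s : ℝ => t * s ^ (r-2)) (Ioi 1) :=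
      (integrableOn_Ioi_rpow_of_lt (by linarith : r - 2 < -1) one_pos).const_mul t
    refine hbase.mono' (hmeas1 _ measurableSet_Ioi (Ioi_subset_Ioi zero_le_one)) ?_
    rw [ae_restrict_iff' measurableSet_Ioi]
    refine Filter.Eventually.of_forall fun s hs => ?_
    have hs0 : (0:ℝ) < s := lt_trans one_pos hs
    have hts : 0 < t + s := by linarith
    have h1 : 0 ≤ t * (t + s)⁻¹ := mul_nonneg ht (inv_nonneg.mpr hts.le)
    have h2 : (0:ℝ) ≤ s ^ (r-1) := Real.rpow_nonneg hs0.le _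
    rw [Real.norm_eq_abs, abs_of_nonneg (mul_nonneg h1 h2)]
    have h3 : (t + s)⁻¹ ≤ s⁻¹ := inv_anti₀ hs0 (by linarith)
    have h4 : s ^ (r-2) = s⁻¹ * s ^ (r-1) := by
      rw [← Real.rpow_neg_one s, ← Real.rpow_add hs0]
      ring_nf
    calc t * (t + s)⁻¹ * s ^ (r-1) ≤ t * s⁻¹ * s ^ (r-1) := by
          refine mul_le_mul_of_nonneg_right (mul_le_mul_of_nonneg_left h3 ht) h2
    _ = t * s ^ (r-2) := by rw [h4]; ring

lemma integral_phi {r : ℝ} (hr0 : 0 < r) (hr1 : r < 1) {t : ℝ} (ht : 0 ≤ t) :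
    ∫ s in Ioi (0:ℝ), t * (t + s)⁻¹ * s ^ (r - 1)
      = t ^ r * ∫ u in Ioi (0:ℝ), (1 + u)⁻¹ * u ^ (r - 1) := by
  rcases ht.lt_or_eq with htpos | hteq
  · have h := integral_comp_mul_left_Ioi
      (fun s => t * (t + s)⁻¹ * s ^ (r - 1)) 0 htpos
    rw [mul_zero] at h
    -- h : ∫ x in Ioi 0, f (t * x) = t⁻¹ • ∫ x in Ioi 0, f x
    have h2 : ∫ x in Ioi (0:ℝ), t * (t + t * x)⁻¹ * (t * x) ^ (r - 1)
        = t ^ (r-1) * ∫ u in Ioi (0:ℝ), (1 + u)⁻¹ * u ^ (r - 1) := by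
      rw [← integral_const_mul]
      refine setIntegral_congr_fun measurableSet_Ioi fun x hx => ?_
      have hx0 : (0:ℝ) < x := hx
      rw [show t + t * x = t * (1 + x) by ring, mul_inv,
        Real.mul_rpow htpos.le hx0.le]
      field_simp
    beta_reduce at h
    rw [h2, smul_eq_mul] at h
    have h3 : ∫ s in Ioi (0:ℝ), t * (t + s)⁻¹ * s ^ (r - 1)
        = t * (t ^ (r-1) * ∫ u in Ioi (0:ℝ), (1 + u)⁻¹ * u ^ (r - 1)) := by
      rw [h, ← mul_assoc, mul_inv_cancel₀ htpos.ne', one_mul]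
    rw [h3, ← mul_assoc]
    congr 1
    rw [show t * t ^ (r-1) = t ^ (1:ℝ) * t ^ (r-1) by rw [Real.rpow_one],
      ← Real.rpow_add htpos]
    ring_nf
  · simp [← hteq, Real.zero_rpow hr0.ne']

lemma c_pos {r : ℝ} (hr0 : 0 < r) (hr1 : r < 1) :
    0 < ∫ u in Ioi (0:ℝ), (1 + u)⁻¹ * u ^ (r - 1) := by
  have hInt : IntegrableOn (fun u : ℝ => (1 + u)⁻¹ * u ^ (r - 1)) (Ioi 0) := by
    have h := integrable_phi hr0 hr1 (zero_le_one (α := ℝ))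
    simpa using h
  have hbase : IntegrableOn (fun s : ℝ => s ^ (r-1)) (Ioc 0 1) := by
    have h := intervalIntegral.intervalIntegrable_rpow' (a := 0) (b := 1) (r := r-1)
      (by linarith)
    rw [intervalIntegrable_iff] at h
    simpa [Set.uIoc_of_le (zero_le_one (α := ℝ))] using h
  have h1 : ∫ u in Ioc (0:ℝ) 1, (1/2 : ℝ) * u ^ (r-1)
      ≤ ∫ u in Ioc (0:ℝ) 1, (1 + u)⁻¹ * u ^ (r - 1) := by
    refine setIntegral_mono_on (hbase.const_mul _) (hInt.mono_set Ioc_subset_Ioi_self)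
      measurableSet_Ioc fun u hu => ?_
    refine mul_le_mul_of_nonneg_right ?_ (Real.rpow_nonneg hu.1.le _)
    have : (1:ℝ) + u ≤ 2 := by linarith [hu.2]
    calc (1/2 : ℝ) = 2⁻¹ := by norm_num
    _ ≤ (1 + u)⁻¹ := inv_anti₀ (by linarith [hu.1]) this
  have h2 : ∫ u in Ioc (0:ℝ) 1, (1/2 : ℝ) * u ^ (r-1) = (1/2) * (1/r) := by
    rw [integral_const_mul]
    congr 1
    rw [← intervalIntegral.integral_of_le (zero_le_one (α := ℝ)),
      integral_rpow (Or.inl (by linarith))]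
    rw [Real.one_rpow, Real.zero_rpow (by linarith : r - 1 + 1 ≠ 0)]
    rw [show r - 1 + 1 = r by ring]
    norm_num
  have h3 : ∫ u in Ioc (0:ℝ) 1, (1 + u)⁻¹ * u ^ (r - 1)
      ≤ ∫ u in Ioi (0:ℝ), (1 + u)⁻¹ * u ^ (r - 1) := by
    refine setIntegral_mono_set hInt ?_ (HasSubset.Subset.eventuallyLE Ioc_subset_Ioi_self)
    refine (ae_restrict_iff' measurableSet_Ioi).mpr
      (Filter.Eventually.of_forall fun u hu => ?_)
    have hu0 : (0:ℝ) < u := hu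
    show (0:ℝ) ≤ (1 + u)⁻¹ * u ^ (r - 1)
    exact mul_nonneg (inv_nonneg.mpr (by linarith)) (Real.rpow_nonneg hu0.le _)
  have : (0:ℝ) < (1/2) * (1/r) := by positivity
  linarith

/-- scalar integral representation argument for subadditivity of `∑ xᵢ^r` -/
lemma rpow_sum_subadd_scalar {τ α β : Fin n → ℝ} (hτ : ∀ i, 0 ≤ τ i)
    (hα : ∀ i, 0 ≤ α i) (hβ : ∀ i, 0 ≤ β i)
    (H : ∀ s : ℝ, 0 < s → ∑ i, τ i * (τ i + s)⁻¹ ≤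
      (∑ i, α i * (α i + s)⁻¹) + ∑ i, β i * (β i + s)⁻¹)
    {r : ℝ} (hr0 : 0 < r) (hr1 : r < 1) :
    ∑ i, τ i ^ r ≤ (∑ i, α i ^ r) + ∑ i, β i ^ r := by
  set c := ∫ u in Ioi (0:ℝ), (1 + u)⁻¹ * u ^ (r - 1) with hcdef
  have hc : 0 < c := c_pos hr0 hr1
  have key : ∀ (x : Fin n → ℝ), (∀ i, 0 ≤ x i) →
      (∑ i, x i ^ r) * c = ∫ s in Ioi (0:ℝ), ∑ i, x i * (x i + s)⁻¹ * s ^ (r - 1) := by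
    intro x hx
    rw [integral_finset_sum _ fun i _ => integrable_phi hr0 hr1 (hx i)]
    rw [Finset.sum_mul]
    exact Finset.sum_congr rfl fun i _ => (integral_phi hr0 hr1 (hx i)).symm
  have hmono : ∫ s in Ioi (0:ℝ), ∑ i, τ i * (τ i + s)⁻¹ * s ^ (r - 1)
      ≤ ∫ s in Ioi (0:ℝ), ((∑ i, α i * (α i + s)⁻¹ * s ^ (r - 1))
        + ∑ i, β i * (β i + s)⁻¹ * s ^ (r - 1)) := by
    refine setIntegral_mono_on
      (integrable_finset_sum _ fun i _ => integrable_phi hr0 hr1 (hτ i))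
      (((integrable_finset_sum _ fun i _ => integrable_phi hr0 hr1 (hα i)).add
        (integrable_finset_sum _ fun i _ => integrable_phi hr0 hr1 (hβ i))))
      measurableSet_Ioi fun s hs => ?_
    have hs0 : (0:ℝ) < s := hs
    have hsr : (0:ℝ) ≤ s ^ (r-1) := Real.rpow_nonneg hs0.le _
    have := mul_le_mul_of_nonneg_right (H s hs0) hsr
    calc ∑ i, τ i * (τ i + s)⁻¹ * s ^ (r - 1)
        = (∑ i, τ i * (τ i + s)⁻¹) * s ^ (r-1) := by rw [Finset.sum_mul]
    _ ≤ ((∑ i, α i * (α i + s)⁻¹) + ∑ i, β i * (β i + s)⁻¹) * s ^ (r-1) := this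
    _ = _ := by rw [add_mul, Finset.sum_mul, Finset.sum_mul]
  rw [integral_add (integrable_finset_sum _ fun i _ => integrable_phi hr0 hr1 (hα i))
    (integrable_finset_sum _ fun i _ => integrable_phi hr0 hr1 (hβ i))] at hmono
  rw [← key τ hτ, ← key α hα, ← key β hβ, ← add_mul] at hmono
  exact le_of_mul_le_mul_right hmono hc

end Integral

section Final

lemma sum_eig_eq_trace_re {M : Matrix (Fin n) (Fin n) ℂ} (hM : M.IsHermitian) :
    ∑ i, hM.eigenvalues i = (M.trace).re := by
  have h := cfc_trace_re hM (fun t => t)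
  rw [cfc_id'] at h
  exact h.symm

/-- trace subadditivity `tr (A+B)^r ≤ tr A^r + tr B^r` for PSD matrices, `0 < r ≤ 1`. -/
lemma sum_rpow_subadd {A B : Matrix (Fin n) (Fin n) ℂ} (hA' : A.PosSemidef)
    (hB' : B.PosSemidef) (hT' : (A + B).PosSemidef) {r : ℝ} (hr0 : 0 < r) (hr1 : r ≤ 1) :
    ∑ i, (hT'.1.eigenvalues i) ^ r ≤
      (∑ i, (hA'.1.eigenvalues i) ^ r) + ∑ i, (hB'.1.eigenvalues i) ^ r := by
  rcases hr1.lt_or_eq with hlt | heq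
  · exact rpow_sum_subadd_scalar hT'.eigenvalues_nonneg hA'.eigenvalues_nonneg
      hB'.eigenvalues_nonneg (fun s hs => trace_g_subadd hA' hB' hT' hs) hr0 hlt
  · subst heq
    simp only [Real.rpow_one]
    rw [sum_eig_eq_trace_re hT'.1, sum_eig_eq_trace_re hA'.1, sum_eig_eq_trace_re hB'.1,
      Matrix.trace_add, Complex.add_re]

/-- the right Clarkson inequality -/
lemma clarkson_right (x y : Matrix (Fin n) (Fin n) ℂ) (p : ℝ)
    (hp0 : 0 < p) (hp2 : p ≤ 2) :
    schatten p (x + y) + schatten p (x - y) ≤ 2 * (schatten p x + schatten p y) := by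
  have hr0 : 0 < p / 2 := by linarith
  have hr1 : p / 2 ≤ 1 := by linarith
  have hA' := Matrix.posSemidef_conjTranspose_mul_self x
  have hB' := Matrix.posSemidef_conjTranspose_mul_self y
  have hC' := Matrix.posSemidef_conjTranspose_mul_self (x + y)
  have hD' := Matrix.posSemidef_conjTranspose_mul_self (x - y)
  have hT' := hA'.add hB'
  have hCD : (x + y)ᴴ * (x + y) + (x - y)ᴴ * (x - y) = (2:ℂ) • (xᴴ * x + yᴴ * y) := by
    rw [two_smul]
    simp only [Matrix.conjTranspose_add, Matrix.conjTranspose_sub, Matrix.add_mul,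
      Matrix.sub_mul, Matrix.mul_add, Matrix.mul_sub]
    abel
  have h1 := concavity_step hC' hD' hT' hCD hr0 hr1
  have h2 := sum_rpow_subadd hA' hB' hT' hr0 hr1
  have ex : schatten p (x + y) = ∑ i, (hC'.1.eigenvalues i) ^ (p/2) := rfl
  have ey : schatten p (x - y) = ∑ i, (hD'.1.eigenvalues i) ^ (p/2) := rfl
  have exx : schatten p x = ∑ i, (hA'.1.eigenvalues i) ^ (p/2) := rfl
  have eyy : schatten p y = ∑ i, (hB'.1.eigenvalues i) ^ (p/2) := rfl
  rw [ex, ey, exx, eyy]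
  linarith

theorem clarkson_main {n : ℕ} (x y : Matrix (Fin n) (Fin n) ℂ) (p : ℝ)
    (hp0 : 0 < p) (hp2 : p ≤ 2) :
    (2 : ℝ) ^ (p - 1) * (schatten p x + schatten p y)
        ≤ schatten p (x + y) + schatten p (x - y) ∧
    schatten p (x + y) + schatten p (x - y) ≤ 2 * (schatten p x + schatten p y) := by
  refine ⟨?_, clarkson_right x y p hp0 hp2⟩
  have hr0 : 0 < p / 2 := by linarith
  have hr1 : p / 2 ≤ 1 := by linarith
  -- apply the right inequality to (x+y, x-y)
  have hu := clarkson_right (x + y) (x - y) p hp0 hp2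
  have e1 : x + y + (x - y) = x + x := by abel
  have e2 : x + y - (x - y) = y + y := by abel
  rw [e1, e2] at hu
  -- scaling: schatten p (x + x) = 2^p * schatten p x
  have hscale : ∀ z : Matrix (Fin n) (Fin n) ℂ, schatten p (z + z) = 2 ^ p * schatten p z := by
    intro z
    have hz' := Matrix.posSemidef_conjTranspose_mul_self z
    have hzz' := Matrix.posSemidef_conjTranspose_mul_self (z + z)
    have h4 : (z + z)ᴴ * (z + z) = (((4:ℝ)) : ℂ) • (zᴴ * z) := by
      rw [show (((4:ℝ)) : ℂ) = (2:ℂ) + 2 by norm_num, add_smul, two_smul]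
      simp only [Matrix.conjTranspose_add, Matrix.add_mul, Matrix.mul_add]
    have h := sum_rpow_smul hz' hzz' (by norm_num : (0:ℝ) < 4) h4 hr0 hr1
    have e3 : schatten p (z + z) = ∑ i, (hzz'.1.eigenvalues i) ^ (p/2) := rfl
    have e4 : schatten p z = ∑ i, (hz'.1.eigenvalues i) ^ (p/2) := rfl
    rw [e3, e4, h]
    congr 1
    rw [show (4:ℝ) = (2:ℝ) ^ (2:ℝ) by
      rw [show ((2:ℝ):ℝ) = ((2:ℕ):ℝ) by norm_num, Real.rpow_natCast]; norm_num,
      ← Real.rpow_mul (by norm_num : (0:ℝ) ≤ 2)]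
    congr 1
    ring
  rw [hscale x, hscale y] at hu
  have h2p : (2:ℝ) ^ (p - 1) = 2 ^ p / 2 := by
    rw [Real.rpow_sub (by norm_num : (0:ℝ) < 2), Real.rpow_one]
  rw [h2p]
  linarith

end Final

end Clarkson

end ClarksonDev

/-- Clarkson inequalities for `0 < p ≤ 2`:
`2^{p-1}(‖x‖ₚᵖ + ‖y‖ₚᵖ) ≤ ‖x+y‖ₚᵖ + ‖x-y‖ₚᵖ ≤ 2(‖x‖ₚᵖ + ‖y‖ₚᵖ)`. -/
theorem clarkson_le_two {n : ℕ} (x y : Matrix (Fin n) (Fin n) ℂ) (p : ℝ)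
    (hp0 : 0 < p) (hp2 : p ≤ 2) :
    (2 : ℝ) ^ (p - 1) * (schatten p x + schatten p y)
        ≤ schatten p (x + y) + schatten p (x - y) ∧
    schatten p (x + y) + schatten p (x - y) ≤ 2 * (schatten p x + schatten p y) := by
  exact Clarkson.clarkson_main x y p hp0 hp2
end
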